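/- arXiv:0707.1361 — 3 statements merged into one kernel-verified Lean document; each statement's English description precedes it below -/
import Mathlib

section
/- Let f_1, …, f_r (r ≥ 1) and g be nonzero polynomials in k[x] with f_1, …, f_r algebraically independent over k; set A = k[f_1,…,f_r], K = k(f_1,…,f_r), ω = df_1 ∧ ⋯ ∧ df_r, and let w ∈ Γ^n be such that deg_w h ≥ 0 for every nonzero h ∈ A. Set M = deg_w(ω ∧ dg) − deg_w ω − deg_w g. Assume g^w is algebraic over K^w, and let a and b be the quotient and remainder of deg_y Φ divided by [K^w(g^w) : K^w]. Then for every nonzero Φ ∈ A[y]: deg_w Φ(g) ≥ (deg_y Φ)·deg_w g + a·M = a·( [K^w(g^w):K^w]·deg_w g + M ) + b·deg_w g. -/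
open MvPolynomial Polynomial

set_option synthInstance.maxHeartbeats 1000000
set_option maxHeartbeats 1000000

variable {k : Type*} [Field k] [CharZero k] {n : ℕ}
variable {Γ : Type*} [AddCommGroup Γ] [LinearOrder Γ] [IsOrderedAddMonoid Γ]

/-- The `w`-degree of a multivariate polynomial, with `wdeg w 0 = ⊥ = -∞`. -/
noncomputable def wdeg (w : Fin n → Γ) (f : MvPolynomial (Fin n) k) : WithBot Γ :=
  f.support.sup fun d => ((∑ i, d i • w i : Γ) : WithBot Γ)

/-- The leading `w`-homogeneous form `f^w` of `f`. -/
noncomputable def lform (w : Fin n → Γ) (f : MvPolynomial (Fin n) k) :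
    MvPolynomial (Fin n) k :=
  letI : DecidableEq (WithBot Γ) := Classical.decEq _
  ∑ d ∈ f.support.filter
      (fun d => ((∑ i, d i • w i : Γ) : WithBot Γ) = wdeg w f),
    MvPolynomial.monomial d (f.coeff d)

/-- `deg_w^g Φ = max_i deg_w (φ_i g^i)` for `Φ = Σ_i φ_i y^i`. -/
noncomputable def wdegG (w : Fin n → Γ) (g : MvPolynomial (Fin n) k)
    (Φ : Polynomial (MvPolynomial (Fin n) k)) : WithBot Γ :=
  Φ.support.sup fun i => wdeg w (Φ.coeff i * g ^ i)

/-- The leading form `Φ^{w,g}` of `Φ` for the grading in which `x_j` has weight `w_j`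
and `y` has weight `deg_w g`: the sum of `φ_i^w y^i` over those `i` with
`deg_w (φ_i g^i) = deg_w^g Φ`. -/
noncomputable def pLform (w : Fin n → Γ) (g : MvPolynomial (Fin n) k)
    (Φ : Polynomial (MvPolynomial (Fin n) k)) : Polynomial (MvPolynomial (Fin n) k) :=
  letI : DecidableEq (WithBot Γ) := Classical.decEq _
  ∑ i ∈ Φ.support.filter (fun i => wdeg w (Φ.coeff i * g ^ i) = wdegG w g Φ),
    Polynomial.C (lform w (Φ.coeff i)) * Polynomial.X ^ i

/-- `m_w^g(Φ) = min { i : deg_w^g (∂_y^i Φ) = deg_w ((∂_y^i Φ)(g)) }`. -/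
noncomputable def mwg (w : Fin n → Γ) (g : MvPolynomial (Fin n) k)
    (Φ : Polynomial (MvPolynomial (Fin n) k)) : ℕ :=
  sInf {i : ℕ |
    wdegG w g (Polynomial.derivative^[i] Φ) = wdeg w ((Polynomial.derivative^[i] Φ).eval g)}

/-- The `w`-degree of the differential form `dh_1 ∧ ⋯ ∧ dh_s`: the maximum over all
`s`-tuples of indices of the `w`-degree of the corresponding `s × s` Jacobian minor
plus the sum of the corresponding weights (noninjective tuples contribute `⊥`). -/
noncomputable def wedgeDeg (w : Fin n → Γ) {s : ℕ} (h : Fin s → MvPolynomial (Fin n) k) :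
    WithBot Γ :=
  Finset.univ.sup fun e : Fin s → Fin n =>
    wdeg w (Matrix.det (Matrix.of fun a b : Fin s => MvPolynomial.pderiv (e b) (h a)))
      + ((∑ b, w (e b) : Γ) : WithBot Γ)

/-- The initial algebra `A^w`: the `k`-subalgebra generated by `f^w` for `f ∈ A \ {0}`. -/
noncomputable def initAlg (w : Fin n → Γ) (A : Subalgebra k (MvPolynomial (Fin n) k)) :
    Subalgebra k (MvPolynomial (Fin n) k) :=
  Algebra.adjoin k (lform w '' ((A : Set (MvPolynomial (Fin n) k)) \ {0}))

/-- The field of fractions `K^w` of `A^w`, realized as a subfield of the fraction field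
of `k[x]`. -/
noncomputable def KW (w : Fin n → Γ) (A : Subalgebra k (MvPolynomial (Fin n) k)) :
    Subfield (FractionRing (MvPolynomial (Fin n) k)) :=
  Subfield.closure
    (algebraMap (MvPolynomial (Fin n) k) (FractionRing (MvPolynomial (Fin n) k)) ''
      (initAlg w A : Set (MvPolynomial (Fin n) k)))

/-- The field of fractions of a subalgebra `A` of `k[x]`, realized as a subfield of the
fraction field of `k[x]`. -/
noncomputable def fracSub (A : Subalgebra k (MvPolynomial (Fin n) k)) :
    Subfield (FractionRing (MvPolynomial (Fin n) k)) :=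
  Subfield.closure
    (algebraMap (MvPolynomial (Fin n) k) (FractionRing (MvPolynomial (Fin n) k)) ''
      (A : Set (MvPolynomial (Fin n) k)))

/-- A polynomial is `w`-homogeneous if all its monomials have the same `w`-degree. -/
def IsWHom (w : Fin n → Γ) (f : MvPolynomial (Fin n) k) : Prop :=
  ∃ γ : Γ, ∀ d ∈ f.support, (∑ i, d i • w i : Γ) = γ

set_option linter.unusedSectionVars false
namespace Kuroda

variable {k : Type*} [Field k] [CharZero k] {n : ℕ}
variable {Γ : Type*} [AddCommGroup Γ] [LinearOrder Γ] [IsOrderedAddMonoid Γ]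

/-- weight of an exponent vector -/
noncomputable def mdeg (w : Fin n → Γ) (d : Fin n →₀ ℕ) : Γ := ∑ i, d i • w i

lemma mdeg_def {w : Fin n → Γ} (d : Fin n →₀ ℕ) :
    mdeg w d = ∑ i, d i • w i := rfl

lemma mdeg_add {w : Fin n → Γ} (a b : Fin n →₀ ℕ) :
    mdeg w (a + b) = mdeg w a + mdeg w b := by
  simp [mdeg, add_smul, Finset.sum_add_distrib]

lemma mdeg_zero {w : Fin n → Γ} : mdeg w 0 = 0 := by simp [mdeg]

lemma mdeg_single {w : Fin n → Γ} (j : Fin n) :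
    mdeg w (Finsupp.single j 1) = w j := by
  rw [mdeg, Finset.sum_eq_single j]
  · simp
  · intro b _ hb; simp [Finsupp.single_apply, Ne.symm hb]
  · simp

lemma wdeg_def (w : Fin n → Γ) (f : MvPolynomial (Fin n) k) :
    wdeg w f = f.support.sup fun d => ((mdeg w d : Γ) : WithBot Γ) := rfl

lemma le_wdeg {w : Fin n → Γ} {f : MvPolynomial (Fin n) k} {d : Fin n →₀ ℕ}
    (hd : d ∈ f.support) : ((mdeg w d : Γ) : WithBot Γ) ≤ wdeg w f :=
  Finset.le_sup (f := fun d => ((mdeg w d : Γ) : WithBot Γ)) hd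

lemma wdeg_le_iff {w : Fin n → Γ} {f : MvPolynomial (Fin n) k} {D : WithBot Γ} :
    wdeg w f ≤ D ↔ ∀ d ∈ f.support, ((mdeg w d : Γ) : WithBot Γ) ≤ D :=
  Finset.sup_le_iff

lemma wdeg_zero {w : Fin n → Γ} : wdeg w (0 : MvPolynomial (Fin n) k) = ⊥ := by
  simp [wdeg_def]

lemma wdeg_eq_bot_iff {w : Fin n → Γ} {f : MvPolynomial (Fin n) k} :
    wdeg w f = ⊥ ↔ f = 0 := by
  constructor
  · intro h
    by_contra hf
    obtain ⟨d, hd⟩ := MvPolynomial.ne_zero_iff.mp hf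
    have := le_wdeg (w := w) (MvPolynomial.mem_support_iff.mpr hd)
    rw [h] at this
    exact (WithBot.coe_ne_bot (le_bot_iff.mp this))
  · rintro rfl; exact wdeg_zero

lemma exists_wdeg_eq {w : Fin n → Γ} {f : MvPolynomial (Fin n) k} (hf : f ≠ 0) :
    ∃ d ∈ f.support, wdeg w f = ((mdeg w d : Γ) : WithBot Γ) := by
  have hne : f.support.Nonempty := by
    rw [Finset.nonempty_iff_ne_empty]
    intro h
    exact hf (MvPolynomial.support_eq_empty.mp h)
  obtain ⟨d, hd, h⟩ := Finset.exists_mem_eq_sup f.support hne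
    (fun d => ((mdeg w d : Γ) : WithBot Γ))
  exact ⟨d, hd, h⟩

lemma wdeg_ne_bot {w : Fin n → Γ} {f : MvPolynomial (Fin n) k} (hf : f ≠ 0) :
    wdeg w f ≠ ⊥ := fun h => hf (wdeg_eq_bot_iff.mp h)

lemma wdeg_add_le {w : Fin n → Γ} (f g : MvPolynomial (Fin n) k) :
    wdeg w (f + g) ≤ max (wdeg w f) (wdeg w g) := by
  rw [wdeg_le_iff]
  intro d hd
  rcases Finset.mem_union.mp (MvPolynomial.support_add hd) with h | h
  · exact le_max_of_le_left (le_wdeg h)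
  · exact le_max_of_le_right (le_wdeg h)

lemma wdeg_sum_le {w : Fin n → Γ} {α : Type*} (s : Finset α)
    (p : α → MvPolynomial (Fin n) k) :
    wdeg w (∑ i ∈ s, p i) ≤ s.sup fun i => wdeg w (p i) := by
  classical
  induction s using Finset.induction_on with
  | empty => simp [wdeg_zero]
  | @insert a s ha ih =>
    rw [Finset.sum_insert ha, Finset.sup_insert]
    exact (wdeg_add_le _ _).trans (max_le_max le_rfl ih)

lemma wdeg_monomial_le {w : Fin n → Γ} (d : Fin n →₀ ℕ) (c : k) :
    wdeg w (MvPolynomial.monomial d c) ≤ ((mdeg w d : Γ) : WithBot Γ) := by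
  rw [wdeg_le_iff]
  intro e he
  have := MvPolynomial.support_monomial_subset he
  rw [Finset.mem_singleton] at this
  subst this; exact le_rfl

lemma wdeg_mul_le {w : Fin n → Γ} (f g : MvPolynomial (Fin n) k) :
    wdeg w (f * g) ≤ wdeg w f + wdeg w g := by
  classical
  rw [wdeg_le_iff]
  intro d hd
  have := MvPolynomial.support_mul f g hd
  obtain ⟨a, ha, b, hb, rfl⟩ := Finset.mem_add.mp this
  rw [mdeg_add, WithBot.coe_add]
  exact add_le_add (le_wdeg ha) (le_wdeg hb)

lemma wdeg_C_le {w : Fin n → Γ} (c : k) :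
    wdeg w (MvPolynomial.C (σ := Fin n) c) ≤ (0 : WithBot Γ) := by
  have h := wdeg_monomial_le (w := w) (0 : Fin n →₀ ℕ) c
  rw [mdeg_zero] at h
  rw [MvPolynomial.C_apply]
  exact le_trans h (by rw [WithBot.coe_zero])

lemma wdeg_C {w : Fin n → Γ} {c : k} (hc : c ≠ 0) :
    wdeg w (MvPolynomial.C (σ := Fin n) c) = (0 : WithBot Γ) := by
  refine le_antisymm (wdeg_C_le c) ?_
  have h0 : (0 : Fin n →₀ ℕ) ∈ (MvPolynomial.C (σ := Fin n) c : MvPolynomial (Fin n) k).support := by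
    rw [MvPolynomial.mem_support_iff]; simp [hc]
  have := le_wdeg (w := w) h0
  rwa [mdeg_zero] at this

/-- homogeneity with specified degree -/
def Hom (w : Fin n → Γ) (γ : Γ) (f : MvPolynomial (Fin n) k) : Prop :=
  ∀ d ∈ f.support, mdeg w d = γ

lemma Hom.wdeg_eq {w : Fin n → Γ} {γ : Γ} {f : MvPolynomial (Fin n) k}
    (h : Hom w γ f) (hf : f ≠ 0) : wdeg w f = (γ : WithBot Γ) := by
  obtain ⟨d, hd, he⟩ := exists_wdeg_eq (w := w) hf
  rw [he, h d hd]

lemma Hom.mul {w : Fin n → Γ} {γ δ : Γ} {f g : MvPolynomial (Fin n) k}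
    (hf : Hom w γ f) (hg : Hom w δ g) : Hom w (γ + δ) (f * g) := by
  classical
  intro d hd
  obtain ⟨a, ha, b, hb, rfl⟩ := Finset.mem_add.mp (MvPolynomial.support_mul f g hd)
  rw [mdeg_add, hf a ha, hg b hb]

end Kuroda
namespace Kuroda

variable {k : Type*} [Field k] [CharZero k] {n : ℕ}
variable {Γ : Type*} [AddCommGroup Γ] [LinearOrder Γ] [IsOrderedAddMonoid Γ]

lemma coeff_lform (w : Fin n → Γ) (f : MvPolynomial (Fin n) k) (e : Fin n →₀ ℕ) :
    MvPolynomial.coeff e (lform w f)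
      = if ((mdeg w e : Γ) : WithBot Γ) = wdeg w f then MvPolynomial.coeff e f else 0 := by
  rw [lform, MvPolynomial.coeff_sum]
  simp only [MvPolynomial.coeff_monomial]
  rw [Finset.sum_ite_eq']
  by_cases he : ((mdeg w e : Γ) : WithBot Γ) = wdeg w f
  · rw [if_pos he]
    split_ifs with hs
    · rfl
    · by_contra hc
      apply hs; simp only [Finset.mem_filter]; exact ⟨MvPolynomial.mem_support_iff.mpr (Ne.symm hc), he⟩
  · rw [if_neg he]
    split_ifs with hs
    · simp only [Finset.mem_filter] at hs; exact absurd hs.2 he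
    · rfl

lemma lform_zero (w : Fin n → Γ) : lform w (0 : MvPolynomial (Fin n) k) = 0 := by
  apply MvPolynomial.ext
  intro e
  rw [coeff_lform]
  simp

lemma support_lform_subset {w : Fin n → Γ} {f : MvPolynomial (Fin n) k} :
    (lform w f).support ⊆ f.support := by
  intro d hd
  rw [MvPolynomial.mem_support_iff] at hd ⊢
  rw [coeff_lform] at hd
  intro h0
  apply hd
  split <;> simp [h0]

lemma lform_hom {w : Fin n → Γ} {f : MvPolynomial (Fin n) k} {γ : Γ}
    (h : wdeg w f = (γ : WithBot Γ)) : Hom w γ (lform w f) := by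
  intro d hd
  rw [MvPolynomial.mem_support_iff, coeff_lform] at hd
  by_cases hc : ((mdeg w d : Γ) : WithBot Γ) = wdeg w f
  · rw [h] at hc; exact_mod_cast hc
  · simp [hc] at hd

lemma lform_ne_zero {w : Fin n → Γ} {f : MvPolynomial (Fin n) k} (hf : f ≠ 0) :
    lform w f ≠ 0 := by
  obtain ⟨d, hd, he⟩ := exists_wdeg_eq (w := w) hf
  intro h0
  have : MvPolynomial.coeff d (lform w f) = MvPolynomial.coeff d f := by
    rw [coeff_lform, if_pos he.symm]
  rw [h0] at this
  rw [MvPolynomial.mem_support_iff] at hd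
  exact hd (by simpa using this.symm)

lemma wdeg_lform {w : Fin n → Γ} {f : MvPolynomial (Fin n) k} (hf : f ≠ 0) :
    wdeg w (lform w f) = wdeg w f := by
  obtain ⟨γ, hγ⟩ : ∃ γ : Γ, wdeg w f = (γ : WithBot Γ) := by
    obtain ⟨d, _, he⟩ := exists_wdeg_eq (w := w) hf
    exact ⟨_, he⟩
  rw [hγ]
  exact (lform_hom hγ).wdeg_eq (lform_ne_zero hf)

lemma wdeg_sub_lform_lt {w : Fin n → Γ} {f : MvPolynomial (Fin n) k} (hf : f ≠ 0) :
    wdeg w (f - lform w f) < wdeg w f := by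
  obtain ⟨d0, _, he0⟩ := exists_wdeg_eq (w := w) hf
  rcases eq_or_ne (f - lform w f) 0 with h | h
  · rw [h, wdeg_zero, he0]; exact WithBot.bot_lt_coe _
  · obtain ⟨d, hd, he⟩ := exists_wdeg_eq (w := w) h
    rw [he]
    rw [MvPolynomial.mem_support_iff, MvPolynomial.coeff_sub, coeff_lform] at hd
    by_cases hc : ((mdeg w d : Γ) : WithBot Γ) = wdeg w f
    · simp [hc] at hd
    · have hd' : d ∈ f.support := by
        rw [MvPolynomial.mem_support_iff]
        intro h0; apply hd; simp [h0]
      exact lt_of_le_of_ne (le_wdeg hd') hc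

lemma hom_coeff_eq_zero {w : Fin n → Γ} {γ : Γ} {h : MvPolynomial (Fin n) k}
    (hh : Hom w γ h) {d : Fin n →₀ ℕ} (hd : mdeg w d ≠ γ) :
    MvPolynomial.coeff d h = 0 := by
  by_contra h0
  exact hd (hh d (MvPolynomial.mem_support_iff.mpr h0))

lemma lform_eq_of {w : Fin n → Γ} {f h e : MvPolynomial (Fin n) k} {γ : Γ}
    (hsum : f = h + e) (hh : Hom w γ h) (he : wdeg w e < (γ : WithBot Γ))
    (hf : wdeg w f = (γ : WithBot Γ)) : lform w f = h := by
  apply MvPolynomial.ext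
  intro d
  rw [coeff_lform, hf]
  by_cases hc : ((mdeg w d : Γ) : WithBot Γ) = (γ : WithBot Γ)
  · rw [if_pos hc, hsum, MvPolynomial.coeff_add]
    have : MvPolynomial.coeff d e = 0 := by
      by_contra h0
      have := le_wdeg (w := w) (MvPolynomial.mem_support_iff.mpr h0)
      rw [hc] at this
      exact absurd (lt_of_le_of_lt this he) (lt_irrefl _)
    rw [this, add_zero]
  · rw [if_neg hc]
    exact (hom_coeff_eq_zero hh (by exact_mod_cast fun hx => hc (by rw [hx]))).symm

lemma lform_of_hom {w : Fin n → Γ} {f : MvPolynomial (Fin n) k} {γ : Γ}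
    (hh : Hom w γ f) (hf : f ≠ 0) : lform w f = f := by
  refine lform_eq_of (by rw [add_zero]) hh ?_ (hh.wdeg_eq hf)
  rw [wdeg_zero]; exact WithBot.bot_lt_coe _

lemma wdeg_add_eq_left {w : Fin n → Γ} {h e : MvPolynomial (Fin n) k}
    (hlt : wdeg w e < wdeg w h) : wdeg w (h + e) = wdeg w h := by
  have hh : h ≠ 0 := by
    intro h0; rw [h0, wdeg_zero] at hlt; exact not_lt_bot hlt
  obtain ⟨d, hd, hde⟩ := exists_wdeg_eq (w := w) hh
  refine le_antisymm ((wdeg_add_le _ _).trans (max_le le_rfl hlt.le)) ?_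
  have hce : MvPolynomial.coeff d e = 0 := by
    by_contra h0
    have := le_wdeg (w := w) (MvPolynomial.mem_support_iff.mpr h0)
    rw [hde] at hlt
    exact absurd (lt_of_le_of_lt this hlt) (lt_irrefl _)
  have : d ∈ (h + e).support := by
    rw [MvPolynomial.mem_support_iff, MvPolynomial.coeff_add, hce, add_zero]
    exact MvPolynomial.mem_support_iff.mp hd
  rw [hde]
  exact le_wdeg this

lemma add_lt_coe_of_le_of_lt {x y : WithBot Γ} {γ δ : Γ}
    (hx : x ≤ (γ : WithBot Γ)) (hy : y < (δ : WithBot Γ)) :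
    x + y < ((γ + δ : Γ) : WithBot Γ) := by
  induction y using WithBot.recBotCoe with
  | bot => rw [WithBot.add_bot]; exact WithBot.bot_lt_coe _
  | coe c =>
    induction x using WithBot.recBotCoe with
    | bot => rw [WithBot.bot_add]; exact WithBot.bot_lt_coe _
    | coe a =>
      rw [← WithBot.coe_add, WithBot.coe_lt_coe]
      exact add_lt_add_of_le_of_lt (by exact_mod_cast hx) (by exact_mod_cast hy)

lemma add_lt_coe_of_lt_of_le {x y : WithBot Γ} {γ δ : Γ}
    (hx : x < (γ : WithBot Γ)) (hy : y ≤ (δ : WithBot Γ)) :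
    x + y < ((γ + δ : Γ) : WithBot Γ) := by
  rw [add_comm x y, add_comm γ δ]
  exact add_lt_coe_of_le_of_lt hy hx

lemma wdeg_mul {w : Fin n → Γ} (f g : MvPolynomial (Fin n) k) :
    wdeg w (f * g) = wdeg w f + wdeg w g := by
  rcases eq_or_ne f 0 with rfl | hf
  · simp [wdeg_zero]
  rcases eq_or_ne g 0 with rfl | hg
  · simp [wdeg_zero]
  obtain ⟨df, _, hdf⟩ := exists_wdeg_eq (w := w) hf
  obtain ⟨dg, _, hdg⟩ := exists_wdeg_eq (w := w) hg
  set γ := mdeg w df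
  set δ := mdeg w dg
  have hLf : Hom w γ (lform w f) := lform_hom hdf
  have hLg : Hom w δ (lform w g) := lform_hom hdg
  have hL : wdeg w (lform w f * lform w g) = ((γ + δ : Γ) : WithBot Γ) :=
    (hLf.mul hLg).wdeg_eq (mul_ne_zero (lform_ne_zero hf) (lform_ne_zero hg))
  have hdecomp : f * g = lform w f * lform w g
      + (lform w f * (g - lform w g) + (f - lform w f) * g) := by ring
  have hsmall : wdeg w (lform w f * (g - lform w g) + (f - lform w f) * g)
      < ((γ + δ : Γ) : WithBot Γ) := by
    refine lt_of_le_of_lt (wdeg_add_le _ _) (max_lt ?_ ?_)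
    · refine lt_of_le_of_lt (wdeg_mul_le _ _) ?_
      refine add_lt_coe_of_le_of_lt ?_ ?_
      · rw [wdeg_lform hf, hdf]
      · rw [← hdg]; exact wdeg_sub_lform_lt hg
    · refine lt_of_le_of_lt (wdeg_mul_le _ _) ?_
      refine add_lt_coe_of_lt_of_le ?_ ?_
      · rw [← hdf]; exact wdeg_sub_lform_lt hf
      · rw [hdg]
  rw [hdecomp, wdeg_add_eq_left (by rw [hL]; exact hsmall), hL, hdf, hdg,
    WithBot.coe_add]

lemma lform_mul {w : Fin n → Γ} {f g : MvPolynomial (Fin n) k}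
    (hf : f ≠ 0) (hg : g ≠ 0) :
    lform w (f * g) = lform w f * lform w g := by
  obtain ⟨df, _, hdf⟩ := exists_wdeg_eq (w := w) hf
  obtain ⟨dg, _, hdg⟩ := exists_wdeg_eq (w := w) hg
  set γ := mdeg w df
  set δ := mdeg w dg
  have hdecomp : f * g = lform w f * lform w g
      + (lform w f * (g - lform w g) + (f - lform w f) * g) := by ring
  refine lform_eq_of hdecomp (lform_hom hdf |>.mul (lform_hom hdg)) ?_ ?_
  · refine lt_of_le_of_lt (wdeg_add_le _ _) (max_lt ?_ ?_)
    · refine lt_of_le_of_lt (wdeg_mul_le _ _) (add_lt_coe_of_le_of_lt ?_ ?_)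
      · rw [wdeg_lform hf, hdf]
      · rw [← hdg]; exact wdeg_sub_lform_lt hg
    · refine lt_of_le_of_lt (wdeg_mul_le _ _) (add_lt_coe_of_lt_of_le ?_ ?_)
      · rw [← hdf]; exact wdeg_sub_lform_lt hf
      · rw [hdg]
  · rw [wdeg_mul, hdf, hdg, WithBot.coe_add]

lemma lform_C {w : Fin n → Γ} {c : k} (hc : c ≠ 0) :
    lform w (MvPolynomial.C (σ := Fin n) c) = MvPolynomial.C c := by
  refine lform_of_hom (γ := 0) ?_
    (fun h0 => hc (by
      have h1 := congrArg (MvPolynomial.coeff 0) h0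
      rwa [MvPolynomial.coeff_C, if_pos rfl, MvPolynomial.coeff_zero] at h1))
  intro d hd
  have hd' : d ∈ (MvPolynomial.monomial (0 : Fin n →₀ ℕ) c).support := by
    rw [← MvPolynomial.C_apply]; exact hd
  have := MvPolynomial.support_monomial_subset hd'
  rw [Finset.mem_singleton] at this
  rw [this, mdeg_zero]

lemma lform_one {w : Fin n → Γ} : lform w (1 : MvPolynomial (Fin n) k) = 1 := by
  have h := lform_C (w := w) (one_ne_zero : (1 : k) ≠ 0)
  rw [map_one] at h
  exact h

lemma lform_pow {w : Fin n → Γ} {g : MvPolynomial (Fin n) k} (hg : g ≠ 0) (i : ℕ) :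
    lform w (g ^ i) = (lform w g) ^ i := by
  induction i with
  | zero => simpa using lform_one
  | succ i ih =>
    rw [pow_succ, pow_succ, lform_mul (pow_ne_zero i hg) hg, ih]

lemma wdeg_pow {w : Fin n → Γ} (g : MvPolynomial (Fin n) k) (i : ℕ) :
    wdeg w (g ^ i) = i • wdeg w g := by
  induction i with
  | zero =>
    simp only [pow_zero, zero_smul]
    rw [show (1 : MvPolynomial (Fin n) k) = MvPolynomial.C 1 by rw [map_one]]
    rw [wdeg_C one_ne_zero]
  | succ i ih =>
    rw [pow_succ, wdeg_mul, ih, succ_nsmul]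

end Kuroda
namespace Kuroda

variable {k : Type*} [Field k] [CharZero k] {n : ℕ}
variable {Γ : Type*} [AddCommGroup Γ] [LinearOrder Γ] [IsOrderedAddMonoid Γ]

lemma wdeg_pderiv_le (w : Fin n → Γ) (j : Fin n) (h : MvPolynomial (Fin n) k) :
    wdeg w (MvPolynomial.pderiv j h) + ((w j : Γ) : WithBot Γ) ≤ wdeg w h := by
  have key : wdeg w (MvPolynomial.pderiv j h) ≤ wdeg w h + ((-(w j) : Γ) : WithBot Γ) := by
    conv_lhs => rw [h.as_sum]
    rw [map_sum]
    refine le_trans (wdeg_sum_le _ _) ?_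
    rw [Finset.sup_le_iff]
    intro v hv
    rw [MvPolynomial.pderiv_monomial]
    rcases Nat.eq_zero_or_pos (v j) with h0 | hpos
    · rw [h0]
      rw [show ((0 : ℕ) : k) = 0 by norm_num, mul_zero,
        map_zero, wdeg_zero]
      exact bot_le
    · refine le_trans (wdeg_monomial_le _ _) ?_
      have hsub : mdeg w (v - Finsupp.single j 1) = mdeg w v + (-(w j)) := by
        have h1 : (v - Finsupp.single j 1) + Finsupp.single j 1 = v :=
          tsub_add_cancel_of_le (Finsupp.single_le_iff.mpr hpos)
        have h2 := congrArg (mdeg w) h1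
        rw [mdeg_add, mdeg_single] at h2
        rw [← h2]; abel
      rw [hsub, WithBot.coe_add]
      exact add_le_add_left (le_wdeg hv) _
  calc wdeg w (MvPolynomial.pderiv j h) + ((w j : Γ) : WithBot Γ)
      ≤ (wdeg w h + ((-(w j) : Γ) : WithBot Γ)) + ((w j : Γ) : WithBot Γ) :=
        add_le_add_left key _
    _ = wdeg w h := by
        rw [add_assoc, ← WithBot.coe_add, neg_add_cancel, WithBot.coe_zero, add_zero]

lemma natCast_eq_C (m : ℕ) :
    ((m : ℕ) : MvPolynomial (Fin n) k) = MvPolynomial.C (m : k) :=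
  (map_natCast (MvPolynomial.C : k →+* MvPolynomial (Fin n) k) m).symm

lemma natCast_ne_zero' {m : ℕ} (hm : m ≠ 0) :
    ((m : ℕ) : MvPolynomial (Fin n) k) ≠ 0 := by
  rw [natCast_eq_C]
  intro h0
  have h1 := congrArg (MvPolynomial.coeff 0) h0
  rw [MvPolynomial.coeff_C, if_pos rfl, MvPolynomial.coeff_zero] at h1
  exact hm (Nat.cast_eq_zero.mp h1)

lemma lform_C_mul {w : Fin n → Γ} {c : k} (hc : c ≠ 0) (p : MvPolynomial (Fin n) k) :
    lform w (MvPolynomial.C c * p) = MvPolynomial.C c * lform w p := by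
  rcases eq_or_ne p 0 with rfl | hp
  · rw [mul_zero, lform_zero, mul_zero]
  apply MvPolynomial.ext
  intro e
  have hw : wdeg w (MvPolynomial.C c * p) = wdeg w p := by
    rw [wdeg_mul, wdeg_C hc, zero_add]
  rw [coeff_lform, MvPolynomial.coeff_C_mul, MvPolynomial.coeff_C_mul, coeff_lform, hw,
    mul_ite, mul_zero]

lemma lform_natCast_mul {w : Fin n → Γ} {m : ℕ} (hm : m ≠ 0) (p : MvPolynomial (Fin n) k) :
    lform w (((m : ℕ) : MvPolynomial (Fin n) k) * p)
      = ((m : ℕ) : MvPolynomial (Fin n) k) * lform w p := by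
  rw [natCast_eq_C, lform_C_mul (Nat.cast_ne_zero.mpr hm)]

lemma wdeg_natCast_mul {w : Fin n → Γ} {m : ℕ} (hm : m ≠ 0) (p : MvPolynomial (Fin n) k) :
    wdeg w (((m : ℕ) : MvPolynomial (Fin n) k) * p) = wdeg w p := by
  rw [natCast_eq_C, wdeg_mul, wdeg_C (Nat.cast_ne_zero.mpr hm), zero_add]

/-- the `γ`-homogeneous component -/
noncomputable def comp (w : Fin n → Γ) (γ : Γ) (f : MvPolynomial (Fin n) k) :
    MvPolynomial (Fin n) k :=
  ∑ d ∈ f.support.filter (fun d => mdeg w d = γ), MvPolynomial.monomial d (f.coeff d)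

lemma coeff_comp (w : Fin n → Γ) (γ : Γ) (f : MvPolynomial (Fin n) k) (e : Fin n →₀ ℕ) :
    MvPolynomial.coeff e (comp w γ f)
      = if mdeg w e = γ then MvPolynomial.coeff e f else 0 := by
  rw [comp, MvPolynomial.coeff_sum]
  simp only [MvPolynomial.coeff_monomial]
  rw [Finset.sum_ite_eq']
  by_cases hs : e ∈ f.support.filter (fun d => mdeg w d = γ)
  · rw [if_pos hs, if_pos (Finset.mem_filter.mp hs).2]
  · rw [if_neg hs]
    by_cases he : mdeg w e = γ
    · rw [if_pos he]
      have hns : e ∉ f.support := fun h => hs (Finset.mem_filter.mpr ⟨h, he⟩)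
      rw [MvPolynomial.notMem_support_iff.mp hns]
    · rw [if_neg he]

lemma comp_add (w : Fin n → Γ) (γ : Γ) (f g : MvPolynomial (Fin n) k) :
    comp w γ (f + g) = comp w γ f + comp w γ g := by
  apply MvPolynomial.ext
  intro e
  rw [MvPolynomial.coeff_add, coeff_comp, coeff_comp, coeff_comp, MvPolynomial.coeff_add]
  split_ifs <;> simp

lemma comp_zero (w : Fin n → Γ) (γ : Γ) : comp w γ (0 : MvPolynomial (Fin n) k) = 0 := by
  apply MvPolynomial.ext
  intro e
  rw [coeff_comp]
  simp

lemma comp_sum (w : Fin n → Γ) (γ : Γ) {α : Type*} (s : Finset α)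
    (p : α → MvPolynomial (Fin n) k) :
    comp w γ (∑ i ∈ s, p i) = ∑ i ∈ s, comp w γ (p i) := by
  classical
  induction s using Finset.induction_on with
  | empty => simp [comp_zero]
  | @insert a s ha ih => rw [Finset.sum_insert ha, Finset.sum_insert ha, comp_add, ih]

lemma comp_eq_zero_of_lt {w : Fin n → Γ} {γ : Γ} {f : MvPolynomial (Fin n) k}
    (h : wdeg w f < (γ : WithBot Γ)) : comp w γ f = 0 := by
  apply MvPolynomial.ext
  intro e
  rw [coeff_comp]
  by_cases hc : mdeg w e = γ
  · rw [if_pos hc, MvPolynomial.coeff_zero]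
    by_contra h0
    have := le_wdeg (w := w) (MvPolynomial.mem_support_iff.mpr h0)
    rw [hc] at this
    exact absurd (lt_of_le_of_lt this h) (lt_irrefl _)
  · rw [if_neg hc, MvPolynomial.coeff_zero]

lemma comp_eq_lform {w : Fin n → Γ} {γ : Γ} {f : MvPolynomial (Fin n) k}
    (h : wdeg w f = (γ : WithBot Γ)) : comp w γ f = lform w f := by
  apply MvPolynomial.ext
  intro e
  rw [coeff_comp, coeff_lform, h]
  by_cases hc : mdeg w e = γ
  · rw [if_pos hc, if_pos (by exact_mod_cast hc)]
  · rw [if_neg hc, if_neg (fun hx => hc (by exact_mod_cast hx))]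

section WithBotHelpers

lemma sup_add_le {α : Type*} (s : Finset α) (u : α → WithBot Γ) (c : Γ) (t : WithBot Γ)
    (h : ∀ j ∈ s, u j + (c : WithBot Γ) ≤ t) : s.sup u + (c : WithBot Γ) ≤ t := by
  classical
  induction s using Finset.induction_on with
  | empty => rw [Finset.sup_empty, WithBot.bot_add]; exact bot_le
  | @insert a s ha ih =>
    rw [Finset.sup_insert]
    rcases le_total (u a) (s.sup u) with hle | hle
    · rw [sup_eq_right.mpr hle]
      exact ih (fun j hj => h j (Finset.mem_insert_of_mem hj))
    · rw [sup_eq_left.mpr hle]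
      exact h a (Finset.mem_insert_self a s)

lemma add_sup_eq {α : Type*} (c : WithBot Γ) (s : Finset α) (u : α → WithBot Γ) :
    c + s.sup u = s.sup fun x => c + u x := by
  classical
  induction s using Finset.induction_on with
  | empty => rw [Finset.sup_empty, Finset.sup_empty, WithBot.add_bot]
  | @insert a s ha ih =>
    rw [Finset.sup_insert, Finset.sup_insert, ← ih]
    rcases le_total (u a) (s.sup u) with hle | hle
    · rw [sup_eq_right.mpr hle, sup_eq_right.mpr (add_le_add_right hle c)]
    · rw [sup_eq_left.mpr hle, sup_eq_left.mpr (add_le_add_right hle c)]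

lemma nsmul_coe (m : ℕ) (γ : Γ) :
    (m • ((γ : Γ) : WithBot Γ)) = ((m • γ : Γ) : WithBot Γ) := by
  induction m with
  | zero => rw [zero_nsmul, zero_nsmul, WithBot.coe_zero]
  | succ m ih => rw [succ_nsmul, succ_nsmul, ih, WithBot.coe_add]

lemma nsmul_nonpos {M : WithBot Γ} (hM : M ≤ 0) (m : ℕ) : m • M ≤ 0 := by
  induction m with
  | zero => rw [zero_nsmul]
  | succ m ih =>
    rw [succ_nsmul]
    calc m • M + M ≤ 0 + 0 := add_le_add ih hM
      _ = 0 := add_zero 0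

lemma nsmul_le_nsmul_of_nonpos {M : WithBot Γ} (hM : M ≤ 0) {m m' : ℕ} (h : m ≤ m') :
    m' • M ≤ m • M := by
  obtain ⟨t, rfl⟩ := Nat.exists_eq_add_of_le h
  rw [add_nsmul]
  calc m • M + t • M ≤ m • M + 0 := add_le_add_right (nsmul_nonpos hM t) _
    _ = m • M := add_zero _

lemma coe_add_right_cancel {x y : WithBot Γ} {c : Γ}
    (h : x + (c : WithBot Γ) = y + (c : WithBot Γ)) : x = y := by
  have h1 := (WithBot.add_le_add_iff_right (z := (c : WithBot Γ))
    (WithBot.coe_ne_bot)).mp h.le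
  have h2 := (WithBot.add_le_add_iff_right (z := (c : WithBot Γ))
    (WithBot.coe_ne_bot)).mp h.ge
  exact le_antisymm h1 h2

end WithBotHelpers

end Kuroda
namespace Kuroda

variable {k : Type*} [Field k] [CharZero k] {n : ℕ}
variable {Γ : Type*} [AddCommGroup Γ] [LinearOrder Γ] [IsOrderedAddMonoid Γ]

lemma le_wdegG {w : Fin n → Γ} {g : MvPolynomial (Fin n) k}
    {Θ : Polynomial (MvPolynomial (Fin n) k)} {i : ℕ} (hi : i ∈ Θ.support) :
    wdeg w (Θ.coeff i * g ^ i) ≤ wdegG w g Θ :=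
  Finset.le_sup (f := fun i => wdeg w (Θ.coeff i * g ^ i)) hi

lemma wdeg_eval_le (w : Fin n → Γ) (g : MvPolynomial (Fin n) k)
    (Θ : Polynomial (MvPolynomial (Fin n) k)) :
    wdeg w (Θ.eval g) ≤ wdegG w g Θ := by
  rw [Polynomial.eval_eq_sum, Polynomial.sum_def, wdegG]
  exact wdeg_sum_le _ _

lemma exists_wdegG_eq {w : Fin n → Γ} {g : MvPolynomial (Fin n) k}
    {Θ : Polynomial (MvPolynomial (Fin n) k)} (hΘ : Θ ≠ 0) :
    ∃ i ∈ Θ.support, wdegG w g Θ = wdeg w (Θ.coeff i * g ^ i) := by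
  obtain ⟨i, hi, h⟩ := Finset.exists_mem_eq_sup Θ.support
    (Polynomial.support_nonempty.mpr hΘ) (fun i => wdeg w (Θ.coeff i * g ^ i))
  exact ⟨i, hi, h⟩

lemma exists_wdegG_coe {w : Fin n → Γ} {g : MvPolynomial (Fin n) k}
    {Θ : Polynomial (MvPolynomial (Fin n) k)} (hΘ : Θ ≠ 0) (hg : g ≠ 0) :
    ∃ γ : Γ, wdegG w g Θ = (γ : WithBot Γ) := by
  obtain ⟨i, hi, h⟩ := exists_wdegG_eq (w := w) (g := g) hΘ
  have hne : Θ.coeff i * g ^ i ≠ 0 :=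
    mul_ne_zero (Polynomial.mem_support_iff.mp hi) (pow_ne_zero _ hg)
  obtain ⟨d, _, hd⟩ := exists_wdeg_eq (w := w) hne
  exact ⟨_, h.trans hd⟩

lemma coeff_pLform (w : Fin n → Γ) (g : MvPolynomial (Fin n) k)
    (Θ : Polynomial (MvPolynomial (Fin n) k)) (i : ℕ) :
    (pLform w g Θ).coeff i
      = if i ∈ Θ.support ∧ wdeg w (Θ.coeff i * g ^ i) = wdegG w g Θ
        then lform w (Θ.coeff i) else 0 := by
  rw [pLform, Finset.filter_congr_decidable, Polynomial.finset_sum_coeff]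
  simp only [Polynomial.coeff_C_mul, Polynomial.coeff_X_pow, mul_ite, mul_one, mul_zero]
  rw [Finset.sum_ite_eq]
  by_cases hs : i ∈ Θ.support.filter (fun i => wdeg w (Θ.coeff i * g ^ i) = wdegG w g Θ)
  · rw [if_pos hs, if_pos (Finset.mem_filter.mp hs)]
  · rw [if_neg hs, if_neg (fun hmem => hs (Finset.mem_filter.mpr hmem))]

lemma pLform_ne_zero {w : Fin n → Γ} {g : MvPolynomial (Fin n) k}
    {Θ : Polynomial (MvPolynomial (Fin n) k)} (hΘ : Θ ≠ 0) :
    pLform w g Θ ≠ 0 := by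
  obtain ⟨i, hi, h⟩ := exists_wdegG_eq (w := w) (g := g) hΘ
  intro h0
  have hc : (pLform w g Θ).coeff i = lform w (Θ.coeff i) := by
    rw [coeff_pLform, if_pos ⟨hi, h.symm⟩]
  rw [h0, Polynomial.coeff_zero] at hc
  exact lform_ne_zero (Polynomial.mem_support_iff.mp hi) hc.symm

lemma pLform_zero (w : Fin n → Γ) (g : MvPolynomial (Fin n) k) :
    pLform w g (0 : Polynomial (MvPolynomial (Fin n) k)) = 0 := by
  apply Polynomial.ext
  intro i
  rw [coeff_pLform]
  simp

lemma natDegree_pLform_le {w : Fin n → Γ} {g : MvPolynomial (Fin n) k}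
    (Θ : Polynomial (MvPolynomial (Fin n) k)) :
    (pLform w g Θ).natDegree ≤ Θ.natDegree := by
  rw [Polynomial.natDegree_le_iff_coeff_eq_zero]
  intro m hm
  rw [coeff_pLform]
  have : m ∉ Θ.support := fun hmem =>
    absurd (Polynomial.le_natDegree_of_mem_supp m hmem) (not_le.mpr hm)
  rw [if_neg (fun hc => this hc.1)]

lemma natDegree_pLform_mem {w : Fin n → Γ} {g : MvPolynomial (Fin n) k}
    {Θ : Polynomial (MvPolynomial (Fin n) k)} (hΘ : Θ ≠ 0) :
    (pLform w g Θ).natDegree ∈ Θ.support ∧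
      wdeg w (Θ.coeff (pLform w g Θ).natDegree * g ^ (pLform w g Θ).natDegree)
        = wdegG w g Θ := by
  have hne := pLform_ne_zero (w := w) (g := g) hΘ
  have hc : (pLform w g Θ).coeff (pLform w g Θ).natDegree ≠ 0 := by
    intro h0
    exact hne (Polynomial.leadingCoeff_eq_zero.mp h0)
  rw [coeff_pLform] at hc
  by_cases hcond : (pLform w g Θ).natDegree ∈ Θ.support ∧
      wdeg w (Θ.coeff (pLform w g Θ).natDegree * g ^ (pLform w g Θ).natDegree)
        = wdegG w g Θ
  · exact hcond
  · rw [if_neg hcond] at hc; exact absurd rfl hc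

lemma eval_pLform (w : Fin n → Γ) (g : MvPolynomial (Fin n) k)
    (Θ : Polynomial (MvPolynomial (Fin n) k)) :
    (pLform w g Θ).eval (lform w g)
      = ∑ i ∈ Θ.support.filter
          (fun i => wdeg w (Θ.coeff i * g ^ i) = wdegG w g Θ),
          lform w (Θ.coeff i) * (lform w g) ^ i := by
  rw [pLform, Finset.filter_congr_decidable, Polynomial.eval_finset_sum]
  apply Finset.sum_congr rfl
  intro i _
  rw [Polynomial.eval_mul, Polynomial.eval_pow, Polynomial.eval_C, Polynomial.eval_X]

lemma pLform_eval_eq_zero {w : Fin n → Γ} {g : MvPolynomial (Fin n) k}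
    {Θ : Polynomial (MvPolynomial (Fin n) k)} (hg : g ≠ 0) (hΘ : Θ ≠ 0)
    (hlt : wdeg w (Θ.eval g) < wdegG w g Θ) :
    (pLform w g Θ).eval (lform w g) = 0 := by
  obtain ⟨γ, hγ⟩ := exists_wdegG_coe (w := w) (g := g) hΘ hg
  have h0 : comp w γ (Θ.eval g) = 0 := comp_eq_zero_of_lt (by rw [← hγ]; exact hlt)
  rw [Polynomial.eval_eq_sum, Polynomial.sum_def, comp_sum] at h0
  rw [eval_pLform]
  have hsub : Θ.support.filter
      (fun i => wdeg w (Θ.coeff i * g ^ i) = wdegG w g Θ) ⊆ Θ.support :=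
    Finset.filter_subset _ _
  have hzero : ∀ i ∈ Θ.support,
      i ∉ Θ.support.filter (fun i => wdeg w (Θ.coeff i * g ^ i) = wdegG w g Θ) →
      comp w γ (Θ.coeff i * g ^ i) = 0 := by
    intro i hi hni
    have hne : wdeg w (Θ.coeff i * g ^ i) ≠ wdegG w g Θ := by
      intro h; exact hni (Finset.mem_filter.mpr ⟨hi, h⟩)
    refine comp_eq_zero_of_lt ?_
    rw [← hγ]
    exact lt_of_le_of_ne (le_wdegG hi) hne
  have heq : ∀ i ∈ Θ.support.filter
      (fun i => wdeg w (Θ.coeff i * g ^ i) = wdegG w g Θ),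
      comp w γ (Θ.coeff i * g ^ i) = lform w (Θ.coeff i) * (lform w g) ^ i := by
    intro i hi
    obtain ⟨hi1, hi2⟩ := Finset.mem_filter.mp hi
    have hθ : Θ.coeff i ≠ 0 := Polynomial.mem_support_iff.mp hi1
    rw [comp_eq_lform (by rw [hi2, hγ]), lform_mul hθ (pow_ne_zero _ hg), lform_pow hg]
  calc ∑ i ∈ Θ.support.filter
        (fun i => wdeg w (Θ.coeff i * g ^ i) = wdegG w g Θ),
        lform w (Θ.coeff i) * (lform w g) ^ i
      = ∑ i ∈ Θ.support.filter
        (fun i => wdeg w (Θ.coeff i * g ^ i) = wdegG w g Θ),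
        comp w γ (Θ.coeff i * g ^ i) := (Finset.sum_congr rfl heq).symm
    _ = ∑ i ∈ Θ.support, comp w γ (Θ.coeff i * g ^ i) := Finset.sum_subset hsub hzero
    _ = 0 := h0

end Kuroda
namespace Kuroda

variable {k : Type*} [Field k] [CharZero k] {n : ℕ}
variable {Γ : Type*} [AddCommGroup Γ] [LinearOrder Γ] [IsOrderedAddMonoid Γ]

lemma coeff_derivative_eq (Θ : Polynomial (MvPolynomial (Fin n) k)) (i : ℕ) :
    (Polynomial.derivative Θ).coeff i
      = Θ.coeff (i + 1) * ((i + 1 : ℕ) : MvPolynomial (Fin n) k) := by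
  rw [Polynomial.coeff_derivative]
  push_cast
  ring

lemma mem_support_derivative_iff (Θ : Polynomial (MvPolynomial (Fin n) k)) (i : ℕ) :
    i ∈ (Polynomial.derivative Θ).support ↔ i + 1 ∈ Θ.support := by
  simp only [Polynomial.mem_support_iff, coeff_derivative_eq]
  rw [mul_ne_zero_iff]
  have := natCast_ne_zero' (k := k) (n := n) (Nat.succ_ne_zero i)
  tauto

lemma wdeg_term_deriv {w : Fin n → Γ} {g : MvPolynomial (Fin n) k} {δ : Γ}
    (hg : g ≠ 0) (hδ : wdeg w g = (δ : WithBot Γ))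
    {Θ : Polynomial (MvPolynomial (Fin n) k)} {i : ℕ} (hi : i + 1 ∈ Θ.support) :
    wdeg w ((Polynomial.derivative Θ).coeff i * g ^ i)
      = wdeg w (Θ.coeff (i + 1) * g ^ (i + 1)) + ((-δ : Γ) : WithBot Γ) := by
  have hθ : Θ.coeff (i + 1) ≠ 0 := Polynomial.mem_support_iff.mp hi
  obtain ⟨d, _, hd⟩ := exists_wdeg_eq (w := w) hθ
  rw [coeff_derivative_eq, mul_comm (Θ.coeff (i + 1)) _, mul_assoc,
    wdeg_natCast_mul (Nat.succ_ne_zero i), wdeg_mul, wdeg_mul, wdeg_pow, wdeg_pow,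
    hd, hδ, nsmul_coe, nsmul_coe, ← WithBot.coe_add, ← WithBot.coe_add, ← WithBot.coe_add]
  congr 1
  rw [succ_nsmul]
  abel

lemma derivative_wdegG {w : Fin n → Γ} {g : MvPolynomial (Fin n) k} {δ : Γ}
    (hg : g ≠ 0) (hδ : wdeg w g = (δ : WithBot Γ))
    {Θ : Polynomial (MvPolynomial (Fin n) k)}
    (hS1 : ∃ i0, (i0 ∈ Θ.support ∧ wdeg w (Θ.coeff i0 * g ^ i0) = wdegG w g Θ) ∧ 1 ≤ i0) :
    wdegG w g (Polynomial.derivative Θ) = wdegG w g Θ + ((-δ : Γ) : WithBot Γ) := by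
  apply le_antisymm
  · rw [wdegG]
    apply Finset.sup_le
    intro i hi
    rw [mem_support_derivative_iff] at hi
    rw [wdeg_term_deriv hg hδ hi]
    exact add_le_add_left (le_wdegG hi) _
  · obtain ⟨i0, ⟨hmem, heq⟩, h1⟩ := hS1
    obtain ⟨j, rfl⟩ := Nat.exists_eq_add_of_le h1
    rw [add_comm 1 j] at hmem heq
    have hj : j ∈ (Polynomial.derivative Θ).support :=
      (mem_support_derivative_iff Θ j).mpr hmem
    have := le_wdegG (w := w) (g := g) hj
    rw [wdeg_term_deriv hg hδ hmem, heq] at this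
    calc wdegG w g Θ + ((-δ : Γ) : WithBot Γ)
        = wdeg w ((Polynomial.derivative Θ).coeff j * g ^ j) := by
          rw [wdeg_term_deriv hg hδ hmem, heq]
      _ ≤ wdegG w g (Polynomial.derivative Θ) := le_wdegG hj

lemma derivative_pLform {w : Fin n → Γ} {g : MvPolynomial (Fin n) k} {δ : Γ}
    (hg : g ≠ 0) (hδ : wdeg w g = (δ : WithBot Γ))
    {Θ : Polynomial (MvPolynomial (Fin n) k)}
    (hS1 : ∃ i0, (i0 ∈ Θ.support ∧ wdeg w (Θ.coeff i0 * g ^ i0) = wdegG w g Θ) ∧ 1 ≤ i0) :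
    pLform w g (Polynomial.derivative Θ) = Polynomial.derivative (pLform w g Θ) := by
  apply Polynomial.ext
  intro i
  rw [Polynomial.coeff_derivative, coeff_pLform, coeff_pLform]
  have hiff : (i ∈ (Polynomial.derivative Θ).support ∧
      wdeg w ((Polynomial.derivative Θ).coeff i * g ^ i)
        = wdegG w g (Polynomial.derivative Θ))
      ↔ (i + 1 ∈ Θ.support ∧
        wdeg w (Θ.coeff (i + 1) * g ^ (i + 1)) = wdegG w g Θ) := by
    rw [mem_support_derivative_iff]
    constructor
    · rintro ⟨h1, h2⟩
      refine ⟨h1, ?_⟩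
      rw [wdeg_term_deriv hg hδ h1, derivative_wdegG hg hδ hS1] at h2
      exact coe_add_right_cancel h2
    · rintro ⟨h1, h2⟩
      refine ⟨h1, ?_⟩
      rw [wdeg_term_deriv hg hδ h1, derivative_wdegG hg hδ hS1, h2]
  by_cases hc : i + 1 ∈ Θ.support ∧
      wdeg w (Θ.coeff (i + 1) * g ^ (i + 1)) = wdegG w g Θ
  · rw [if_pos (hiff.mpr hc), if_pos hc, coeff_derivative_eq,
      mul_comm (Θ.coeff (i + 1)) _, lform_natCast_mul (Nat.succ_ne_zero i)]
    push_cast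
    ring
  · rw [if_neg (fun h => hc (hiff.mp h)), if_neg hc, zero_mul]

end Kuroda
namespace Kuroda

variable {k : Type*} [Field k] [CharZero k] {n : ℕ}
variable {Γ : Type*} [AddCommGroup Γ] [LinearOrder Γ] [IsOrderedAddMonoid Γ]

lemma chain_rule {r : ℕ} (f : Fin r → MvPolynomial (Fin n) k) (j : Fin n)
    (P : MvPolynomial (Fin r) k) :
    MvPolynomial.pderiv j (MvPolynomial.aeval f P)
      = ∑ a, MvPolynomial.aeval f (MvPolynomial.pderiv a P)
          * MvPolynomial.pderiv j (f a) := by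
  induction P using MvPolynomial.induction_on with
  | C c => simp
  | add p q hp hq =>
    rw [map_add, map_add, hp, hq, ← Finset.sum_add_distrib]
    apply Finset.sum_congr rfl
    intro a _
    rw [map_add, map_add, add_mul]
  | mul_X p s hp =>
    have hsplit : ∀ a : Fin r,
        MvPolynomial.aeval f (MvPolynomial.pderiv a (p * MvPolynomial.X s))
          * MvPolynomial.pderiv j (f a)
        = MvPolynomial.aeval f (MvPolynomial.pderiv a p)
            * MvPolynomial.pderiv j (f a) * f s
          + (if a = s then MvPolynomial.aeval f p * MvPolynomial.pderiv j (f s) else 0) := by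
      intro a
      rcases eq_or_ne a s with rfl | hne
      · rw [MvPolynomial.pderiv_mul, MvPolynomial.pderiv_X_self, mul_one, map_add, map_mul,
          MvPolynomial.aeval_X, add_mul, if_pos rfl]
        ring
      · rw [MvPolynomial.pderiv_mul, MvPolynomial.pderiv_X_of_ne (Ne.symm hne), mul_zero,
          add_zero, map_mul, MvPolynomial.aeval_X, if_neg hne, add_zero]
        ring
    rw [map_mul, MvPolynomial.aeval_X, MvPolynomial.pderiv_mul, hp,
      Finset.sum_congr rfl (fun a _ => hsplit a), Finset.sum_add_distrib,
      Finset.sum_ite_eq' Finset.univ s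
        (fun _ => MvPolynomial.aeval f p * MvPolynomial.pderiv j (f s)),
      if_pos (Finset.mem_univ s), ← Finset.sum_mul]

lemma exists_pderiv_rep {r : ℕ} (f : Fin r → MvPolynomial (Fin n) k)
    (A : Subalgebra k (MvPolynomial (Fin n) k))
    (hA : A = Algebra.adjoin k (Set.range f)) {h : MvPolynomial (Fin n) k} (hh : h ∈ A) :
    ∃ c : Fin r → MvPolynomial (Fin n) k, ∀ j,
      MvPolynomial.pderiv j h = ∑ a, c a * MvPolynomial.pderiv j (f a) := by
  rw [hA, Algebra.adjoin_range_eq_range_aeval] at hh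
  obtain ⟨P, rfl⟩ := (AlgHom.mem_range _).mp hh
  exact ⟨fun a => MvPolynomial.aeval f (MvPolynomial.pderiv a P),
    fun j => chain_rule f j P⟩

lemma pderiv_eval (j : Fin n) (g : MvPolynomial (Fin n) k)
    (Θ : Polynomial (MvPolynomial (Fin n) k)) :
    MvPolynomial.pderiv j (Θ.eval g)
      = (Polynomial.derivative Θ).eval g * MvPolynomial.pderiv j g
        + Θ.sum fun i θ => MvPolynomial.pderiv j θ * g ^ i := by
  induction Θ using Polynomial.induction_on' with
  | add p q hp hq =>
    rw [Polynomial.eval_add, map_add, hp, hq, Polynomial.derivative_add, Polynomial.eval_add,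
      Polynomial.sum_add_index p q _ (fun i => by rw [map_zero, zero_mul])
        (fun i a b => by rw [map_add, add_mul])]
    ring
  | monomial i θ =>
    rw [Polynomial.eval_monomial, MvPolynomial.pderiv_mul, MvPolynomial.pderiv_pow,
      Polynomial.derivative_monomial, Polynomial.eval_monomial,
      Polynomial.sum_monomial_index θ _ (by rw [map_zero, zero_mul])]
    ring

lemma pderiv_eval_rep {r : ℕ} (f : Fin r → MvPolynomial (Fin n) k)
    (A : Subalgebra k (MvPolynomial (Fin n) k))
    (hA : A = Algebra.adjoin k (Set.range f)) (g : MvPolynomial (Fin n) k)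
    {Θ : Polynomial (MvPolynomial (Fin n) k)} (hΘA : ∀ i, Θ.coeff i ∈ A) :
    ∃ c : Fin r → MvPolynomial (Fin n) k, ∀ j,
      MvPolynomial.pderiv j (Θ.eval g)
        = (Polynomial.derivative Θ).eval g * MvPolynomial.pderiv j g
          + ∑ a, c a * MvPolynomial.pderiv j (f a) := by
  choose c hc using fun i => exists_pderiv_rep f A hA (hΘA i)
  refine ⟨fun a => ∑ i ∈ Θ.support, c i a * g ^ i, fun j => ?_⟩
  rw [pderiv_eval, Polynomial.sum_def]
  congr 1
  calc ∑ i ∈ Θ.support, MvPolynomial.pderiv j (Θ.coeff i) * g ^ i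
      = ∑ i ∈ Θ.support, ∑ a, c i a * MvPolynomial.pderiv j (f a) * g ^ i := by
        refine Finset.sum_congr rfl fun i _ => ?_
        rw [hc i j, Finset.sum_mul]
    _ = ∑ a, ∑ i ∈ Θ.support, c i a * MvPolynomial.pderiv j (f a) * g ^ i :=
        Finset.sum_comm
    _ = ∑ a, (∑ i ∈ Θ.support, c i a * g ^ i) * MvPolynomial.pderiv j (f a) := by
        refine Finset.sum_congr rfl fun a _ => ?_
        rw [Finset.sum_mul]
        exact Finset.sum_congr rfl fun i _ => by ring

end Kuroda
namespace Kuroda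

variable {k : Type*} [Field k] [CharZero k] {n : ℕ}
variable {Γ : Type*} [AddCommGroup Γ] [LinearOrder Γ] [IsOrderedAddMonoid Γ]

lemma det_updateRow_sum_smul_zero {r : ℕ}
    (Mat : Matrix (Fin (r + 1)) (Fin (r + 1)) (MvPolynomial (Fin n) k))
    (c : Fin r → MvPolynomial (Fin n) k)
    (rows : Fin r → (Fin (r + 1) → MvPolynomial (Fin n) k))
    (hrows : ∀ a, Mat (Fin.castSucc a) = rows a) :
    (Mat.updateRow (Fin.last r) (∑ a, c a • rows a)).det = 0 := by
  classical
  have key : ∀ s : Finset (Fin r),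
      (Mat.updateRow (Fin.last r) (∑ a ∈ s, c a • rows a)).det = 0 := by
    intro s
    induction s using Finset.induction_on with
    | empty =>
      rw [Finset.sum_empty]
      exact Matrix.det_eq_zero_of_row_eq_zero (Fin.last r)
        (fun j => by rw [Matrix.updateRow_self]; rfl)
    | @insert a s ha ih =>
      rw [Finset.sum_insert ha, Matrix.det_updateRow_add, Matrix.det_updateRow_smul, ih,
        add_zero]
      have h0 : (Mat.updateRow (Fin.last r) (rows a)).det = 0 := by
        apply Matrix.det_zero_of_row_eq (Fin.castSucc_lt_last a).ne
        rw [Matrix.updateRow_ne (Fin.castSucc_lt_last a).ne, Matrix.updateRow_self, hrows a]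
      rw [h0, mul_zero]
  exact key Finset.univ

lemma det_snoc_eval {r : ℕ} (f : Fin r → MvPolynomial (Fin n) k)
    (A : Subalgebra k (MvPolynomial (Fin n) k))
    (hA : A = Algebra.adjoin k (Set.range f)) (g : MvPolynomial (Fin n) k)
    {Θ : Polynomial (MvPolynomial (Fin n) k)} (hΘA : ∀ i, Θ.coeff i ∈ A)
    (e : Fin (r + 1) → Fin n) :
    Matrix.det (Matrix.of fun a b : Fin (r + 1) =>
        MvPolynomial.pderiv (e b) ((Fin.snoc f (Θ.eval g) : Fin (r + 1) → MvPolynomial (Fin n) k) a))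
      = (Polynomial.derivative Θ).eval g *
        Matrix.det (Matrix.of fun a b : Fin (r + 1) =>
          MvPolynomial.pderiv (e b) ((Fin.snoc f g : Fin (r + 1) → MvPolynomial (Fin n) k) a)) := by
  obtain ⟨c, hc⟩ := pderiv_eval_rep f A hA g hΘA
  set Mat : Matrix (Fin (r + 1)) (Fin (r + 1)) (MvPolynomial (Fin n) k) :=
    Matrix.of fun a b : Fin (r + 1) => MvPolynomial.pderiv (e b) ((Fin.snoc f g : Fin (r + 1) → MvPolynomial (Fin n) k) a) with hMat
  have hrow : (Matrix.of fun a b : Fin (r + 1) =>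
      MvPolynomial.pderiv (e b) ((Fin.snoc f (Θ.eval g) : Fin (r + 1) → MvPolynomial (Fin n) k) a))
      = Mat.updateRow (Fin.last r)
          (fun b => MvPolynomial.pderiv (e b) (Θ.eval g)) := by
    apply Matrix.ext
    intro a b
    induction a using Fin.lastCases with
    | last =>
      rw [Matrix.updateRow_self]
      simp only [Matrix.of_apply, Fin.snoc_last]
    | cast i =>
      rw [Matrix.updateRow_ne (Fin.castSucc_lt_last i).ne]
      simp only [Matrix.of_apply, hMat, Fin.snoc_castSucc]
  have hv : (fun b => MvPolynomial.pderiv (e b) (Θ.eval g))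
      = ((Polynomial.derivative Θ).eval g • fun b => MvPolynomial.pderiv (e b) g)
        + ∑ a : Fin r, c a • (fun b => MvPolynomial.pderiv (e b) (f a)) := by
    funext b
    rw [hc (e b)]
    simp only [Pi.add_apply, Pi.smul_apply, smul_eq_mul, Finset.sum_apply]
  rw [hrow, hv, Matrix.det_updateRow_add, Matrix.det_updateRow_smul,
    det_updateRow_sum_smul_zero Mat c _ (fun a => by funext b; simp [hMat, Fin.snoc_castSucc]),
    add_zero]
  congr 1
  have hlast : (fun b => MvPolynomial.pderiv (e b) g) = Mat (Fin.last r) := by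
    funext b
    simp [hMat, Fin.snoc_last]
  rw [hlast, Matrix.updateRow_eq_self]

lemma wedgeDeg_snoc_le {r : ℕ} (w : Fin n → Γ) (f : Fin r → MvPolynomial (Fin n) k)
    (h : MvPolynomial (Fin n) k) :
    wedgeDeg w (Fin.snoc f h) ≤ wedgeDeg w f + wdeg w h := by
  set F : Fin (r + 1) → MvPolynomial (Fin n) k := Fin.snoc f h with hF
  have hFlast : F (Fin.last r) = h := by rw [hF, Fin.snoc_last]
  have hFcast : ∀ i : Fin r, F (Fin.castSucc i) = f i := by
    intro i; rw [hF, Fin.snoc_castSucc]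
  rw [wedgeDeg]
  apply Finset.sup_le
  intro e _
  set Msnoc : Matrix (Fin (r + 1)) (Fin (r + 1)) (MvPolynomial (Fin n) k) :=
    Matrix.of fun a b : Fin (r + 1) => MvPolynomial.pderiv (e b) (F a) with hM
  rw [Matrix.det_succ_row _ (Fin.last r)]
  refine le_trans (add_le_add_left (wdeg_sum_le _ _)
    ((((∑ b, w (e b) : Γ)) : WithBot Γ))) ?_
  apply sup_add_le
  intro j _
  have hsign : ∀ t : ℕ, wdeg w ((-1 : MvPolynomial (Fin n) k) ^ t) ≤ (0 : WithBot Γ) := by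
    intro t
    have hh : ((-1 : MvPolynomial (Fin n) k)) ^ t = MvPolynomial.C ((-1 : k) ^ t) := by
      rw [map_pow, map_neg, map_one]
    rw [hh]
    exact wdeg_C_le _
  have hsplit : ((∑ b, w (e b) : Γ) : WithBot Γ)
      = ((w (e j) : Γ) : WithBot Γ)
        + ((∑ b : Fin r, w (e (j.succAbove b)) : Γ) : WithBot Γ) := by
    rw [← WithBot.coe_add]
    congr 1
    exact Fin.sum_univ_succAbove (fun b => w (e b)) j
  have hminor : Msnoc.submatrix (Fin.last r).succAbove j.succAbove
      = Matrix.of fun a b : Fin r =>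
          MvPolynomial.pderiv ((e ∘ j.succAbove) b) (f a) := by
    apply Matrix.ext
    intro a b
    rw [Matrix.submatrix_apply, Fin.succAbove_last]
    simp only [hM, Matrix.of_apply, Function.comp_apply, hFcast]
  have hminor_le : wdeg w (Msnoc.submatrix (Fin.last r).succAbove j.succAbove).det
        + ((∑ b : Fin r, w (e (j.succAbove b)) : Γ) : WithBot Γ) ≤ wedgeDeg w f := by
    rw [hminor]
    exact Finset.le_sup (f := fun e' : Fin r → Fin n =>
      wdeg w (Matrix.det (Matrix.of fun a b : Fin r =>
        MvPolynomial.pderiv (e' b) (f a)))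
        + ((∑ b, w (e' b) : Γ) : WithBot Γ)) (Finset.mem_univ (e ∘ j.succAbove))
  have hentry : Msnoc (Fin.last r) j = MvPolynomial.pderiv (e j) h := by
    rw [hM]
    simp only [Matrix.of_apply, hFlast]
  have hterm : wdeg w ((-1 : MvPolynomial (Fin n) k) ^ ((Fin.last r : ℕ) + (j : ℕ))
        * Msnoc (Fin.last r) j
        * (Msnoc.submatrix (Fin.last r).succAbove j.succAbove).det)
      ≤ wdeg w (MvPolynomial.pderiv (e j) h)
        + wdeg w (Msnoc.submatrix (Fin.last r).succAbove j.succAbove).det := by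
    refine le_trans (wdeg_mul_le _ _) (add_le_add_left ?_ _)
    refine le_trans (wdeg_mul_le _ _) ?_
    rw [hentry]
    calc wdeg w ((-1 : MvPolynomial (Fin n) k) ^ ((Fin.last r : ℕ) + (j : ℕ)))
          + wdeg w (MvPolynomial.pderiv (e j) h)
        ≤ 0 + wdeg w (MvPolynomial.pderiv (e j) h) :=
          add_le_add_left (hsign _) _
      _ = wdeg w (MvPolynomial.pderiv (e j) h) := zero_add _
  rw [hsplit]
  calc wdeg w ((-1 : MvPolynomial (Fin n) k) ^ ((Fin.last r : ℕ) + (j : ℕ))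
        * Msnoc (Fin.last r) j
        * (Msnoc.submatrix (Fin.last r).succAbove j.succAbove).det)
      + (((w (e j) : Γ) : WithBot Γ)
        + ((∑ b : Fin r, w (e (j.succAbove b)) : Γ) : WithBot Γ))
      ≤ (wdeg w (MvPolynomial.pderiv (e j) h)
          + wdeg w (Msnoc.submatrix (Fin.last r).succAbove j.succAbove).det)
        + (((w (e j) : Γ) : WithBot Γ)
          + ((∑ b : Fin r, w (e (j.succAbove b)) : Γ) : WithBot Γ)) :=
        add_le_add_left hterm _
    _ = (wdeg w (MvPolynomial.pderiv (e j) h) + ((w (e j) : Γ) : WithBot Γ))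
        + (wdeg w (Msnoc.submatrix (Fin.last r).succAbove j.succAbove).det
          + ((∑ b : Fin r, w (e (j.succAbove b)) : Γ) : WithBot Γ)) := by
        rw [add_add_add_comm]
    _ ≤ wdeg w h + wedgeDeg w f :=
        add_le_add (wdeg_pderiv_le w (e j) h) hminor_le
    _ = wedgeDeg w f + wdeg w h := add_comm _ _

end Kuroda
namespace Kuroda

variable {k : Type*} [Field k] [CharZero k] {n : ℕ}
variable {Γ : Type*} [AddCommGroup Γ] [LinearOrder Γ] [IsOrderedAddMonoid Γ]

lemma wedgeDeg_snoc_eval {r : ℕ} (w : Fin n → Γ) (f : Fin r → MvPolynomial (Fin n) k)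
    (A : Subalgebra k (MvPolynomial (Fin n) k))
    (hA : A = Algebra.adjoin k (Set.range f)) (g : MvPolynomial (Fin n) k)
    {Θ : Polynomial (MvPolynomial (Fin n) k)} (hΘA : ∀ i, Θ.coeff i ∈ A) :
    wedgeDeg w (Fin.snoc f (Θ.eval g))
      = wdeg w ((Polynomial.derivative Θ).eval g) + wedgeDeg w (Fin.snoc f g) := by
  rw [wedgeDeg, wedgeDeg, add_sup_eq]
  apply Finset.sup_congr rfl
  intro e _
  rw [det_snoc_eval f A hA g hΘA e, wdeg_mul, add_assoc]

lemma step_ineq {r : ℕ} (w : Fin n → Γ) (f : Fin r → MvPolynomial (Fin n) k)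
    (A : Subalgebra k (MvPolynomial (Fin n) k))
    (hA : A = Algebra.adjoin k (Set.range f)) (g : MvPolynomial (Fin n) k)
    {Θ : Polynomial (MvPolynomial (Fin n) k)} (hΘA : ∀ i, Θ.coeff i ∈ A)
    {dω dg : Γ} (hdω : wedgeDeg w f = (dω : WithBot Γ))
    {M : WithBot Γ} (hM : M = wedgeDeg w (Fin.snoc f g) + ((-dω - dg : Γ) : WithBot Γ)) :
    wdeg w ((Polynomial.derivative Θ).eval g) + M + ((dg : Γ) : WithBot Γ)
      ≤ wdeg w (Θ.eval g) := by
  have h1 : wdeg w ((Polynomial.derivative Θ).eval g) + wedgeDeg w (Fin.snoc f g)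
      ≤ ((dω : Γ) : WithBot Γ) + wdeg w (Θ.eval g) := by
    rw [← wedgeDeg_snoc_eval w f A hA g hΘA, ← hdω]
    exact le_trans (wedgeDeg_snoc_le w f (Θ.eval g)) le_rfl
  have h2 : wdeg w ((Polynomial.derivative Θ).eval g) + M + ((dg : Γ) : WithBot Γ)
      = (wdeg w ((Polynomial.derivative Θ).eval g) + wedgeDeg w (Fin.snoc f g))
        + ((-dω : Γ) : WithBot Γ) := by
    rw [hM, add_assoc, add_assoc, add_assoc]
    congr 1
    rw [← WithBot.coe_add]
    congr 1
    abel
  rw [h2]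
  calc (wdeg w ((Polynomial.derivative Θ).eval g) + wedgeDeg w (Fin.snoc f g))
        + ((-dω : Γ) : WithBot Γ)
      ≤ (((dω : Γ) : WithBot Γ) + wdeg w (Θ.eval g)) + ((-dω : Γ) : WithBot Γ) :=
        add_le_add_left h1 _
    _ = wdeg w (Θ.eval g) := by
        rw [add_comm ((dω : Γ) : WithBot Γ) _, add_assoc, ← WithBot.coe_add,
          add_neg_cancel, WithBot.coe_zero, add_zero]

lemma M_nonpos {r : ℕ} (w : Fin n → Γ) (f : Fin r → MvPolynomial (Fin n) k)
    (g : MvPolynomial (Fin n) k)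
    {dω dg : Γ} (hdω : wedgeDeg w f = (dω : WithBot Γ))
    (hdg : wdeg w g = (dg : WithBot Γ))
    {M : WithBot Γ} (hM : M = wedgeDeg w (Fin.snoc f g) + ((-dω - dg : Γ) : WithBot Γ)) :
    M ≤ 0 := by
  rw [hM]
  calc wedgeDeg w (Fin.snoc f g) + ((-dω - dg : Γ) : WithBot Γ)
      ≤ (wedgeDeg w f + wdeg w g) + ((-dω - dg : Γ) : WithBot Γ) :=
        add_le_add_left (wedgeDeg_snoc_le w f g) _
    _ = 0 := by
        rw [hdω, hdg, ← WithBot.coe_add, ← WithBot.coe_add, ← WithBot.coe_zero]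
        congr 1
        abel

end Kuroda
namespace Kuroda

variable {k : Type*} [Field k] [CharZero k] {n : ℕ}
variable {Γ : Type*} [AddCommGroup Γ] [LinearOrder Γ] [IsOrderedAddMonoid Γ]

lemma minpoly_pow_dvd {F : Subfield (FractionRing (MvPolynomial (Fin n) k))}
    {x : FractionRing (MvPolynomial (Fin n) k)} (hx : IsIntegral F x) (m : ℕ) :
    ∀ q : Polynomial F, q ≠ 0 →
      m ≤ Polynomial.rootMultiplicity x
        (q.map (algebraMap F (FractionRing (MvPolynomial (Fin n) k)))) →
      minpoly F x ^ m ∣ q := by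
  have hinj : Function.Injective
      (algebraMap F (FractionRing (MvPolynomial (Fin n) k))) :=
    RingHom.injective _
  induction m with
  | zero => intro q _ _; rw [pow_zero]; exact one_dvd q
  | succ m ih =>
    intro q hq hm
    have hmapne : q.map (algebraMap F (FractionRing (MvPolynomial (Fin n) k))) ≠ 0 :=
      (Polynomial.map_ne_zero_iff hinj).mpr hq
    have hroot : (q.map (algebraMap F (FractionRing (MvPolynomial (Fin n) k)))).IsRoot x :=
      (Polynomial.rootMultiplicity_pos hmapne).mp (lt_of_lt_of_le (Nat.succ_pos m) hm)
    have haev : Polynomial.aeval x q = 0 := by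
      rw [Polynomial.aeval_def, ← Polynomial.eval_map]
      exact hroot
    obtain ⟨q1, rfl⟩ := minpoly.dvd F x haev
    have hπ0 : minpoly F x ≠ 0 := minpoly.ne_zero hx
    have hq1 : q1 ≠ 0 := fun h => hq (by rw [h, mul_zero])
    have hπm0 : (minpoly F x).map
        (algebraMap F (FractionRing (MvPolynomial (Fin n) k))) ≠ 0 :=
      (Polynomial.map_ne_zero_iff hinj).mpr hπ0
    have hq1m0 : q1.map (algebraMap F (FractionRing (MvPolynomial (Fin n) k))) ≠ 0 :=
      (Polynomial.map_ne_zero_iff hinj).mpr hq1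
    have hrmπ : Polynomial.rootMultiplicity x ((minpoly F x).map
        (algebraMap F (FractionRing (MvPolynomial (Fin n) k)))) = 1 := by
      have hrootπ : ((minpoly F x).map
          (algebraMap F (FractionRing (MvPolynomial (Fin n) k)))).IsRoot x := by
        rw [Polynomial.IsRoot, Polynomial.eval_map, ← Polynomial.aeval_def, minpoly.aeval]
      have hge := (Polynomial.rootMultiplicity_pos hπm0).mpr hrootπ
      have hsq : Squarefree ((minpoly F x).map
          (algebraMap F (FractionRing (MvPolynomial (Fin n) k)))) :=
        ((minpoly.irreducible hx).separable.map).squarefree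
      have hle : Polynomial.rootMultiplicity x ((minpoly F x).map
          (algebraMap F (FractionRing (MvPolynomial (Fin n) k)))) ≤ 1 := by
        by_contra hgt
        push_neg at hgt
        have hdvd2 : (Polynomial.X - Polynomial.C x) ^ 2 ∣
            (minpoly F x).map (algebraMap F (FractionRing (MvPolynomial (Fin n) k))) :=
          dvd_trans (pow_dvd_pow _ hgt) (Polynomial.pow_rootMultiplicity_dvd _ x)
        rw [sq] at hdvd2
        exact Polynomial.not_isUnit_X_sub_C x (hsq _ hdvd2)
      omega
    rw [Polynomial.map_mul,
      Polynomial.rootMultiplicity_mul (mul_ne_zero hπm0 hq1m0), hrmπ] at hm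
    have hm1 : m ≤ Polynomial.rootMultiplicity x
        (q1.map (algebraMap F (FractionRing (MvPolynomial (Fin n) k)))) := by omega
    rw [pow_succ']
    exact mul_dvd_mul_left (minpoly F x) (ih q1 hq1 hm1)

lemma coeff_pLform_mem {w : Fin n → Γ} {g : MvPolynomial (Fin n) k}
    {A : Subalgebra k (MvPolynomial (Fin n) k)}
    {Θ : Polynomial (MvPolynomial (Fin n) k)} (hΘA : ∀ i, Θ.coeff i ∈ A) (i : ℕ) :
    (pLform w g Θ).coeff i ∈ initAlg w A := by
  rw [coeff_pLform]
  split_ifs with hcond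
  · apply Algebra.subset_adjoin
    exact ⟨Θ.coeff i, ⟨hΘA i, Polynomial.mem_support_iff.mp hcond.1⟩, rfl⟩
  · exact zero_mem _

lemma natDegree_bound_of_rootMult {w : Fin n → Γ}
    {A : Subalgebra k (MvPolynomial (Fin n) k)} {ghat : FractionRing (MvPolynomial (Fin n) k)}
    (halg : IsAlgebraic (KW w A) ghat)
    {Ψ : Polynomial (MvPolynomial (Fin n) k)} (hΨ : Ψ ≠ 0)
    (hcoeff : ∀ i, Ψ.coeff i ∈ initAlg w A) (m : ℕ)
    (hm : m ≤ Polynomial.rootMultiplicity ghat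
      (Ψ.map (algebraMap (MvPolynomial (Fin n) k) (FractionRing (MvPolynomial (Fin n) k))))) :
    m * (minpoly (KW w A) ghat).natDegree ≤ Ψ.natDegree := by
  set F : Subfield (FractionRing (MvPolynomial (Fin n) k)) := KW w A with hF
  set ι := algebraMap (MvPolynomial (Fin n) k) (FractionRing (MvPolynomial (Fin n) k)) with hι
  have hx : IsIntegral F ghat := halg.isIntegral
  have hmem : ∀ i, ι (Ψ.coeff i) ∈ F := by
    intro i
    exact Subfield.subset_closure (Set.mem_image_of_mem ι (hcoeff i))
  set q : Polynomial F :=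
    ∑ i ∈ Ψ.support, Polynomial.C (⟨ι (Ψ.coeff i), hmem i⟩ : F) * Polynomial.X ^ i with hqdef
  have hmapq : q.map (algebraMap F (FractionRing (MvPolynomial (Fin n) k))) = Ψ.map ι := by
    rw [hqdef, Polynomial.map_sum]
    conv_rhs => rw [Ψ.as_sum_support]
    rw [Polynomial.map_sum]
    apply Finset.sum_congr rfl
    intro i _
    rw [Polynomial.map_mul, Polynomial.map_pow, Polynomial.map_C, Polynomial.map_X,
      ← Polynomial.C_mul_X_pow_eq_monomial, Polynomial.map_mul, Polynomial.map_pow,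
      Polynomial.map_C, Polynomial.map_X]
    rfl
  have hinj : Function.Injective ι := IsFractionRing.injective _ _
  have hmapΨ : Ψ.map ι ≠ 0 := (Polynomial.map_ne_zero_iff hinj).mpr hΨ
  have hq0 : q ≠ 0 := by
    intro h0
    rw [h0, Polynomial.map_zero] at hmapq
    exact hmapΨ hmapq.symm
  have hdvd : minpoly F ghat ^ m ∣ q := by
    apply minpoly_pow_dvd hx m q hq0
    rw [hmapq]
    exact hm
  have h1 : ((minpoly F ghat) ^ m).natDegree ≤ q.natDegree :=
    Polynomial.natDegree_le_of_dvd hdvd hq0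
  rw [Polynomial.natDegree_pow] at h1
  have h2 : q.natDegree = Ψ.natDegree := by
    have e1 := Polynomial.natDegree_map_eq_of_injective
      (RingHom.injective (algebraMap F (FractionRing (MvPolynomial (Fin n) k)))) q
    have e2 := Polynomial.natDegree_map_eq_of_injective hinj Ψ
    rw [hmapq] at e1
    rw [← e1, e2]
  rw [h2] at h1
  exact h1

lemma map_eval_zero {x : MvPolynomial (Fin n) k}
    {Ψ : Polynomial (MvPolynomial (Fin n) k)} (hroot : Ψ.eval x = 0) :
    (Ψ.map (algebraMap (MvPolynomial (Fin n) k)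
      (FractionRing (MvPolynomial (Fin n) k)))).IsRoot
      (algebraMap (MvPolynomial (Fin n) k) (FractionRing (MvPolynomial (Fin n) k)) x) := by
  rw [Polynomial.IsRoot, Polynomial.eval_map, Polynomial.eval₂_hom, hroot, map_zero]

end Kuroda
namespace Kuroda

variable {k : Type*} [Field k] [CharZero k] {n : ℕ}
variable {Γ : Type*} [AddCommGroup Γ] [LinearOrder Γ] [IsOrderedAddMonoid Γ]

lemma deriv_coeff_mem {A : Subalgebra k (MvPolynomial (Fin n) k)}
    {Θ : Polynomial (MvPolynomial (Fin n) k)} (hΘA : ∀ i, Θ.coeff i ∈ A) :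
    ∀ i, (Polynomial.derivative Θ).coeff i ∈ A := by
  intro i
  rw [coeff_derivative_eq]
  exact mul_mem (hΘA (i + 1)) (natCast_mem A (i + 1))

lemma pLform_natDegree_pos {w : Fin n → Γ} {g : MvPolynomial (Fin n) k}
    {Θ : Polynomial (MvPolynomial (Fin n) k)} (hΘ : Θ ≠ 0)
    (hevalz : (pLform w g Θ).eval (lform w g) = 0) :
    1 ≤ (pLform w g Θ).natDegree := by
  by_contra hlt
  push_neg at hlt
  have h0 : (pLform w g Θ).natDegree = 0 := by omega
  have hC := Polynomial.eq_C_of_natDegree_eq_zero h0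
  rw [hC, Polynomial.eval_C] at hevalz
  apply pLform_ne_zero (w := w) (g := g) hΘ
  rw [hC, hevalz, map_zero]

lemma main_induction {r : ℕ} (w : Fin n → Γ) (f : Fin r → MvPolynomial (Fin n) k)
    (A : Subalgebra k (MvPolynomial (Fin n) k)) (hA : A = Algebra.adjoin k (Set.range f))
    (g : MvPolynomial (Fin n) k) (hg : g ≠ 0)
    {dω dg : Γ} (hdω : wedgeDeg w f = (dω : WithBot Γ)) (hdg : wdeg w g = (dg : WithBot Γ))
    {M : WithBot Γ} (hM : M = wedgeDeg w (Fin.snoc f g) + ((-dω - dg : Γ) : WithBot Γ)) :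
    ∀ D : ℕ, ∀ Θ : Polynomial (MvPolynomial (Fin n) k), Θ.natDegree ≤ D → Θ ≠ 0 →
      (∀ i, Θ.coeff i ∈ A) →
      ∃ m : ℕ,
        m ≤ Polynomial.rootMultiplicity
          (algebraMap (MvPolynomial (Fin n) k)
            (FractionRing (MvPolynomial (Fin n) k)) (lform w g))
          ((pLform w g Θ).map (algebraMap (MvPolynomial (Fin n) k)
            (FractionRing (MvPolynomial (Fin n) k)))) ∧
        wdegG w g Θ + m • M ≤ wdeg w (Θ.eval g) := by
  intro D
  induction D with
  | zero =>
    intro Θ hD hΘ hΘA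
    by_cases hcase : wdeg w (Θ.eval g) = wdegG w g Θ
    · exact ⟨0, Nat.zero_le _, by rw [zero_nsmul, add_zero, hcase]⟩
    · exfalso
      have hlt : wdeg w (Θ.eval g) < wdegG w g Θ :=
        lt_of_le_of_ne (wdeg_eval_le w g Θ) hcase
      have hevalz := pLform_eval_eq_zero hg hΘ hlt
      have h1 := pLform_natDegree_pos hΘ hevalz
      have h2 := natDegree_pLform_le (w := w) (g := g) Θ
      omega
  | succ D ih =>
    intro Θ hD hΘ hΘA
    by_cases hcase : wdeg w (Θ.eval g) = wdegG w g Θ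
    · exact ⟨0, Nat.zero_le _, by rw [zero_nsmul, add_zero, hcase]⟩
    · have hlt : wdeg w (Θ.eval g) < wdegG w g Θ :=
        lt_of_le_of_ne (wdeg_eval_le w g Θ) hcase
      have hevalz := pLform_eval_eq_zero hg hΘ hlt
      have hΨne := pLform_ne_zero (w := w) (g := g) hΘ
      have hΨpos := pLform_natDegree_pos hΘ hevalz
      obtain ⟨hd_mem, hd_eq⟩ := natDegree_pLform_mem (w := w) (g := g) hΘ
      have hS1 : ∃ i0, (i0 ∈ Θ.support ∧
          wdeg w (Θ.coeff i0 * g ^ i0) = wdegG w g Θ) ∧ 1 ≤ i0 :=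
        ⟨(pLform w g Θ).natDegree, ⟨hd_mem, hd_eq⟩, hΨpos⟩
      have hplderiv := derivative_pLform hg hdg hS1
      have hwdegG' := derivative_wdegG hg hdg hS1
      have hderivΨ : Polynomial.derivative (pLform w g Θ) ≠ 0 := by
        intro h0
        have hc := congrArg
          (fun p : Polynomial (MvPolynomial (Fin n) k) =>
            p.coeff ((pLform w g Θ).natDegree - 1)) h0
        simp only [Polynomial.coeff_zero] at hc
        rw [coeff_derivative_eq, Nat.sub_add_cancel hΨpos] at hc
        exact mul_ne_zero (Polynomial.leadingCoeff_ne_zero.mpr hΨne)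
          (natCast_ne_zero' (by omega)) hc
      have hΘ'ne : Polynomial.derivative Θ ≠ 0 := by
        intro h0
        rw [h0, pLform_zero] at hplderiv
        exact hderivΨ hplderiv.symm
      have hΘdpos : Θ.natDegree ≠ 0 := by
        have := natDegree_pLform_le (w := w) (g := g) Θ
        omega
      have hDle : (Polynomial.derivative Θ).natDegree ≤ D := by
        have := Polynomial.natDegree_derivative_lt hΘdpos
        omega
      obtain ⟨m', hrm', hineq'⟩ := ih (Polynomial.derivative Θ) hDle hΘ'ne
        (deriv_coeff_mem hΘA)
      refine ⟨m' + 1, ?_, ?_⟩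
      · -- root multiplicity step
        have hinj : Function.Injective (algebraMap (MvPolynomial (Fin n) k)
            (FractionRing (MvPolynomial (Fin n) k))) := IsFractionRing.injective _ _
        have hmapne : (pLform w g Θ).map (algebraMap (MvPolynomial (Fin n) k)
            (FractionRing (MvPolynomial (Fin n) k))) ≠ 0 :=
          (Polynomial.map_ne_zero_iff hinj).mpr hΨne
        have hroot := map_eval_zero (x := lform w g) hevalz
        have hrmderiv := Polynomial.derivative_rootMultiplicity_of_root hroot
        have hrmpos := (Polynomial.rootMultiplicity_pos hmapne).mpr hroot
        have hmapd : (pLform w g (Polynomial.derivative Θ)).map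
              (algebraMap (MvPolynomial (Fin n) k)
                (FractionRing (MvPolynomial (Fin n) k)))
            = Polynomial.derivative ((pLform w g Θ).map
              (algebraMap (MvPolynomial (Fin n) k)
                (FractionRing (MvPolynomial (Fin n) k)))) := by
          rw [hplderiv, Polynomial.derivative_map]
        rw [hmapd, hrmderiv] at hrm'
        omega
      · -- degree inequality step
        have hdgdg : ((-dg : Γ) : WithBot Γ) + ((dg : Γ) : WithBot Γ) = 0 := by
          rw [← WithBot.coe_add, neg_add_cancel, WithBot.coe_zero]
        have harr : wdegG w g Θ + (m' + 1) • M
            = ((wdegG w g (Polynomial.derivative Θ) + m' • M) + M)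
              + ((dg : Γ) : WithBot Γ) := by
          rw [hwdegG', succ_nsmul]
          calc wdegG w g Θ + (m' • M + M)
              = (wdegG w g Θ + (m' • M + M))
                + (((-dg : Γ) : WithBot Γ) + ((dg : Γ) : WithBot Γ)) := by
                rw [hdgdg, add_zero]
            _ = (((wdegG w g Θ + ((-dg : Γ) : WithBot Γ)) + m' • M) + M)
                + ((dg : Γ) : WithBot Γ) := by abel
        rw [harr]
        calc ((wdegG w g (Polynomial.derivative Θ) + m' • M) + M) + ((dg : Γ) : WithBot Γ)
            ≤ (wdeg w ((Polynomial.derivative Θ).eval g) + M) + ((dg : Γ) : WithBot Γ) :=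
              add_le_add_left (add_le_add_left hineq' M) _
          _ ≤ wdeg w (Θ.eval g) := step_ineq w f A hA g hΘA hdω hM

end Kuroda

open Kuroda in
/-- Theorem (i): if `f_1, …, f_r` are algebraically independent, `A = k[f_1,…,f_r]`,
`ω = df_1 ∧ ⋯ ∧ df_r`, `deg_w h ≥ 0` for all nonzero `h ∈ A`, and `g^w` is algebraic
over `K^w`, then with `N = [K^w(g^w):K^w]`, `a = deg_y Φ / N`, `b = deg_y Φ % N` and
`M = deg_w(ω ∧ dg) − deg_w ω − deg_w g`:
`deg_w Φ(g) ≥ (deg_y Φ)·deg_w g + a·M = a·(N·deg_w g + M) + b·deg_w g`. -/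
theorem stmt7 (r : ℕ) (hr : 0 < r) (f : Fin r → MvPolynomial (Fin n) k)
    (hf : AlgebraicIndependent k f)
    (g : MvPolynomial (Fin n) k) (hg : g ≠ 0) (w : Fin n → Γ)
    (A : Subalgebra k (MvPolynomial (Fin n) k)) (hA : A = Algebra.adjoin k (Set.range f))
    (hw : ∀ h ∈ A, h ≠ 0 → ((0 : Γ) : WithBot Γ) ≤ wdeg w h)
    (halg : IsAlgebraic (KW w A)
      (algebraMap (MvPolynomial (Fin n) k) (FractionRing (MvPolynomial (Fin n) k))
        (lform w g)))
    (Φ : Polynomial (MvPolynomial (Fin n) k)) (hΦ : Φ ≠ 0) (hΦA : ∀ i, Φ.coeff i ∈ A)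
    (dω dg : Γ) (hdω : wedgeDeg w f = (dω : WithBot Γ)) (hdg : wdeg w g = (dg : WithBot Γ))
    (N : ℕ)
    (hN : N = Module.finrank (KW w A)
      (IntermediateField.adjoin (KW w A)
        {algebraMap (MvPolynomial (Fin n) k) (FractionRing (MvPolynomial (Fin n) k))
          (lform w g)}))
    (M : WithBot Γ)
    (hM : M = wedgeDeg w (Fin.snoc f g) + ((-dω - dg : Γ) : WithBot Γ)) :
    wdeg w (Φ.eval g) ≥ Φ.natDegree • wdeg w g + (Φ.natDegree / N) • M ∧
    Φ.natDegree • wdeg w g + (Φ.natDegree / N) • M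
      = (Φ.natDegree / N) • (N • wdeg w g + M) + (Φ.natDegree % N) • wdeg w g := by
  have hNdeg : N = (minpoly (KW w A)
      (algebraMap (MvPolynomial (Fin n) k) (FractionRing (MvPolynomial (Fin n) k))
        (lform w g))).natDegree := by
    rw [hN]
    exact IntermediateField.adjoin.finrank halg.isIntegral
  have hNpos : 0 < N := by
    rw [hNdeg]; exact minpoly.natDegree_pos halg.isIntegral
  obtain ⟨m, hrm, hineq⟩ :=
    main_induction w f A hA g hg hdω hdg hM Φ.natDegree Φ le_rfl hΦ hΦA
  have hmN : m * N ≤ (pLform w g Φ).natDegree := by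
    rw [hNdeg]
    exact natDegree_bound_of_rootMult halg (pLform_ne_zero hΦ) (coeff_pLform_mem hΦA) m hrm
  have hmle : m ≤ Φ.natDegree / N :=
    (Nat.le_div_iff_mul_le hNpos).mpr (le_trans hmN (natDegree_pLform_le Φ))
  have hMle : M ≤ 0 := M_nonpos w f g hdω hdg hM
  have hd_supp : Φ.natDegree ∈ Φ.support := Polynomial.natDegree_mem_support_of_nonzero hΦ
  have hcoeffd : Φ.coeff Φ.natDegree ≠ 0 := Polynomial.mem_support_iff.mp hd_supp
  have hw0 : (0 : WithBot Γ) ≤ wdeg w (Φ.coeff Φ.natDegree) := by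
    have := hw _ (hΦA Φ.natDegree) hcoeffd
    rwa [WithBot.coe_zero] at this
  have hlow : Φ.natDegree • wdeg w g ≤ wdegG w g Φ := by
    calc Φ.natDegree • wdeg w g = 0 + Φ.natDegree • wdeg w g := (zero_add _).symm
      _ ≤ wdeg w (Φ.coeff Φ.natDegree) + Φ.natDegree • wdeg w g :=
          add_le_add_left hw0 _
      _ = wdeg w (Φ.coeff Φ.natDegree * g ^ Φ.natDegree) := by rw [wdeg_mul, wdeg_pow]
      _ ≤ wdegG w g Φ := le_wdegG hd_supp
  constructor
  · show Φ.natDegree • wdeg w g + (Φ.natDegree / N) • M ≤ wdeg w (Φ.eval g)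
    calc Φ.natDegree • wdeg w g + (Φ.natDegree / N) • M
        ≤ wdegG w g Φ + m • M := add_le_add hlow (nsmul_le_nsmul_of_nonpos hMle hmle)
      _ ≤ wdeg w (Φ.eval g) := hineq
  · have hsmul : (Φ.natDegree / N) * N + Φ.natDegree % N = Φ.natDegree := by
      rw [mul_comm]; exact Nat.div_add_mod Φ.natDegree N
    calc Φ.natDegree • wdeg w g + (Φ.natDegree / N) • M
        = ((Φ.natDegree / N) * N + Φ.natDegree % N) • wdeg w g
          + (Φ.natDegree / N) • M := by rw [hsmul]
      _ = (((Φ.natDegree / N) * N) • wdeg w g + (Φ.natDegree % N) • wdeg w g)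
          + (Φ.natDegree / N) • M := by rw [add_nsmul]
      _ = ((Φ.natDegree / N) • (N • wdeg w g) + (Φ.natDegree / N) • M)
          + (Φ.natDegree % N) • wdeg w g := by rw [mul_comm (Φ.natDegree / N) N, mul_nsmul]; abel
      _ = (Φ.natDegree / N) • (N • wdeg w g + M)
          + (Φ.natDegree % N) • wdeg w g := by rw [nsmul_add]
end

section
/- Let f_1, …, f_r (r ≥ 1) and g be nonzero polynomials in k[x] with f_1, …, f_r algebraically independent over k; set A = k[f_1,…,f_r], ω = df_1 ∧ ⋯ ∧ df_r, and let w ∈ Γ^n be such that deg_w h ≥ 0 for every nonzero h ∈ A, and deg_w g ≥ 0. Set M = deg_w(ω ∧ dg) − deg_w ω − deg_w g. If the ideal I(A^w, g^w) of A^w[y] is principal with generator P(A^w, g^w), then for every nonzero Φ ∈ A[y]: deg_w Φ(g) ≥ m_w^g(Φ) · ( deg_w^g P(A^w, g^w) + M ). -/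
open MvPolynomial Polynomial

set_option synthInstance.maxHeartbeats 1000000
set_option maxHeartbeats 1000000

variable {k : Type*} [Field k] [CharZero k] {n : ℕ}
variable {Γ : Type*} [AddCommGroup Γ] [LinearOrder Γ] [IsOrderedAddMonoid Γ]

/-! ### Auxiliary development -/
set_option linter.unusedSectionVars false

section AuxBasic

variable {w : Fin n → Γ}

/-- Weight of an exponent vector. -/
def nu (w : Fin n → Γ) (d : Fin n →₀ ℕ) : Γ := ∑ i, d i • w i

lemma nu_add (a b : Fin n →₀ ℕ) : nu w (a + b) = nu w a + nu w b := by
  simp [nu, Finsupp.add_apply, add_nsmul, Finset.sum_add_distrib]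

lemma nu_zero : nu w (0 : Fin n →₀ ℕ) = 0 := by simp [nu]

lemma wdeg_def (f : MvPolynomial (Fin n) k) :
    wdeg w f = f.support.sup fun d => ((nu w d : Γ) : WithBot Γ) := rfl

@[simp] lemma wdeg_zero : wdeg w (0 : MvPolynomial (Fin n) k) = ⊥ := by
  simp [wdeg_def]

lemma wdeg_eq_bot_iff {f : MvPolynomial (Fin n) k} : wdeg w f = ⊥ ↔ f = 0 := by
  rw [wdeg_def, Finset.sup_eq_bot_iff]
  constructor
  · intro h
    by_contra hf
    obtain ⟨d, hd⟩ := MvPolynomial.ne_zero_iff.mp hf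
    exact WithBot.coe_ne_bot (h d (MvPolynomial.mem_support_iff.mpr hd))
  · rintro rfl; simp

lemma wdeg_ne_bot {f : MvPolynomial (Fin n) k} (hf : f ≠ 0) : wdeg w f ≠ ⊥ :=
  fun h => hf (wdeg_eq_bot_iff.mp h)

lemma le_wdeg {f : MvPolynomial (Fin n) k} {d : Fin n →₀ ℕ} (hd : d ∈ f.support) :
    ((nu w d : Γ) : WithBot Γ) ≤ wdeg w f :=
  Finset.le_sup (f := fun d => ((nu w d : Γ) : WithBot Γ)) hd

lemma exists_nu_eq_wdeg {f : MvPolynomial (Fin n) k} (hf : f ≠ 0) :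
    ∃ d ∈ f.support, wdeg w f = ((nu w d : Γ) : WithBot Γ) :=
  Finset.exists_mem_eq_sup _ (MvPolynomial.support_nonempty.mpr hf) _

lemma wdeg_add_le (f g : MvPolynomial (Fin n) k) :
    wdeg w (f + g) ≤ max (wdeg w f) (wdeg w g) := by
  rw [wdeg_def]
  apply Finset.sup_le
  intro d hd
  rcases Finset.mem_union.mp (MvPolynomial.support_add hd) with h | h
  · exact le_max_of_le_left (le_wdeg h)
  · exact le_max_of_le_right (le_wdeg h)

lemma wdeg_sum_le {ι : Type*} (s : Finset ι) (F : ι → MvPolynomial (Fin n) k) :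
    wdeg w (∑ i ∈ s, F i) ≤ s.sup fun i => wdeg w (F i) := by
  classical
  induction s using Finset.cons_induction with
  | empty => simp
  | cons a s ha ih =>
    rw [Finset.sum_cons, Finset.sup_cons]
    exact (wdeg_add_le _ _).trans (max_le_max le_rfl ih)

lemma wdeg_mul_le (f g : MvPolynomial (Fin n) k) :
    wdeg w (f * g) ≤ wdeg w f + wdeg w g := by
  rw [wdeg_def]
  apply Finset.sup_le
  intro d hd
  obtain ⟨a, ha, b, hb, rfl⟩ := Finset.mem_add.mp (MvPolynomial.support_mul _ _ hd)
  rw [nu_add, WithBot.coe_add]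
  exact add_le_add (le_wdeg ha) (le_wdeg hb)

lemma wdeg_of_hom {f : MvPolynomial (Fin n) k} {γ : Γ} (hf : f ≠ 0)
    (h : ∀ d ∈ f.support, nu w d = γ) : wdeg w f = (γ : WithBot Γ) := by
  apply le_antisymm
  · rw [wdeg_def]
    apply Finset.sup_le
    intro d hd
    rw [h d hd]
  · obtain ⟨d, hd⟩ := MvPolynomial.support_nonempty.mpr hf
    rw [← h d hd]
    exact le_wdeg hd

lemma hom_mul {f g : MvPolynomial (Fin n) k} {γ δ : Γ}
    (hfh : ∀ d ∈ f.support, nu w d = γ) (hgh : ∀ d ∈ g.support, nu w d = δ) :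
    ∀ d ∈ (f * g).support, nu w d = γ + δ := by
  intro d hd
  obtain ⟨a, ha, b, hb, rfl⟩ := Finset.mem_add.mp (MvPolynomial.support_mul _ _ hd)
  rw [nu_add, hfh a ha, hgh b hb]

lemma coeff_lform (f : MvPolynomial (Fin n) k) (d : Fin n →₀ ℕ) :
    MvPolynomial.coeff d (lform w f) =
      if ((nu w d : Γ) : WithBot Γ) = wdeg w f then MvPolynomial.coeff d f else 0 := by
  classical
  rw [lform]
  rw [MvPolynomial.coeff_sum]
  simp only [MvPolynomial.coeff_monomial]
  rw [Finset.sum_ite_eq']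
  simp only [Finset.mem_filter, MvPolynomial.mem_support_iff, nu]
  by_cases h2 : MvPolynomial.coeff d f = 0
  · simp [h2]
  · simp [h2]

lemma lform_hom {f : MvPolynomial (Fin n) k} {γ : Γ} (hγ : wdeg w f = (γ : WithBot Γ)) :
    ∀ d ∈ (lform w f).support, nu w d = γ := by
  intro d hd
  have := MvPolynomial.mem_support_iff.mp hd
  rw [coeff_lform] at this
  by_cases h : ((nu w d : Γ) : WithBot Γ) = wdeg w f
  · rw [hγ] at h; exact_mod_cast h
  · simp [h] at this

lemma lform_ne_zero {f : MvPolynomial (Fin n) k} (hf : f ≠ 0) : lform w f ≠ 0 := by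
  obtain ⟨d, hd, hdeq⟩ := exists_nu_eq_wdeg (w := w) hf
  intro h
  have : MvPolynomial.coeff d (lform w f) = MvPolynomial.coeff d f := by
    rw [coeff_lform, if_pos hdeq.symm]
  rw [h] at this
  exact MvPolynomial.mem_support_iff.mp hd this.symm

lemma wdeg_lform {f : MvPolynomial (Fin n) k} (hf : f ≠ 0) :
    wdeg w (lform w f) = wdeg w f := by
  obtain ⟨γ, hγ⟩ := WithBot.ne_bot_iff_exists.mp (wdeg_ne_bot (w := w) hf)
  rw [← hγ]
  exact wdeg_of_hom (lform_ne_zero hf) (lform_hom hγ.symm)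

lemma wdeg_sub_lform_lt {f : MvPolynomial (Fin n) k} (hf : f ≠ 0) :
    wdeg w (f - lform w f) < wdeg w f := by
  obtain ⟨γ, hγ⟩ := WithBot.ne_bot_iff_exists.mp (wdeg_ne_bot (w := w) hf)
  rw [← hγ]
  rcases eq_or_ne (f - lform w f) 0 with h | h
  · rw [h, wdeg_zero]; exact WithBot.bot_lt_coe γ
  rw [wdeg_def]
  rw [Finset.sup_lt_iff (WithBot.bot_lt_coe γ)]
  intro d hd
  have hcd := MvPolynomial.mem_support_iff.mp hd
  rw [MvPolynomial.coeff_sub, coeff_lform] at hcd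
  by_cases hcase : ((nu w d : Γ) : WithBot Γ) = wdeg w f
  · simp [hcase] at hcd
  · have hdf : d ∈ f.support := by
      rw [if_neg hcase, sub_zero] at hcd
      exact MvPolynomial.mem_support_iff.mpr hcd
    have := le_wdeg (w := w) hdf
    rw [← hγ] at hcase
    rw [← hγ] at this
    exact lt_of_le_of_ne this hcase

lemma wb_add_lt_right {a c : Γ} {b : WithBot Γ} (h : b < (c : WithBot Γ)) :
    (a : WithBot Γ) + b < ((a + c : Γ) : WithBot Γ) := by
  cases b with
  | bot => rw [WithBot.add_bot]; exact WithBot.bot_lt_coe _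
  | coe b =>
    rw [← WithBot.coe_add, WithBot.coe_lt_coe]
    exact add_lt_add_right (WithBot.coe_lt_coe.mp h) a

lemma wdeg_add_right_of_lt {f s : MvPolynomial (Fin n) k} (h : wdeg w s < wdeg w f) :
    wdeg w (f + s) = wdeg w f := by
  have hf : f ≠ 0 := by
    rintro rfl
    rw [wdeg_zero] at h
    exact not_lt_bot h
  obtain ⟨d, hd, hdeq⟩ := exists_nu_eq_wdeg (w := w) hf
  apply le_antisymm ((wdeg_add_le f s).trans (max_le le_rfl h.le))
  have hs : MvPolynomial.coeff d s = 0 := by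
    by_contra h0
    have h1 := le_wdeg (w := w) (MvPolynomial.mem_support_iff.mpr h0)
    rw [← hdeq] at h1
    exact absurd (lt_of_le_of_lt h1 h) (lt_irrefl _)
  have hne : MvPolynomial.coeff d (f + s) ≠ 0 := by
    rw [MvPolynomial.coeff_add, hs, add_zero]
    exact MvPolynomial.mem_support_iff.mp hd
  calc wdeg w f = ((nu w d : Γ) : WithBot Γ) := hdeq
  _ ≤ wdeg w (f + s) := le_wdeg (MvPolynomial.mem_support_iff.mpr hne)

lemma wdeg_mul (f g : MvPolynomial (Fin n) k) :
    wdeg w (f * g) = wdeg w f + wdeg w g := by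
  rcases eq_or_ne f 0 with rfl | hf
  · simp
  rcases eq_or_ne g 0 with rfl | hg
  · simp
  obtain ⟨γf, hγf⟩ := WithBot.ne_bot_iff_exists.mp (wdeg_ne_bot (w := w) hf)
  obtain ⟨γg, hγg⟩ := WithBot.ne_bot_iff_exists.mp (wdeg_ne_bot (w := w) hg)
  set F := lform w f with hF
  set G := lform w g with hG
  have h1 : f * g = F * G + (F * (g - G) + (f - F) * g) := by ring
  have hFG : F * G ≠ 0 := mul_ne_zero (lform_ne_zero hf) (lform_ne_zero hg)
  have hFGdeg : wdeg w (F * G) = ((γf + γg : Γ) : WithBot Γ) :=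
    wdeg_of_hom hFG (hom_mul (lform_hom hγf.symm) (lform_hom hγg.symm))
  have hrest : wdeg w (F * (g - G) + (f - F) * g) < ((γf + γg : Γ) : WithBot Γ) := by
    apply lt_of_le_of_lt (wdeg_add_le _ _)
    apply max_lt
    · apply lt_of_le_of_lt (wdeg_mul_le _ _)
      have h2 : wdeg w (g - G) < (γg : WithBot Γ) := hγg ▸ wdeg_sub_lform_lt hg
      calc wdeg w F + wdeg w (g - G) ≤ (γf : WithBot Γ) + wdeg w (g - G) := by
            apply add_le_add_left
            rw [wdeg_lform hf, ← hγf]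
      _ < _ := wb_add_lt_right h2
    · apply lt_of_le_of_lt (wdeg_mul_le _ _)
      have h2 : wdeg w (f - F) < (γf : WithBot Γ) := hγf ▸ wdeg_sub_lform_lt hf
      calc wdeg w (f - F) + wdeg w g ≤ wdeg w (f - F) + (γg : WithBot Γ) := by
            apply add_le_add_right
            rw [← hγg]
      _ = (γg : WithBot Γ) + wdeg w (f - F) := add_comm _ _
      _ < ((γg + γf : Γ) : WithBot Γ) := wb_add_lt_right h2
      _ = ((γf + γg : Γ) : WithBot Γ) := by rw [add_comm γg γf]
  rw [h1, wdeg_add_right_of_lt (hFGdeg ▸ hrest), hFGdeg, ← hγf, ← hγg, ← WithBot.coe_add]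

lemma lform_eq_of_decomp {h s : MvPolynomial (Fin n) k} {γ : Γ} (hh : h ≠ 0)
    (hhom : ∀ d ∈ h.support, nu w d = γ) (hs : wdeg w s < (γ : WithBot Γ)) :
    lform w (h + s) = h := by
  have hdh : wdeg w h = (γ : WithBot Γ) := wdeg_of_hom hh hhom
  have hdeg : wdeg w (h + s) = (γ : WithBot Γ) := by
    rw [wdeg_add_right_of_lt (by rw [hdh]; exact hs), hdh]
  apply MvPolynomial.ext
  intro d
  rw [coeff_lform, hdeg]
  by_cases hd : ((nu w d : Γ) : WithBot Γ) = (γ : WithBot Γ)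
  · rw [if_pos hd, MvPolynomial.coeff_add]
    have hsd : MvPolynomial.coeff d s = 0 := by
      by_contra h0
      have h1 := le_wdeg (w := w) (MvPolynomial.mem_support_iff.mpr h0)
      rw [hd] at h1
      exact absurd (lt_of_le_of_lt h1 hs) (lt_irrefl _)
    rw [hsd, add_zero]
  · rw [if_neg hd]
    symm
    by_contra h0
    exact hd (by rw [hhom d (MvPolynomial.mem_support_iff.mpr h0)])

lemma lform_mul {f g : MvPolynomial (Fin n) k} (hf : f ≠ 0) (hg : g ≠ 0) :
    lform w (f * g) = lform w f * lform w g := by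
  obtain ⟨γf, hγf⟩ := WithBot.ne_bot_iff_exists.mp (wdeg_ne_bot (w := w) hf)
  obtain ⟨γg, hγg⟩ := WithBot.ne_bot_iff_exists.mp (wdeg_ne_bot (w := w) hg)
  set F := lform w f with hF
  set G := lform w g with hG
  have h1 : f * g = F * G + (F * (g - G) + (f - F) * g) := by ring
  have hFG : F * G ≠ 0 := mul_ne_zero (lform_ne_zero hf) (lform_ne_zero hg)
  have hrest : wdeg w (F * (g - G) + (f - F) * g) < ((γf + γg : Γ) : WithBot Γ) := by
    apply lt_of_le_of_lt (wdeg_add_le _ _)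
    apply max_lt
    · apply lt_of_le_of_lt (wdeg_mul_le _ _)
      have h2 : wdeg w (g - G) < (γg : WithBot Γ) := hγg ▸ wdeg_sub_lform_lt hg
      calc wdeg w F + wdeg w (g - G) ≤ (γf : WithBot Γ) + wdeg w (g - G) := by
            apply add_le_add_left
            rw [wdeg_lform hf, ← hγf]
      _ < _ := wb_add_lt_right h2
    · apply lt_of_le_of_lt (wdeg_mul_le _ _)
      have h2 : wdeg w (f - F) < (γf : WithBot Γ) := hγf ▸ wdeg_sub_lform_lt hf
      calc wdeg w (f - F) + wdeg w g ≤ wdeg w (f - F) + (γg : WithBot Γ) := by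
            apply add_le_add_right
            rw [← hγg]
      _ = (γg : WithBot Γ) + wdeg w (f - F) := add_comm _ _
      _ < ((γg + γf : Γ) : WithBot Γ) := wb_add_lt_right h2
      _ = ((γf + γg : Γ) : WithBot Γ) := by rw [add_comm γg γf]
  rw [h1]
  exact lform_eq_of_decomp hFG (hom_mul (lform_hom hγf.symm) (lform_hom hγg.symm)) hrest

lemma lform_one : lform w (1 : MvPolynomial (Fin n) k) = 1 := by
  have h : (1 : MvPolynomial (Fin n) k) = 1 + 0 := by ring
  conv_lhs => rw [h]
  apply lform_eq_of_decomp (γ := 0) one_ne_zero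
  · intro d hd
    have := MvPolynomial.mem_support_iff.mp hd
    rw [MvPolynomial.coeff_one] at this
    have hd0 : d = 0 := by
      by_contra hne
      simp [Ne.symm hne] at this
    rw [hd0, nu_zero]
  · rw [wdeg_zero]; exact WithBot.bot_lt_coe _

lemma lform_pow {g : MvPolynomial (Fin n) k} (hg : g ≠ 0) (i : ℕ) :
    lform w (g ^ i) = lform w g ^ i := by
  induction i with
  | zero => simpa using lform_one
  | succ i ih => rw [pow_succ, lform_mul (pow_ne_zero i hg) hg, ih, pow_succ]

lemma wdeg_pow {g : MvPolynomial (Fin n) k} {dg : Γ} (hdg : wdeg w g = (dg : WithBot Γ))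
    (i : ℕ) : wdeg w (g ^ i) = ((i • dg : Γ) : WithBot Γ) := by
  induction i with
  | zero =>
    have : wdeg w (1 : MvPolynomial (Fin n) k) = ((0 : Γ) : WithBot Γ) := by
      apply wdeg_of_hom one_ne_zero
      intro d hd
      have := MvPolynomial.mem_support_iff.mp hd
      rw [MvPolynomial.coeff_one] at this
      have hd0 : d = 0 := by
        by_contra hne
        simp [Ne.symm hne] at this
      rw [hd0, nu_zero]
    simpa using this
  | succ i ih =>
    rw [pow_succ, wdeg_mul, ih, hdg, ← WithBot.coe_add, succ_nsmul]

end AuxBasic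
section AuxDeriv
set_option linter.unusedSectionVars false

variable {w : Fin n → Γ}

lemma nu_single (i : Fin n) : nu w (Finsupp.single i 1) = w i := by
  simp [nu, Finsupp.single_apply]

lemma wdeg_monomial_le (d : Fin n →₀ ℕ) (c : k) :
    wdeg w (MvPolynomial.monomial d c) ≤ ((nu w d : Γ) : WithBot Γ) := by
  rw [wdeg_def]
  apply Finset.sup_le
  intro e he
  classical
  rcases Finset.mem_singleton.mp (MvPolynomial.support_monomial_subset he) with rfl
  exact le_rfl

lemma sup_add_const {ι : Type*} (s : Finset ι) (u : ι → WithBot Γ) (c : Γ) :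
    s.sup u + (c : WithBot Γ) = s.sup fun e => u e + (c : WithBot Γ) := by
  apply Finset.comp_sup_eq_sup_comp (fun x => x + (c : WithBot Γ))
  · intro x y
    rcases le_total x y with h | h
    · rw [max_eq_right h, max_eq_right (add_le_add_left h _)]
    · rw [max_eq_left h, max_eq_left (add_le_add_left h _)]
  · exact WithBot.bot_add _

lemma const_add_sup {ι : Type*} (s : Finset ι) (u : ι → WithBot Γ) (c : WithBot Γ) :
    c + s.sup u = s.sup fun e => c + u e := by
  apply Finset.comp_sup_eq_sup_comp (fun x => c + x)
  · intro x y
    rcases le_total x y with h | h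
    · rw [max_eq_right h, max_eq_right (add_le_add_right h _)]
    · rw [max_eq_left h, max_eq_left (add_le_add_right h _)]
  · exact WithBot.add_bot _

lemma wdeg_pderiv_add_le (i : Fin n) (h : MvPolynomial (Fin n) k) :
    wdeg w (MvPolynomial.pderiv i h) + ((w i : Γ) : WithBot Γ) ≤ wdeg w h := by
  classical
  have h1 : wdeg w (MvPolynomial.pderiv i h) ≤
      h.support.sup fun e => wdeg w (MvPolynomial.pderiv i
        (MvPolynomial.monomial e (MvPolynomial.coeff e h))) := by
    conv_lhs => rw [MvPolynomial.as_sum h]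
    rw [map_sum]
    exact wdeg_sum_le _ _
  calc wdeg w (MvPolynomial.pderiv i h) + ((w i : Γ) : WithBot Γ)
      ≤ (h.support.sup fun e => wdeg w (MvPolynomial.pderiv i
        (MvPolynomial.monomial e (MvPolynomial.coeff e h)))) + ((w i : Γ) : WithBot Γ) :=
        add_le_add_left h1 _
    _ = h.support.sup fun e => wdeg w (MvPolynomial.pderiv i
        (MvPolynomial.monomial e (MvPolynomial.coeff e h))) + ((w i : Γ) : WithBot Γ) :=
        sup_add_const _ _ _
    _ ≤ wdeg w h := by
        apply Finset.sup_le
        intro e he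
        rw [MvPolynomial.pderiv_monomial]
        rcases Nat.eq_zero_or_pos (e i) with h0 | h0
        · rw [h0]
          simp only [Nat.cast_zero, mul_zero, map_zero, wdeg_zero, WithBot.bot_add]
          exact bot_le
        · have hle : Finsupp.single i 1 ≤ e := Finsupp.single_le_iff.mpr h0
          have hsum : e - Finsupp.single i 1 + Finsupp.single i 1 = e :=
            tsub_add_cancel_of_le hle
          have hnu : nu w (e - Finsupp.single i 1) + w i = nu w e := by
            rw [← nu_single (w := w) i, ← nu_add, hsum]
          calc wdeg w (MvPolynomial.monomial (e - Finsupp.single i 1)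
                (MvPolynomial.coeff e h * (e i : k))) + ((w i : Γ) : WithBot Γ)
              ≤ ((nu w (e - Finsupp.single i 1) : Γ) : WithBot Γ) + ((w i : Γ) : WithBot Γ) :=
                add_le_add_left (wdeg_monomial_le _ _) _
            _ = ((nu w e : Γ) : WithBot Γ) := by rw [← WithBot.coe_add, hnu]
            _ ≤ wdeg w h := le_wdeg he

lemma wdeg_neg (f : MvPolynomial (Fin n) k) : wdeg w (-f) = wdeg w f := by
  rw [wdeg_def, wdeg_def, MvPolynomial.support_neg]

lemma wdeg_one : wdeg w (1 : MvPolynomial (Fin n) k) = ((0 : Γ) : WithBot Γ) := by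
  apply wdeg_of_hom one_ne_zero
  intro d hd
  have := MvPolynomial.mem_support_iff.mp hd
  rw [MvPolynomial.coeff_one] at this
  have hd0 : d = 0 := by
    by_contra hne
    simp [Ne.symm hne] at this
  rw [hd0, nu_zero]

lemma wdeg_neg_one_pow (m : ℕ) :
    wdeg w ((-1 : MvPolynomial (Fin n) k) ^ m) = ((0 : Γ) : WithBot Γ) := by
  have h1 : wdeg w (-1 : MvPolynomial (Fin n) k) = ((0 : Γ) : WithBot Γ) := by
    rw [wdeg_neg, wdeg_one]
  rw [wdeg_pow h1 m, smul_zero]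

/-- chain rule -/
lemma pderiv_aeval {r : ℕ} (f : Fin r → MvPolynomial (Fin n) k) (j : Fin n)
    (ψ : MvPolynomial (Fin r) k) :
    MvPolynomial.pderiv j (MvPolynomial.aeval f ψ) =
      ∑ a, MvPolynomial.aeval f (MvPolynomial.pderiv a ψ) * MvPolynomial.pderiv j (f a) := by
  classical
  induction ψ using MvPolynomial.induction_on with
  | C a => simp
  | add p q hp hq =>
    rw [map_add, map_add, hp, hq, ← Finset.sum_add_distrib]
    refine Finset.sum_congr rfl fun a _ => ?_
    rw [map_add, map_add, add_mul]
  | mul_X p i hp =>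
    rw [map_mul, MvPolynomial.aeval_X, MvPolynomial.pderiv_mul, hp]
    have : ∀ a : Fin r, MvPolynomial.aeval f (MvPolynomial.pderiv a (p * MvPolynomial.X i)) *
        MvPolynomial.pderiv j (f a) =
        MvPolynomial.aeval f (MvPolynomial.pderiv a p) * f i * MvPolynomial.pderiv j (f a) +
        (if a = i then MvPolynomial.aeval f p * MvPolynomial.pderiv j (f a) else 0) := by
      intro a
      rw [MvPolynomial.pderiv_mul, map_add, map_mul, map_mul, MvPolynomial.aeval_X]
      rcases eq_or_ne a i with rfl | hne
      · rw [MvPolynomial.pderiv_X_self, if_pos rfl, map_one, mul_one, add_mul]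
      · rw [MvPolynomial.pderiv_X_of_ne (Ne.symm hne), if_neg hne, map_zero, mul_zero, add_zero,
          add_zero]
    rw [Finset.sum_congr rfl fun a _ => this a, Finset.sum_add_distrib, Finset.sum_ite_eq'
      Finset.univ i (fun a => MvPolynomial.aeval f p * MvPolynomial.pderiv j (f a))]
    simp only [Finset.mem_univ, if_pos]
    rw [Finset.sum_mul]
    congr 1
    exact Finset.sum_congr rfl fun a _ => by ring

lemma mv_pderiv_pow (j : Fin n) (g : MvPolynomial (Fin n) k) (i : ℕ) :
    MvPolynomial.pderiv j (g ^ (i + 1)) =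
      (i + 1 : ℕ) • (g ^ i * MvPolynomial.pderiv j g) := by
  induction i with
  | zero => simp
  | succ i ih =>
    rw [pow_succ g (i + 1), MvPolynomial.pderiv_mul, ih, smul_mul_assoc,
      mul_right_comm (g ^ i) (MvPolynomial.pderiv j g) g, ← pow_succ, succ_nsmul _ (i + 1)]

lemma pderiv_polyeval (j : Fin n) (g : MvPolynomial (Fin n) k)
    (Φ : Polynomial (MvPolynomial (Fin n) k)) :
    MvPolynomial.pderiv j (Φ.eval g) =
      Φ.sum (fun i a => MvPolynomial.pderiv j a * g ^ i) +
        Φ.derivative.eval g * MvPolynomial.pderiv j g := by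
  induction Φ using Polynomial.induction_on' with
  | add p q hp hq =>
    rw [Polynomial.eval_add, map_add, hp, hq, Polynomial.derivative_add, Polynomial.eval_add,
      Polynomial.sum_add_index _ _ _ (fun i => by simp) (fun a b₁ b₂ => by rw [map_add, add_mul])]
    ring
  | monomial i a =>
    rw [Polynomial.eval_monomial, Polynomial.derivative_monomial, Polynomial.eval_monomial,
      Polynomial.sum_monomial_index _ _ (by simp)]
    cases i with
    | zero =>
      simp [MvPolynomial.pderiv_mul]
    | succ i =>
      rw [MvPolynomial.pderiv_mul, mv_pderiv_pow, Nat.add_sub_cancel, nsmul_eq_mul]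
      push_cast
      ring

end AuxDeriv
section AuxWedge
set_option linter.unusedSectionVars false

variable {w : Fin n → Γ} {r : ℕ}

/-- The Jacobian-type matrix of `(f, h)` with columns selected by `e`. -/
noncomputable def Nmat (e : Fin (r + 1) → Fin n) (f : Fin r → MvPolynomial (Fin n) k)
    (h : MvPolynomial (Fin n) k) : Matrix (Fin (r + 1)) (Fin (r + 1)) (MvPolynomial (Fin n) k) :=
  Matrix.of fun a b => MvPolynomial.pderiv (e b)
    ((Fin.snoc f h : Fin (r + 1) → MvPolynomial (Fin n) k) a)

lemma wedgeDeg_snoc_def (f : Fin r → MvPolynomial (Fin n) k) (h : MvPolynomial (Fin n) k) :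
    wedgeDeg w (Fin.snoc f h) = Finset.univ.sup fun e : Fin (r + 1) → Fin n =>
      wdeg w (Nmat e f h).det + ((∑ b, w (e b) : Γ) : WithBot Γ) := rfl

lemma Nmat_eq_update (e : Fin (r + 1) → Fin n) (f : Fin r → MvPolynomial (Fin n) k)
    (g h : MvPolynomial (Fin n) k) :
    Nmat e f h = (Nmat e f g).updateRow (Fin.last r)
      (fun b => MvPolynomial.pderiv (e b) h) := by
  ext a b
  rw [Matrix.updateRow_apply]
  split
  · next heq => subst heq; simp [Nmat, Fin.snoc_last]
  · next hne =>
    induction a using Fin.lastCases with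
    | last => exact absurd rfl hne
    | cast a' => simp [Nmat, Fin.snoc_castSucc]

lemma det_Nmat_eval {f : Fin r → MvPolynomial (Fin n) k} {g : MvPolynomial (Fin n) k}
    {Φ : Polynomial (MvPolynomial (Fin n) k)}
    (hΦA : ∀ i : ℕ, Φ.coeff i ∈ Algebra.adjoin k (Set.range f)) (e : Fin (r + 1) → Fin n) :
    (Nmat e f (Φ.eval g)).det = Φ.derivative.eval g * (Nmat e f g).det := by
  classical
  have hch : ∀ i : ℕ, ∃ ψ : MvPolynomial (Fin r) k, MvPolynomial.aeval f ψ = Φ.coeff i := by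
    intro i
    have h1 := hΦA i
    rw [Algebra.adjoin_range_eq_range_aeval] at h1
    exact (AlgHom.mem_range _).mp h1
  choose ψ hψ using hch
  set B := Nmat e f g with hB
  set C : Fin (r + 1) → MvPolynomial (Fin n) k :=
    Fin.snoc (fun a => ∑ i ∈ Φ.support, g ^ i * MvPolynomial.aeval f
      (MvPolynomial.pderiv a (ψ i))) (Φ.derivative.eval g) with hC
  have hrow : (fun b => MvPolynomial.pderiv (e b) (Φ.eval g)) = ∑ a, C a • B a := by
    funext b
    rw [Finset.sum_apply, Fin.sum_univ_castSucc]
    simp only [Pi.smul_apply, smul_eq_mul, hC, Fin.snoc_castSucc, Fin.snoc_last]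
    have hB1 : ∀ a : Fin r, B (Fin.castSucc a) b = MvPolynomial.pderiv (e b) (f a) := by
      intro a; simp [hB, Nmat, Fin.snoc_castSucc]
    have hB2 : B (Fin.last r) b = MvPolynomial.pderiv (e b) g := by
      simp [hB, Nmat, Fin.snoc_last]
    rw [pderiv_polyeval]
    congr 1
    · rw [Polynomial.sum_def]
      have step1 : ∀ i ∈ Φ.support, MvPolynomial.pderiv (e b) (Φ.coeff i) * g ^ i =
          ∑ a : Fin r, (g ^ i * MvPolynomial.aeval f (MvPolynomial.pderiv a (ψ i))) *
            MvPolynomial.pderiv (e b) (f a) := by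
        intro i _
        rw [← hψ i, pderiv_aeval, Finset.sum_mul]
        exact Finset.sum_congr rfl fun a _ => by ring
      rw [Finset.sum_congr rfl step1, Finset.sum_comm]
      refine Finset.sum_congr rfl fun a _ => ?_
      rw [hB1 a, Finset.sum_mul]
    · rw [hB2]
  rw [Nmat_eq_update e f g (Φ.eval g), hrow, Matrix.det_updateRow_sum]
  simp only [hC, Fin.snoc_last, smul_eq_mul]
  rfl

lemma wedgeDeg_snoc_eval {f : Fin r → MvPolynomial (Fin n) k} {g : MvPolynomial (Fin n) k}
    {Φ : Polynomial (MvPolynomial (Fin n) k)}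
    (hΦA : ∀ i : ℕ, Φ.coeff i ∈ Algebra.adjoin k (Set.range f)) :
    wedgeDeg w (Fin.snoc f (Φ.eval g)) =
      wdeg w (Φ.derivative.eval g) + wedgeDeg w (Fin.snoc f g) := by
  rw [wedgeDeg_snoc_def, wedgeDeg_snoc_def, const_add_sup]
  apply Finset.sup_congr rfl
  intro e _
  rw [det_Nmat_eval hΦA e, wdeg_mul, add_assoc]

lemma wedgeDeg_snoc_le (f : Fin r → MvPolynomial (Fin n) k) (h : MvPolynomial (Fin n) k) :
    wedgeDeg w (Fin.snoc f h) ≤ wedgeDeg w f + wdeg w h := by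
  rw [wedgeDeg_snoc_def]
  apply Finset.sup_le
  intro e _
  rw [Matrix.det_succ_row (Nmat e f h) (Fin.last r)]
  have hterm : ∀ j : Fin (r + 1),
      wdeg w ((-1 : MvPolynomial (Fin n) k) ^ ((Fin.last r : ℕ) + (j : ℕ)) *
          Nmat e f h (Fin.last r) j *
          ((Nmat e f h).submatrix (Fin.last r).succAbove j.succAbove).det) +
        ((∑ b, w (e b) : Γ) : WithBot Γ) ≤ wedgeDeg w f + wdeg w h := by
    intro j
    have hM : Nmat e f h (Fin.last r) j = MvPolynomial.pderiv (e j) h := by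
      simp [Nmat, Fin.snoc_last]
    have hsub : (Nmat e f h).submatrix (Fin.last r).succAbove j.succAbove =
        Matrix.of fun a b : Fin r =>
          MvPolynomial.pderiv ((e ∘ j.succAbove) b) (f a) := by
      ext a b
      rw [Matrix.submatrix_apply, Fin.succAbove_last]
      simp [Nmat, Fin.snoc_castSucc]
    have hmin : wdeg w ((Nmat e f h).submatrix (Fin.last r).succAbove j.succAbove).det +
        ((∑ b, w ((e ∘ j.succAbove) b) : Γ) : WithBot Γ) ≤ wedgeDeg w f := by
      rw [hsub]
      exact Finset.le_sup (f := fun e' : Fin r → Fin n =>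
        wdeg w (Matrix.det (Matrix.of fun a b : Fin r =>
          MvPolynomial.pderiv (e' b) (f a))) + ((∑ b, w (e' b) : Γ) : WithBot Γ))
        (Finset.mem_univ (e ∘ j.succAbove))
    have hpd : wdeg w (MvPolynomial.pderiv (e j) h) + ((w (e j) : Γ) : WithBot Γ) ≤ wdeg w h :=
      wdeg_pderiv_add_le (e j) h
    have hsumw : (∑ b, w (e b) : Γ) = w (e j) + ∑ b, w ((e ∘ j.succAbove) b) := by
      rw [Fin.sum_univ_succAbove (fun b => w (e b)) j]; rfl
    rw [wdeg_mul, wdeg_mul, wdeg_neg_one_pow, hM]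
    calc ((0 : Γ) : WithBot Γ) + wdeg w (MvPolynomial.pderiv (e j) h) +
          wdeg w ((Nmat e f h).submatrix (Fin.last r).succAbove j.succAbove).det +
          ((∑ b, w (e b) : Γ) : WithBot Γ)
        = (wdeg w (MvPolynomial.pderiv (e j) h) + ((w (e j) : Γ) : WithBot Γ)) +
          (wdeg w ((Nmat e f h).submatrix (Fin.last r).succAbove j.succAbove).det +
            ((∑ b, w ((e ∘ j.succAbove) b) : Γ) : WithBot Γ)) := by
          rw [hsumw, WithBot.coe_add, WithBot.coe_zero]
          abel
      _ ≤ wdeg w h + wedgeDeg w f := add_le_add hpd hmin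
      _ = wedgeDeg w f + wdeg w h := add_comm _ _
  calc wdeg w (∑ j : Fin (r + 1), (-1 : MvPolynomial (Fin n) k) ^ ((Fin.last r : ℕ) + (j : ℕ)) *
        Nmat e f h (Fin.last r) j *
        ((Nmat e f h).submatrix (Fin.last r).succAbove j.succAbove).det) +
        ((∑ b, w (e b) : Γ) : WithBot Γ)
      ≤ (Finset.univ.sup fun j : Fin (r + 1) =>
          wdeg w ((-1 : MvPolynomial (Fin n) k) ^ ((Fin.last r : ℕ) + (j : ℕ)) *
            Nmat e f h (Fin.last r) j *
            ((Nmat e f h).submatrix (Fin.last r).succAbove j.succAbove).det)) +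
        ((∑ b, w (e b) : Γ) : WithBot Γ) := add_le_add_left (wdeg_sum_le _ _) _
    _ = Finset.univ.sup fun j : Fin (r + 1) =>
          wdeg w ((-1 : MvPolynomial (Fin n) k) ^ ((Fin.last r : ℕ) + (j : ℕ)) *
            Nmat e f h (Fin.last r) j *
            ((Nmat e f h).submatrix (Fin.last r).succAbove j.succAbove).det) +
        ((∑ b, w (e b) : Γ) : WithBot Γ) := sup_add_const _ _ _
    _ ≤ wedgeDeg w f + wdeg w h := Finset.sup_le fun j _ => hterm j

end AuxWedge
section AuxWdegG
set_option linter.unusedSectionVars false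

variable {w : Fin n → Γ} {g : MvPolynomial (Fin n) k}

lemma wdegG_def (Φ : Polynomial (MvPolynomial (Fin n) k)) :
    wdegG w g Φ = Φ.support.sup fun i => wdeg w (Φ.coeff i * g ^ i) := rfl

lemma wdeg_coeff_le (Φ : Polynomial (MvPolynomial (Fin n) k)) (i : ℕ) :
    wdeg w (Φ.coeff i * g ^ i) ≤ wdegG w g Φ := by
  by_cases hi : i ∈ Φ.support
  · rw [wdegG_def]
    exact Finset.le_sup (f := fun i => wdeg w (Φ.coeff i * g ^ i)) hi
  · rw [Polynomial.notMem_support_iff.mp hi, zero_mul, wdeg_zero]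
    exact bot_le

lemma wdegG_ne_bot (hg : g ≠ 0) {Φ : Polynomial (MvPolynomial (Fin n) k)} (hΦ : Φ ≠ 0) :
    wdegG w g Φ ≠ ⊥ := by
  obtain ⟨i, hi⟩ := Polynomial.support_nonempty.mpr hΦ
  have h1 : Φ.coeff i * g ^ i ≠ 0 :=
    mul_ne_zero (Polynomial.mem_support_iff.mp hi) (pow_ne_zero _ hg)
  intro h
  have h2 := wdeg_coeff_le (w := w) (g := g) Φ i
  rw [h, le_bot_iff, wdeg_eq_bot_iff] at h2
  exact h1 h2

@[simp] lemma wdegG_zero : wdegG w g (0 : Polynomial (MvPolynomial (Fin n) k)) = ⊥ := by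
  simp [wdegG]

lemma wdeg_eval_le (Φ : Polynomial (MvPolynomial (Fin n) k)) :
    wdeg w (Φ.eval g) ≤ wdegG w g Φ := by
  rw [Polynomial.eval_eq_sum, Polynomial.sum_def]
  exact (wdeg_sum_le _ _).trans (Finset.sup_le fun i hi => wdeg_coeff_le Φ i)

lemma cross_eq (Φ Ψ : Polynomial (MvPolynomial (Fin n) k)) (i j : ℕ) :
    wdeg w (Φ.coeff i * Ψ.coeff j * g ^ (i + j)) =
      wdeg w (Φ.coeff i * g ^ i) + wdeg w (Ψ.coeff j * g ^ j) := by
  have h : Φ.coeff i * Ψ.coeff j * g ^ (i + j) =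
      (Φ.coeff i * g ^ i) * (Ψ.coeff j * g ^ j) := by
    rw [pow_add]; ring
  rw [h, wdeg_mul]

lemma wb_add_lt_of_le_of_lt {A B : Γ} {x y : WithBot Γ} (hx : x ≤ (A : WithBot Γ))
    (hy : y < (B : WithBot Γ)) : x + y < ((A + B : Γ) : WithBot Γ) := by
  cases x with
  | bot => rw [WithBot.bot_add]; exact WithBot.bot_lt_coe _
  | coe x =>
    calc (x : WithBot Γ) + y < ((x + B : Γ) : WithBot Γ) := wb_add_lt_right hy
    _ ≤ ((A + B : Γ) : WithBot Γ) := by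
        rw [WithBot.coe_le_coe]
        exact add_le_add_left (WithBot.coe_le_coe.mp hx) B

lemma wb_add_lt_of_lt_of_le {A B : Γ} {x y : WithBot Γ} (hx : x < (A : WithBot Γ))
    (hy : y ≤ (B : WithBot Γ)) : x + y < ((A + B : Γ) : WithBot Γ) := by
  rw [add_comm x y, add_comm A B]
  exact wb_add_lt_of_le_of_lt hy hx

/-- The set of leading indices of `Φ`. -/
noncomputable def lset (w : Fin n → Γ) (g : MvPolynomial (Fin n) k)
    (Φ : Polynomial (MvPolynomial (Fin n) k)) : Finset ℕ :=
  letI : DecidableEq (WithBot Γ) := Classical.decEq _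
  Φ.support.filter (fun i => wdeg w (Φ.coeff i * g ^ i) = wdegG w g Φ)

lemma mem_lset {Φ : Polynomial (MvPolynomial (Fin n) k)} {i : ℕ} :
    i ∈ lset w g Φ ↔ i ∈ Φ.support ∧ wdeg w (Φ.coeff i * g ^ i) = wdegG w g Φ := by
  classical
  unfold lset
  rw [Finset.filter_congr_decidable, Finset.mem_filter]

lemma lset_nonempty {Φ : Polynomial (MvPolynomial (Fin n) k)} (hΦ : Φ ≠ 0) :
    (lset w g Φ).Nonempty := by
  classical
  obtain ⟨i, hi, heq⟩ := Finset.exists_mem_eq_sup _ (Polynomial.support_nonempty.mpr hΦ)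
    (fun i => wdeg w (Φ.coeff i * g ^ i))
  exact ⟨i, mem_lset.mpr ⟨hi, by rw [wdegG_def]; exact heq.symm⟩⟩

lemma lt_of_gt_maxlset (hg : g ≠ 0) {Φ : Polynomial (MvPolynomial (Fin n) k)} (hΦ : Φ ≠ 0)
    {i : ℕ} (hi : (lset w g Φ).max' (lset_nonempty hΦ) < i) :
    wdeg w (Φ.coeff i * g ^ i) < wdegG w g Φ := by
  by_cases hsup : i ∈ Φ.support
  · apply lt_of_le_of_ne (Finset.le_sup hsup)
    intro heq
    exact absurd (Finset.le_max' _ i (mem_lset.mpr ⟨hsup, heq⟩)) (not_le.mpr hi)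
  · rw [Polynomial.notMem_support_iff.mp hsup, zero_mul, wdeg_zero]
    exact bot_lt_iff_ne_bot.mpr (wdegG_ne_bot hg hΦ)

lemma wdegG_mul (hg : g ≠ 0) {Φ Ψ : Polynomial (MvPolynomial (Fin n) k)}
    (hΦ : Φ ≠ 0) (hΨ : Ψ ≠ 0) :
    wdegG w g (Φ * Ψ) = wdegG w g Φ + wdegG w g Ψ := by
  classical
  obtain ⟨γ1, hγ1⟩ := WithBot.ne_bot_iff_exists.mp (wdegG_ne_bot (w := w) hg hΦ)
  obtain ⟨γ2, hγ2⟩ := WithBot.ne_bot_iff_exists.mp (wdegG_ne_bot (w := w) hg hΨ)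
  set D1 := (lset w g Φ).max' (lset_nonempty hΦ) with hD1
  set D2 := (lset w g Ψ).max' (lset_nonempty hΨ) with hD2
  have hD1mem := mem_lset.mp ((lset w g Φ).max'_mem (lset_nonempty hΦ))
  have hD2mem := mem_lset.mp ((lset w g Ψ).max'_mem (lset_nonempty hΨ))
  set N := D1 + D2 with hN
  -- the coefficient of the product at N times g^N
  have hsplit : (Φ * Ψ).coeff N * g ^ N =
      Φ.coeff D1 * Ψ.coeff D2 * g ^ N +
        ∑ p ∈ (Finset.HasAntidiagonal.antidiagonal N).erase (D1, D2), Φ.coeff p.1 * Ψ.coeff p.2 * g ^ N := by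
    have hmem : (D1, D2) ∈ Finset.HasAntidiagonal.antidiagonal N := Finset.HasAntidiagonal.mem_antidiagonal.mpr (by simp [hN])
    rw [Polynomial.coeff_mul, Finset.sum_mul, ← Finset.add_sum_erase _ _ hmem]
  have hmain : wdeg w (Φ.coeff D1 * Ψ.coeff D2 * g ^ N) = ((γ1 + γ2 : Γ) : WithBot Γ) := by
    rw [hN, cross_eq, hD1mem.2, hD2mem.2, ← hγ1, ← hγ2, WithBot.coe_add]
  have hrest : wdeg w (∑ p ∈ (Finset.HasAntidiagonal.antidiagonal N).erase (D1, D2),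
      Φ.coeff p.1 * Ψ.coeff p.2 * g ^ N) < ((γ1 + γ2 : Γ) : WithBot Γ) := by
    apply lt_of_le_of_lt (wdeg_sum_le _ _)
    rw [Finset.sup_lt_iff (WithBot.bot_lt_coe _)]
    intro p hp
    obtain ⟨hpne, hpmem⟩ := Finset.mem_erase.mp hp
    have hpsum : p.1 + p.2 = N := Finset.HasAntidiagonal.mem_antidiagonal.mp hpmem
    have hcases : D1 < p.1 ∨ D2 < p.2 := by
      by_contra hcon
      push_neg at hcon
      obtain ⟨h1, h2⟩ := hcon
      have e1 : p.1 = D1 := by omega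
      have e2 : p.2 = D2 := by omega
      exact hpne (Prod.ext e1 e2)
    have hkey : p.1 + p.2 = N → wdeg w (Φ.coeff p.1 * Ψ.coeff p.2 * g ^ N) =
        wdeg w (Φ.coeff p.1 * g ^ p.1) + wdeg w (Ψ.coeff p.2 * g ^ p.2) := by
      intro hs; rw [← hs]; exact cross_eq Φ Ψ p.1 p.2
    rw [hkey hpsum]
    rcases hcases with hc | hc
    · have h1 := lt_of_gt_maxlset (w := w) hg hΦ hc
      rw [← hγ1] at h1
      exact wb_add_lt_of_lt_of_le h1 (hγ2.symm ▸ wdeg_coeff_le Ψ p.2)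
    · have h2 := lt_of_gt_maxlset (w := w) hg hΨ hc
      rw [← hγ2] at h2
      exact wb_add_lt_of_le_of_lt (hγ1.symm ▸ wdeg_coeff_le Φ p.1) h2
  have hcoeffN : wdeg w ((Φ * Ψ).coeff N * g ^ N) = ((γ1 + γ2 : Γ) : WithBot Γ) := by
    rw [hsplit, wdeg_add_right_of_lt (by rw [hmain]; exact hrest), hmain]
  apply le_antisymm
  · rw [wdegG_def]
    apply Finset.sup_le
    intro N' hN'
    rw [Polynomial.coeff_mul, Finset.sum_mul]
    apply (wdeg_sum_le _ _).trans
    apply Finset.sup_le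
    intro p hp
    have hpsum : p.1 + p.2 = N' := Finset.HasAntidiagonal.mem_antidiagonal.mp hp
    rw [← hpsum, cross_eq]
    exact add_le_add (wdeg_coeff_le Φ p.1) (wdeg_coeff_le Ψ p.2)
  · rw [← hγ1, ← hγ2, ← WithBot.coe_add, ← hcoeffN]
    apply wdeg_coeff_le
end AuxWdegG
section AuxPLform
set_option linter.unusedSectionVars false

variable {w : Fin n → Γ} {g : MvPolynomial (Fin n) k} {Φ : Polynomial (MvPolynomial (Fin n) k)}

lemma wdeg_C {c : k} (hc : c ≠ 0) :
    wdeg w (MvPolynomial.C (σ := Fin n) c) = ((0 : Γ) : WithBot Γ) := by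
  apply wdeg_of_hom (by simpa using hc)
  intro d hd
  have h1 := MvPolynomial.mem_support_iff.mp hd
  rw [MvPolynomial.coeff_C] at h1
  have hd0 : d = 0 := by
    by_contra hne
    simp [Ne.symm hne] at h1
  rw [hd0, nu_zero]

lemma lform_zero : lform w (0 : MvPolynomial (Fin n) k) = 0 := by
  rw [lform]
  simp

lemma lform_C (c : k) : lform w (MvPolynomial.C (σ := Fin n) c) = MvPolynomial.C c := by
  rcases eq_or_ne c 0 with rfl | hc
  · simp only [map_zero]
    exact lform_zero
  · have h : MvPolynomial.C (σ := Fin n) c = MvPolynomial.C c + 0 := (add_zero _).symm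
    conv_lhs => rw [h]
    apply lform_eq_of_decomp (γ := 0) (by simpa using hc)
    · intro d hd
      have h1 := MvPolynomial.mem_support_iff.mp hd
      rw [MvPolynomial.coeff_C] at h1
      have hd0 : d = 0 := by
        by_contra hne
        simp [Ne.symm hne] at h1
      rw [hd0, nu_zero]
    · rw [wdeg_zero]; exact WithBot.bot_lt_coe _

lemma wdeg_natCast {m : ℕ} (hm : m ≠ 0) :
    wdeg w ((m : MvPolynomial (Fin n) k)) = ((0 : Γ) : WithBot Γ) := by
  rw [← map_natCast (MvPolynomial.C : k →+* MvPolynomial (Fin n) k) m]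
  exact wdeg_C (Nat.cast_ne_zero.mpr hm)

lemma lform_natCast (m : ℕ) :
    lform w ((m : MvPolynomial (Fin n) k)) = (m : MvPolynomial (Fin n) k) := by
  rw [← map_natCast (MvPolynomial.C : k →+* MvPolynomial (Fin n) k) m, lform_C]

lemma lform_mul_natCast {φ : MvPolynomial (Fin n) k} (hφ : φ ≠ 0) {m : ℕ} (hm : m ≠ 0) :
    lform w (φ * (m : MvPolynomial (Fin n) k)) = lform w φ * (m : MvPolynomial (Fin n) k) := by
  have hmne : ((m : MvPolynomial (Fin n) k)) ≠ 0 := by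
    rw [← map_natCast (MvPolynomial.C : k →+* MvPolynomial (Fin n) k) m]
    rw [Ne, MvPolynomial.C_eq_zero]; exact Nat.cast_ne_zero.mpr hm
  rw [lform_mul hφ hmne, lform_natCast]

lemma pLform_def : pLform w g Φ =
    ∑ i ∈ lset w g Φ, Polynomial.C (lform w (Φ.coeff i)) * Polynomial.X ^ i := rfl

lemma coeff_pLform (j : ℕ) : (pLform w g Φ).coeff j =
    if j ∈ lset w g Φ then lform w (Φ.coeff j) else 0 := by
  classical
  rw [pLform_def, Polynomial.finset_sum_coeff]
  simp only [Polynomial.coeff_C_mul, Polynomial.coeff_X_pow]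
  rw [Finset.sum_congr rfl (fun i _ => by rw [mul_ite, mul_one, mul_zero]), Finset.sum_ite_eq]

lemma mem_support_pLform {j : ℕ} : j ∈ (pLform w g Φ).support ↔ j ∈ lset w g Φ := by
  rw [Polynomial.mem_support_iff, coeff_pLform]
  constructor
  · intro h
    by_contra hn
    simp [hn] at h
  · intro h
    rw [if_pos h]
    have hj : Φ.coeff j ≠ 0 := Polynomial.mem_support_iff.mp (mem_lset.mp h).1
    exact lform_ne_zero hj

lemma pLform_ne_zero (hΦ : Φ ≠ 0) : pLform w g Φ ≠ 0 := by
  obtain ⟨i, hi⟩ := lset_nonempty (w := w) (g := g) hΦ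
  intro h
  have := mem_support_pLform.mpr hi
  rw [h] at this
  simp at this

lemma wdeg_lset_term (hg : g ≠ 0) {i : ℕ} (hi : i ∈ lset w g Φ) :
    wdeg w (lform w (Φ.coeff i) * g ^ i) = wdegG w g Φ := by
  obtain ⟨hisup, hieq⟩ := mem_lset.mp hi
  have hφ : Φ.coeff i ≠ 0 := Polynomial.mem_support_iff.mp hisup
  rw [wdeg_mul, wdeg_lform hφ, ← wdeg_mul, hieq]

lemma wdegG_pLform (hg : g ≠ 0) (hΦ : Φ ≠ 0) :
    wdegG w g (pLform w g Φ) = wdegG w g Φ := by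
  apply le_antisymm
  · rw [wdegG_def (pLform w g Φ)]
    apply Finset.sup_le
    intro i hi
    rw [coeff_pLform, if_pos (mem_support_pLform.mp hi)]
    exact le_of_eq (wdeg_lset_term hg (mem_support_pLform.mp hi))
  · obtain ⟨i, hi⟩ := lset_nonempty (w := w) (g := g) hΦ
    have h1 : wdeg w ((pLform w g Φ).coeff i * g ^ i) = wdegG w g Φ := by
      rw [coeff_pLform, if_pos hi]
      exact wdeg_lset_term hg hi
    rw [← h1]
    exact wdeg_coeff_le _ i

lemma eval_pLform : (pLform w g Φ).eval (lform w g) =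
    ∑ i ∈ lset w g Φ, lform w (Φ.coeff i) * lform w g ^ i := by
  rw [pLform_def, Polynomial.eval_finset_sum]
  exact Finset.sum_congr rfl fun i _ => by
    rw [Polynomial.eval_mul, Polynomial.eval_C, Polynomial.eval_pow, Polynomial.eval_X]

lemma eval_pLform_eq_zero (hg : g ≠ 0) (hΦ : Φ ≠ 0)
    (hlt : wdeg w (Φ.eval g) < wdegG w g Φ) :
    (pLform w g Φ).eval (lform w g) = 0 := by
  classical
  obtain ⟨γ0, hγ0⟩ := WithBot.ne_bot_iff_exists.mp (wdegG_ne_bot (w := w) hg hΦ)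
  set S := (pLform w g Φ).eval (lform w g) with hS
  have hSsum : S = ∑ i ∈ lset w g Φ, lform w (Φ.coeff i * g ^ i) := by
    rw [hS, eval_pLform]
    apply Finset.sum_congr rfl
    intro i hi
    have hφ : Φ.coeff i ≠ 0 := Polynomial.mem_support_iff.mp (mem_lset.mp hi).1
    rw [lform_mul hφ (pow_ne_zero _ hg), lform_pow hg]
  by_contra hS0
  have hShom : ∀ d ∈ S.support, nu w d = γ0 := by
    intro d hd
    have hcd := MvPolynomial.mem_support_iff.mp hd
    rw [hSsum, MvPolynomial.coeff_sum] at hcd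
    obtain ⟨i, hi, hci⟩ := Finset.exists_ne_zero_of_sum_ne_zero hcd
    have hieq : wdeg w (Φ.coeff i * g ^ i) = ((γ0 : Γ) : WithBot Γ) := by
      rw [(mem_lset.mp hi).2, ← hγ0]
    exact lform_hom hieq d (MvPolynomial.mem_support_iff.mpr hci)
  have hwS : wdeg w S = ((γ0 : Γ) : WithBot Γ) := wdeg_of_hom hS0 hShom
  -- Φ.eval g decomposes
  have hsub : lset w g Φ ⊆ Φ.support := fun i hi => (mem_lset.mp hi).1
  have heval : Φ.eval g = ∑ i ∈ Φ.support \ lset w g Φ, Φ.coeff i * g ^ i +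
      ∑ i ∈ lset w g Φ, Φ.coeff i * g ^ i := by
    rw [Finset.sum_sdiff hsub, Polynomial.eval_eq_sum, Polynomial.sum_def]
  have hTeq : Φ.eval g - S = ∑ i ∈ Φ.support \ lset w g Φ, Φ.coeff i * g ^ i +
      ∑ i ∈ lset w g Φ, (Φ.coeff i * g ^ i - lform w (Φ.coeff i * g ^ i)) := by
    rw [heval, hSsum, Finset.sum_sub_distrib]
    ring
  have hwT : wdeg w (Φ.eval g - S) < ((γ0 : Γ) : WithBot Γ) := by
    rw [hTeq]
    apply lt_of_le_of_lt (wdeg_add_le _ _)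
    apply max_lt
    · apply lt_of_le_of_lt (wdeg_sum_le _ _)
      rw [Finset.sup_lt_iff (WithBot.bot_lt_coe _)]
      intro i hi
      obtain ⟨hisup, hinot⟩ := Finset.mem_sdiff.mp hi
      apply lt_of_le_of_ne (hγ0 ▸ wdeg_coeff_le Φ i)
      intro heq
      exact hinot (mem_lset.mpr ⟨hisup, by rw [heq, ← hγ0]⟩)
    · apply lt_of_le_of_lt (wdeg_sum_le _ _)
      rw [Finset.sup_lt_iff (WithBot.bot_lt_coe _)]
      intro i hi
      have hne : Φ.coeff i * g ^ i ≠ 0 :=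
        mul_ne_zero (Polynomial.mem_support_iff.mp (hsub hi)) (pow_ne_zero _ hg)
      have h1 := wdeg_sub_lform_lt (w := w) hne
      rw [(mem_lset.mp hi).2, ← hγ0] at h1
      exact h1
  have hfinal : wdeg w S < ((γ0 : Γ) : WithBot Γ) := by
    have hdecomp : S = Φ.eval g + -(Φ.eval g - S) := by ring
    rw [hdecomp]
    apply lt_of_le_of_lt (wdeg_add_le _ _)
    apply max_lt
    · rw [hγ0]; exact hlt
    · rw [wdeg_neg]; exact hwT
  rw [hwS] at hfinal
  exact lt_irrefl _ hfinal

lemma exists_pos_mem_lset (hg : g ≠ 0) (hΦ : Φ ≠ 0)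
    (heval0 : (pLform w g Φ).eval (lform w g) = 0) :
    ∃ i ∈ lset w g Φ, 0 < i := by
  by_contra hcon
  push_neg at hcon
  have hzero : ∀ i ∈ lset w g Φ, i = 0 := fun i hi => Nat.le_zero.mp (hcon i hi)
  obtain ⟨i0, hi0⟩ := lset_nonempty (w := w) (g := g) hΦ
  have h00 : (0 : ℕ) ∈ lset w g Φ := by rw [← hzero i0 hi0]; exact hi0
  have hsum : (pLform w g Φ).eval (lform w g) = lform w (Φ.coeff 0) := by
    rw [eval_pLform, Finset.sum_eq_single_of_mem 0 h00]
    · rw [pow_zero, mul_one]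
    · intro b hb hbne
      exact absurd (hzero b hb) hbne
  rw [hsum] at heval0
  exact lform_ne_zero (Polynomial.mem_support_iff.mp (mem_lset.mp h00).1) heval0

lemma wb_add_right_cancel {x y : WithBot Γ} {c : Γ}
    (h : x + (c : WithBot Γ) = y + (c : WithBot Γ)) : x = y := by
  cases x with
  | bot =>
    cases y with
    | bot => rfl
    | coe y => rw [WithBot.bot_add, ← WithBot.coe_add] at h; exact absurd h.symm (WithBot.coe_ne_bot)
  | coe x =>
    cases y with
    | bot => rw [WithBot.bot_add, ← WithBot.coe_add] at h; exact absurd h (WithBot.coe_ne_bot)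
    | coe y =>
      rw [← WithBot.coe_add, ← WithBot.coe_add, WithBot.coe_eq_coe] at h
      rw [WithBot.coe_eq_coe]
      exact add_right_cancel h

end AuxPLform
section AuxDerivCompat
set_option linter.unusedSectionVars false

variable {w : Fin n → Γ} {g : MvPolynomial (Fin n) k} {Φ : Polynomial (MvPolynomial (Fin n) k)}
  {dg : Γ}

lemma natCast_mv_ne_zero {m : ℕ} (hm : m ≠ 0) : (m : MvPolynomial (Fin n) k) ≠ 0 :=
  Nat.cast_ne_zero.mpr hm

lemma wdeg_deriv_coeff (hdg : wdeg w g = (dg : WithBot Γ)) (i : ℕ) :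
    wdeg w ((Polynomial.derivative Φ).coeff i * g ^ i) + (dg : WithBot Γ) =
      wdeg w (Φ.coeff (i + 1) * g ^ (i + 1)) := by
  rw [Polynomial.coeff_derivative]
  have hcast : ((i : MvPolynomial (Fin n) k) + 1) = ((i + 1 : ℕ) : MvPolynomial (Fin n) k) := by
    push_cast; ring
  rw [hcast]
  rcases eq_or_ne (Φ.coeff (i + 1)) 0 with h0 | h0
  · simp [h0]
  · obtain ⟨u, hu⟩ := WithBot.ne_bot_iff_exists.mp (wdeg_ne_bot (w := w) h0)
    rw [wdeg_mul, wdeg_mul, wdeg_natCast (Nat.succ_ne_zero i), wdeg_pow hdg, wdeg_mul,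
      wdeg_pow hdg, ← hu, ← WithBot.coe_add, ← WithBot.coe_add, ← WithBot.coe_add,
      ← WithBot.coe_add, WithBot.coe_eq_coe, succ_nsmul]
    abel

lemma deriv_coeff_ne_zero_iff {i : ℕ} :
    (Polynomial.derivative Φ).coeff i ≠ 0 ↔ Φ.coeff (i + 1) ≠ 0 := by
  rw [Polynomial.coeff_derivative]
  constructor
  · intro h hc
    exact h (by rw [hc, zero_mul])
  · intro h
    exact mul_ne_zero h (Nat.cast_add_one_ne_zero i)

lemma wdegG_derivative_add (hg : g ≠ 0) (hdg : wdeg w g = (dg : WithBot Γ))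
    (hpos : ∃ i ∈ lset w g Φ, 0 < i) :
    wdegG w g (Polynomial.derivative Φ) + (dg : WithBot Γ) = wdegG w g Φ := by
  apply le_antisymm
  · rw [wdegG_def (Polynomial.derivative Φ), sup_add_const]
    apply Finset.sup_le
    intro j hj
    rw [wdeg_deriv_coeff hdg]
    exact wdeg_coeff_le Φ (j + 1)
  · obtain ⟨i, hi, hipos⟩ := hpos
    obtain ⟨i', rfl⟩ : ∃ i', i = i' + 1 := ⟨i - 1, by omega⟩
    rw [← (mem_lset.mp hi).2, ← wdeg_deriv_coeff hdg]
    exact add_le_add_left (wdeg_coeff_le _ i') _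

lemma mem_lset_derivative_iff (hg : g ≠ 0) (hdg : wdeg w g = (dg : WithBot Γ))
    (hpos : ∃ i ∈ lset w g Φ, 0 < i) {j : ℕ} :
    j ∈ lset w g (Polynomial.derivative Φ) ↔ (j + 1) ∈ lset w g Φ := by
  rw [mem_lset, mem_lset, Polynomial.mem_support_iff, Polynomial.mem_support_iff]
  constructor
  · rintro ⟨h1, h2⟩
    refine ⟨deriv_coeff_ne_zero_iff.mp h1, ?_⟩
    rw [← wdeg_deriv_coeff hdg, h2, wdegG_derivative_add hg hdg hpos]
  · rintro ⟨h1, h2⟩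
    refine ⟨deriv_coeff_ne_zero_iff.mpr h1, ?_⟩
    apply wb_add_right_cancel (c := dg)
    rw [wdeg_deriv_coeff hdg, h2, wdegG_derivative_add hg hdg hpos]

lemma pLform_derivative (hg : g ≠ 0) (hdg : wdeg w g = (dg : WithBot Γ))
    (hpos : ∃ i ∈ lset w g Φ, 0 < i) :
    pLform w g (Polynomial.derivative Φ) = Polynomial.derivative (pLform w g Φ) := by
  apply Polynomial.ext
  intro j
  rw [Polynomial.coeff_derivative (pLform w g Φ) j, coeff_pLform, coeff_pLform]
  by_cases hj : (j + 1) ∈ lset w g Φ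
  · rw [if_pos ((mem_lset_derivative_iff hg hdg hpos).mpr hj), if_pos hj,
      Polynomial.coeff_derivative Φ j]
    have hφ : Φ.coeff (j + 1) ≠ 0 := Polynomial.mem_support_iff.mp (mem_lset.mp hj).1
    have hcast : ((j : MvPolynomial (Fin n) k) + 1) = ((j + 1 : ℕ) : MvPolynomial (Fin n) k) := by
      push_cast; ring
    rw [hcast, lform_mul_natCast hφ (Nat.succ_ne_zero j), ← hcast]
  · rw [if_neg (fun hmem => hj ((mem_lset_derivative_iff hg hdg hpos).mp hmem)), if_neg hj,
      zero_mul]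

end AuxDerivCompat

section AuxInitAlg
set_option linter.unusedSectionVars false

variable {w : Fin n → Γ} {A : Subalgebra k (MvPolynomial (Fin n) k)}

lemma initAlg_support_nonneg (hw : ∀ h ∈ A, h ≠ 0 → ((0 : Γ) : WithBot Γ) ≤ wdeg w h)
    {h : MvPolynomial (Fin n) k} (hmem : h ∈ initAlg w A) :
    ∀ d ∈ h.support, (0 : Γ) ≤ nu w d := by
  unfold initAlg at hmem
  induction hmem using Algebra.adjoin_induction with
  | mem x hx =>
    obtain ⟨φ, ⟨hφA, hφ0⟩, rfl⟩ := hx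
    have hφne : φ ≠ 0 := by simpa using hφ0
    obtain ⟨γ, hγ⟩ := WithBot.ne_bot_iff_exists.mp (wdeg_ne_bot (w := w) hφne)
    intro d hd
    have h1 := lform_hom hγ.symm d hd
    have h2 : ((0 : Γ) : WithBot Γ) ≤ (γ : WithBot Γ) := by
      rw [hγ]; exact hw φ hφA hφne
    rw [h1]
    exact WithBot.coe_le_coe.mp h2
  | algebraMap r =>
    intro d hd
    have h1 := MvPolynomial.mem_support_iff.mp hd
    rw [MvPolynomial.algebraMap_eq, MvPolynomial.coeff_C] at h1
    have hd0 : d = 0 := by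
      by_contra hne
      simp [Ne.symm hne] at h1
    rw [hd0, nu_zero]
  | add x y hx hy ihx ihy =>
    intro d hd
    rcases Finset.mem_union.mp (MvPolynomial.support_add hd) with h | h
    · exact ihx d h
    · exact ihy d h
  | mul x y hx hy ihx ihy =>
    intro d hd
    obtain ⟨a, ha, b, hb, rfl⟩ := Finset.mem_add.mp (MvPolynomial.support_mul _ _ hd)
    rw [nu_add]
    exact add_nonneg (ihx a ha) (ihy b hb)

lemma wdeg_nonneg_initAlg (hw : ∀ h ∈ A, h ≠ 0 → ((0 : Γ) : WithBot Γ) ≤ wdeg w h)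
    {h : MvPolynomial (Fin n) k} (hmem : h ∈ initAlg w A) (hne : h ≠ 0) :
    ((0 : Γ) : WithBot Γ) ≤ wdeg w h := by
  obtain ⟨d, hd⟩ := MvPolynomial.support_nonempty.mpr hne
  calc ((0 : Γ) : WithBot Γ) ≤ ((nu w d : Γ) : WithBot Γ) :=
        WithBot.coe_le_coe.mpr (initAlg_support_nonneg hw hmem d hd)
  _ ≤ wdeg w h := le_wdeg hd

lemma lform_mem_initAlg {φ : MvPolynomial (Fin n) k} (hφA : φ ∈ A) (hφ : φ ≠ 0) :
    lform w φ ∈ initAlg w A :=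
  Algebra.subset_adjoin ⟨φ, ⟨hφA, by simpa using hφ⟩, rfl⟩

end AuxInitAlg

section AuxPrime
set_option linter.unusedSectionVars false

lemma deriv_ne_zero_of_natDegree_pos {R : Type*} [CommRing R] [IsDomain R] [CharZero R]
    {P : Polynomial R} (hdeg : 0 < P.natDegree) : Polynomial.derivative P ≠ 0 := by
  intro h
  have h1 : (Polynomial.derivative P).coeff (P.natDegree - 1) = 0 := by rw [h]; simp
  rw [Polynomial.coeff_derivative] at h1
  have h2 : P.natDegree - 1 + 1 = P.natDegree := by omega
  rw [h2] at h1
  rcases mul_eq_zero.mp h1 with h3 | h3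
  · have hPne : P ≠ 0 := fun hP0 => by simp [hP0] at hdeg
    exact (Polynomial.leadingCoeff_ne_zero.mpr hPne) (by rw [Polynomial.leadingCoeff]; exact h3)
  · exact Nat.cast_add_one_ne_zero _ h3

lemma dvd_pow_succ_of_dvd_derivative {R : Type*} [CommRing R] [IsDomain R] [CharZero R]
    {P : Polynomial R} (hP : Prime P) (hdeg : 0 < P.natDegree) :
    ∀ (j : ℕ) (Θ : Polynomial R), P ∣ Θ → P ^ j ∣ Polynomial.derivative Θ →
      P ^ (j + 1) ∣ Θ := by
  intro j
  induction j with
  | zero => intro Θ h1 _; simpa using h1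
  | succ j ih =>
    intro Θ h1 h2
    have h3 : P ^ (j + 1) ∣ Θ := ih Θ h1 ((pow_dvd_pow P (Nat.le_succ j)).trans h2)
    obtain ⟨R1, hR1⟩ := h3
    have hD : Polynomial.derivative Θ =
        P ^ j * (Polynomial.C ((j : R) + 1) * Polynomial.derivative P * R1) +
          P ^ (j + 1) * Polynomial.derivative R1 := by
      rw [hR1, Polynomial.derivative_mul, Polynomial.derivative_pow_succ]
      ring
    have h4 : P ^ (j + 1) ∣ P ^ j * (Polynomial.C ((j : R) + 1) *
        Polynomial.derivative P * R1) := by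
      have h5 : P ^ j * (Polynomial.C ((j : R) + 1) * Polynomial.derivative P * R1) =
          Polynomial.derivative Θ - P ^ (j + 1) * Polynomial.derivative R1 := by
        rw [hD]; ring
      rw [h5]
      exact dvd_sub h2 (Dvd.intro _ rfl)
    obtain ⟨c, hc⟩ := h4
    have h6 : Polynomial.C ((j : R) + 1) * Polynomial.derivative P * R1 = P * c := by
      apply mul_left_cancel₀ (pow_ne_zero j hP.ne_zero)
      rw [hc, pow_succ]
      ring
    have h7 : P ∣ Polynomial.C ((j : R) + 1) * (Polynomial.derivative P * R1) := by
      rw [← mul_assoc, h6]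
      exact Dvd.intro _ rfl
    have h8 : ¬ P ∣ Polynomial.C ((j : R) + 1) := by
      intro hdvd
      have hc0 : Polynomial.C ((j : R) + 1) ≠ 0 := by
        rw [Ne, Polynomial.C_eq_zero]
        exact Nat.cast_add_one_ne_zero j
      have := Polynomial.natDegree_le_of_dvd hdvd hc0
      rw [Polynomial.natDegree_C] at this
      omega
    have h9 : ¬ P ∣ Polynomial.derivative P := by
      intro hdvd
      have := Polynomial.natDegree_le_of_dvd hdvd (deriv_ne_zero_of_natDegree_pos hdeg)
      have h10 := Polynomial.natDegree_derivative_lt hdeg.ne'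
      omega
    have h11 : P ∣ R1 := by
      rcases hP.dvd_or_dvd h7 with h | h
      · exact absurd h h8
      · rcases hP.dvd_or_dvd h with h' | h'
        · exact absurd h' h9
        · exact h'
    obtain ⟨R2, hR2⟩ := h11
    refine ⟨R2, ?_⟩
    rw [hR1, hR2, pow_succ]
    ring

end AuxPrime
section AuxFinal
set_option linter.unusedSectionVars false

variable {w : Fin n → Γ}

lemma wb_nsmul_coe (t : ℕ) (c : Γ) :
    t • ((c : WithBot Γ)) = ((t • c : Γ) : WithBot Γ) := by
  induction t with
  | zero => rw [zero_nsmul, zero_nsmul, WithBot.coe_zero]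
  | succ t ih => rw [succ_nsmul, succ_nsmul, ih, WithBot.coe_add]

lemma wb_nsmul_bot {t : ℕ} (ht : t ≠ 0) : t • (⊥ : WithBot Γ) = ⊥ := by
  obtain ⟨s, rfl⟩ := Nat.exists_eq_succ_of_ne_zero ht
  rw [succ_nsmul, WithBot.add_bot]

lemma deriv_coeff_mem {A : Subalgebra k (MvPolynomial (Fin n) k)}
    {Ψ : Polynomial (MvPolynomial (Fin n) k)} (h : ∀ i, Ψ.coeff i ∈ A) (i : ℕ) :
    (Polynomial.derivative Ψ).coeff i ∈ A := by
  rw [Polynomial.coeff_derivative]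
  have hc : ((i : MvPolynomial (Fin n) k) + 1) = ((i + 1 : ℕ) : MvPolynomial (Fin n) k) := by
    push_cast; ring
  rw [hc]
  exact mul_mem (h (i + 1)) (Subalgebra.natCast_mem A (i + 1))

end AuxFinal
/-- Theorem (ii): if moreover `deg_w g ≥ 0` and `I(A^w, g^w)` is principal with
generator `P`, then `deg_w Φ(g) ≥ m_w^g(Φ)·(deg_w^g P + M)`, where
`M = deg_w(ω ∧ dg) − deg_w ω − deg_w g`. -/
theorem stmt8 (r : ℕ) (hr : 0 < r) (f : Fin r → MvPolynomial (Fin n) k)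
    (hf : AlgebraicIndependent k f)
    (g : MvPolynomial (Fin n) k) (hg : g ≠ 0) (w : Fin n → Γ)
    (A : Subalgebra k (MvPolynomial (Fin n) k)) (hA : A = Algebra.adjoin k (Set.range f))
    (hw : ∀ h ∈ A, h ≠ 0 → ((0 : Γ) : WithBot Γ) ≤ wdeg w h)
    (hwg : ((0 : Γ) : WithBot Γ) ≤ wdeg w g)
    (P : Polynomial (initAlg w A))
    (hP : RingHom.ker
        (Polynomial.aeval (lform w g) :
          Polynomial (initAlg w A) →ₐ[initAlg w A] MvPolynomial (Fin n) k)
      = Ideal.span {P})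
    (Φ : Polynomial (MvPolynomial (Fin n) k)) (hΦ : Φ ≠ 0) (hΦA : ∀ i, Φ.coeff i ∈ A)
    (dω dg : Γ) (hdω : wedgeDeg w f = (dω : WithBot Γ)) (hdg : wdeg w g = (dg : WithBot Γ))
    (M : WithBot Γ)
    (hM : M = wedgeDeg w (Fin.snoc f g) + ((-dω - dg : Γ) : WithBot Γ)) :
    wdeg w (Φ.eval g) ≥
      mwg w g Φ •
        (wdegG w g (P.map (algebraMap (initAlg w A) (MvPolynomial (Fin n) k))) + M) := by
  classical
  set m := mwg w g Φ with hmdef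
  set Pm := P.map (algebraMap (initAlg w A) (MvPolynomial (Fin n) k)) with hPmdef
  set Ψ : ℕ → Polynomial (MvPolynomial (Fin n) k) :=
    fun t => (⇑Polynomial.derivative)^[t] Φ with hΨdef
  have hΨsucc : ∀ t, Ψ (t + 1) = Polynomial.derivative (Ψ t) := fun t =>
    Function.iterate_succ_apply' _ t Φ
  have hSetNe : {i : ℕ | wdegG w g (Ψ i) = wdeg w ((Ψ i).eval g)}.Nonempty := by
    refine ⟨Φ.natDegree + 1, ?_⟩
    have hz : Ψ (Φ.natDegree + 1) = 0 :=
      Polynomial.iterate_derivative_eq_zero (Nat.lt_succ_self _)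
    simp [Set.mem_setOf_eq, hz]
  have hm_mem : wdegG w g (Ψ m) = wdeg w ((Ψ m).eval g) := Nat.sInf_mem hSetNe
  have hm_not : ∀ i, i < m → wdegG w g (Ψ i) ≠ wdeg w ((Ψ i).eval g) := fun i hi =>
    Nat.notMem_of_lt_sInf hi
  have hdg0 : (0 : Γ) ≤ dg := by
    have h := hwg; rw [hdg] at h; exact_mod_cast h
  have hAmem : ∀ t i, (Ψ t).coeff i ∈ A := by
    intro t
    induction t with
    | zero => exact hΦA
    | succ t ih => rw [hΨsucc]; exact deriv_coeff_mem ih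
  rw [ge_iff_le]
  rcases Nat.eq_zero_or_pos m with hm0 | hmpos
  · -- the case m = 0
    rw [hm0, zero_nsmul]
    have heq : wdegG w g Φ = wdeg w (Φ.eval g) := by
      have h := hm_mem; rw [hm0] at h; exact h
    obtain ⟨i, hi⟩ := Polynomial.support_nonempty.mpr hΦ
    have hφi : Φ.coeff i ≠ 0 := Polynomial.mem_support_iff.mp hi
    have h1 : ((0 : Γ) : WithBot Γ) ≤ wdeg w (Φ.coeff i * g ^ i) := by
      rw [wdeg_mul, wdeg_pow hdg]
      calc ((0 : Γ) : WithBot Γ) = ((0 : Γ) : WithBot Γ) + ((0 : Γ) : WithBot Γ) := by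
            rw [← WithBot.coe_add, add_zero]
      _ ≤ wdeg w (Φ.coeff i) + ((i • dg : Γ) : WithBot Γ) :=
            add_le_add (hw _ (hΦA i) hφi) (WithBot.coe_le_coe.mpr (nsmul_nonneg hdg0 i))
    rw [← WithBot.coe_zero]
    calc ((0 : Γ) : WithBot Γ) ≤ wdeg w (Φ.coeff i * g ^ i) := h1
    _ ≤ wdegG w g Φ := wdeg_coeff_le Φ i
    _ = wdeg w (Φ.eval g) := heq
  rcases eq_or_ne (wedgeDeg w (Fin.snoc f g)) ⊥ with hWbot | hWne
  · rw [hM, hWbot, WithBot.bot_add, WithBot.add_bot, wb_nsmul_bot hmpos.ne']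
    exact bot_le
  rcases eq_or_ne Pm 0 with hPm0 | hPmne
  · rw [hPm0, wdegG_zero, WithBot.bot_add, wb_nsmul_bot hmpos.ne']
    exact bot_le
  obtain ⟨Wγ, hW⟩ := WithBot.ne_bot_iff_exists.mp hWne
  obtain ⟨γ0, hγ0⟩ := WithBot.ne_bot_iff_exists.mp (wdegG_ne_bot (w := w) hg hΦ)
  have C1 : ∀ t, t ≤ m → (Ψ t ≠ 0 ∧ wdegG w g (Ψ t) = ((γ0 - t • dg : Γ) : WithBot Γ) ∧
      pLform w g (Ψ t) = (⇑Polynomial.derivative)^[t] (pLform w g Φ)) := by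
    intro t
    induction t with
    | zero =>
      intro _
      refine ⟨hΦ, ?_, rfl⟩
      show wdegG w g Φ = _
      rw [zero_nsmul, sub_zero, ← hγ0]
    | succ t ih =>
      intro hle
      obtain ⟨hne, hdeg2, hpl⟩ := ih (le_of_lt (Nat.lt_of_succ_le hle))
      have htm : t < m := Nat.lt_of_succ_le hle
      have hlt : wdeg w ((Ψ t).eval g) < wdegG w g (Ψ t) :=
        lt_of_le_of_ne (wdeg_eval_le _) (fun hc => hm_not t htm hc.symm)
      have hev0 : (pLform w g (Ψ t)).eval (lform w g) = 0 :=
        eval_pLform_eq_zero hg hne hlt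
      have hpos : ∃ i ∈ lset w g (Ψ t), 0 < i := exists_pos_mem_lset hg hne hev0
      have hdadd := wdegG_derivative_add (Φ := Ψ t) hg hdg hpos
      rw [← hΨsucc t] at hdadd
      have hne' : Ψ (t + 1) ≠ 0 := by
        intro h0
        rw [h0, wdegG_zero, WithBot.bot_add, hdeg2] at hdadd
        exact WithBot.bot_ne_coe hdadd
      obtain ⟨u, hu⟩ := WithBot.ne_bot_iff_exists.mp (wdegG_ne_bot (w := w) hg hne')
      have hueq : u = γ0 - (t + 1) • dg := by
        have h2 : ((u + dg : Γ) : WithBot Γ) = ((γ0 - t • dg : Γ) : WithBot Γ) := by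
          rw [WithBot.coe_add, hu, hdadd, hdeg2]
        have h3 := WithBot.coe_eq_coe.mp h2
        have h4 : u = γ0 - t • dg - dg := by rw [← h3]; abel
        rw [h4, succ_nsmul]
        abel
      refine ⟨hne', by rw [← hu, hueq], ?_⟩
      rw [hΨsucc t, pLform_derivative hg hdg hpos, hpl]
      exact (Function.iterate_succ_apply' _ t _).symm
  have hdet : ∃ e0 : Fin (r + 1) → Fin n, (Nmat e0 f g).det ≠ 0 := by
    by_contra hcon
    push_neg at hcon
    have hb : wedgeDeg w (Fin.snoc f g) ≤ ⊥ := by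
      rw [wedgeDeg_snoc_def]
      apply Finset.sup_le
      intro e _
      rw [hcon e, wdeg_zero, WithBot.bot_add]
    rw [← hW] at hb
    exact absurd (le_bot_iff.mp hb) WithBot.coe_ne_bot
  obtain ⟨e0, he0⟩ := hdet
  have hadjoin : ∀ (Ξ : Polynomial (MvPolynomial (Fin n) k)), (∀ i, Ξ.coeff i ∈ A) →
      (∀ i, Ξ.coeff i ∈ Algebra.adjoin k (Set.range f)) := by
    intro Ξ h i; rw [← hA]; exact h i
  have hevalne : ∀ N (Ξ : Polynomial (MvPolynomial (Fin n) k)), Ξ.natDegree ≤ N → Ξ ≠ 0 →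
      (∀ i, Ξ.coeff i ∈ A) → Ξ.eval g ≠ 0 := by
    intro N
    induction N with
    | zero =>
      intro Ξ hdeg hne _
      have h1 : Ξ = Polynomial.C (Ξ.coeff 0) :=
        Polynomial.eq_C_of_natDegree_eq_zero (Nat.le_zero.mp hdeg)
      rw [h1, Polynomial.eval_C]
      intro h0
      rw [h0, map_zero] at h1
      exact hne h1
    | succ N ihN =>
      intro Ξ hdeg hne hcoef
      rcases Nat.eq_zero_or_pos Ξ.natDegree with hd0 | hdpos
      · have h1 : Ξ = Polynomial.C (Ξ.coeff 0) := Polynomial.eq_C_of_natDegree_eq_zero hd0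
        rw [h1, Polynomial.eval_C]
        intro h0; rw [h0, map_zero] at h1; exact hne h1
      · intro hev
        have hDne : Polynomial.derivative Ξ ≠ 0 := deriv_ne_zero_of_natDegree_pos hdpos
        have hDdeg : (Polynomial.derivative Ξ).natDegree ≤ N := by
          have := Polynomial.natDegree_derivative_lt hdpos.ne'
          omega
        have hDev : (Polynomial.derivative Ξ).eval g = 0 := by
          have hid := det_Nmat_eval (f := f) (g := g) (hadjoin Ξ hcoef) e0
          have hzero : (Nmat e0 f (Ξ.eval g)).det = 0 := by
            rw [hev]
            apply Matrix.det_eq_zero_of_row_eq_zero (Fin.last r)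
            intro j
            simp [Nmat, Fin.snoc_last]
          rw [hzero] at hid
          rcases mul_eq_zero.mp hid.symm with h | h
          · exact h
          · exact absurd h he0
        exact ihN (Polynomial.derivative Ξ) hDdeg hDne (deriv_coeff_mem hcoef) hDev
  have hevne : ∀ t, t ≤ m → (Ψ t).eval g ≠ 0 := fun t ht =>
    hevalne (Ψ t).natDegree (Ψ t) le_rfl (C1 t ht).1 (hAmem t)
  have hchain : ∀ t, t < m → wdeg w ((Ψ (t + 1)).eval g) + ((Wγ - dω : Γ) : WithBot Γ) ≤
      wdeg w ((Ψ t).eval g) := by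
    intro t ht
    have hid := wedgeDeg_snoc_eval (w := w) (g := g) (Φ := Ψ t) (hadjoin (Ψ t) (hAmem t))
    have hle := wedgeDeg_snoc_le (w := w) f ((Ψ t).eval g)
    rw [hid, hdω, ← hΨsucc t, ← hW] at hle
    obtain ⟨v1, hv1⟩ := WithBot.ne_bot_iff_exists.mp
      (wdeg_ne_bot (w := w) (hevne (t + 1) (by omega)))
    obtain ⟨v0, hv0⟩ := WithBot.ne_bot_iff_exists.mp (wdeg_ne_bot (w := w) (hevne t (by omega)))
    rw [← hv1, ← hv0] at hle ⊢
    rw [← WithBot.coe_add, ← WithBot.coe_add, WithBot.coe_le_coe] at hle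
    rw [← WithBot.coe_add, WithBot.coe_le_coe]
    calc v1 + (Wγ - dω) = v1 + Wγ - dω := by abel
    _ ≤ dω + v0 - dω := sub_le_sub_right hle dω
    _ = v0 := by abel
  have hdown : ∀ s, s ≤ m → ((γ0 - m • dg + s • (Wγ - dω) : Γ) : WithBot Γ) ≤
      wdeg w ((Ψ (m - s)).eval g) := by
    intro s
    induction s with
    | zero =>
      intro _
      rw [Nat.sub_zero, zero_nsmul, add_zero, ← hm_mem, (C1 m le_rfl).2.1]
    | succ s ih =>
      intro hs
      have h1 := ih (by omega)
      have ht : m - (s + 1) < m := by omega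
      have ht1 : m - (s + 1) + 1 = m - s := by omega
      have h2 := hchain (m - (s + 1)) ht
      rw [ht1] at h2
      calc ((γ0 - m • dg + (s + 1) • (Wγ - dω) : Γ) : WithBot Γ)
          = ((γ0 - m • dg + s • (Wγ - dω) : Γ) : WithBot Γ) + ((Wγ - dω : Γ) : WithBot Γ) := by
            rw [← WithBot.coe_add]
            congr 1
            rw [succ_nsmul]
            abel
      _ ≤ wdeg w ((Ψ (m - s)).eval g) + ((Wγ - dω : Γ) : WithBot Γ) := add_le_add_left h1 _
      _ ≤ wdeg w ((Ψ (m - (s + 1))).eval g) := h2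
  have hfinal0 : ((γ0 - m • dg + m • (Wγ - dω) : Γ) : WithBot Γ) ≤ wdeg w (Φ.eval g) := by
    have h := hdown m le_rfl
    rw [Nat.sub_self] at h
    exact h
  -- divisibility part
  have hcoefmem : ∀ i ∈ lset w g Φ, lform w (Φ.coeff i) ∈ initAlg w A := by
    intro i hi
    exact lform_mem_initAlg (hΦA i) (Polynomial.mem_support_iff.mp (mem_lset.mp hi).1)
  set Θ : Polynomial (initAlg w A) := ∑ i ∈ (lset w g Φ).attach,
    Polynomial.C (⟨lform w (Φ.coeff i.1), hcoefmem i.1 i.2⟩ : initAlg w A) *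
      Polynomial.X ^ (i.1 : ℕ) with hΘdef
  have hmapΘ : Θ.map (algebraMap (initAlg w A) (MvPolynomial (Fin n) k)) = pLform w g Φ := by
    have h1 : Θ.map (algebraMap (initAlg w A) (MvPolynomial (Fin n) k)) =
        ∑ i ∈ (lset w g Φ).attach,
          Polynomial.C (lform w (Φ.coeff i.1)) * Polynomial.X ^ (i.1 : ℕ) := by
      rw [hΘdef, ← Polynomial.coe_mapRingHom, map_sum]
      refine Finset.sum_congr rfl fun i _ => ?_
      rw [Polynomial.coe_mapRingHom, Polynomial.map_mul, Polynomial.map_C, Polynomial.map_pow,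
        Polynomial.map_X]
      rfl
    rw [h1, pLform_def]
    exact Finset.sum_attach (lset w g Φ)
      (fun j => Polynomial.C (lform w (Φ.coeff j)) * Polynomial.X ^ j)
  have hPne0 : P ≠ 0 := fun h => hPmne (by rw [hPmdef, h, Polynomial.map_zero])
  have hkerprime : (Ideal.span {P}).IsPrime := by
    constructor
    · intro h1
      have h2 : (1 : Polynomial (initAlg w A)) ∈ Ideal.span {P} := h1 ▸ Submodule.mem_top
      rw [← hP, RingHom.mem_ker, map_one] at h2
      exact one_ne_zero h2
    · intro x y hxy
      rw [← hP, RingHom.mem_ker, map_mul] at hxy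
      rcases mul_eq_zero.mp hxy with h | h
      · left; rw [← hP, RingHom.mem_ker]; exact h
      · right; rw [← hP, RingHom.mem_ker]; exact h
  have hPprime : Prime P := (Ideal.span_singleton_prime hPne0).mp hkerprime
  have hPmemker : (Polynomial.aeval (lform w g)) P = (0 : MvPolynomial (Fin n) k) := by
    have h : P ∈ RingHom.ker (Polynomial.aeval (lform w g) :
        Polynomial (initAlg w A) →ₐ[initAlg w A] MvPolynomial (Fin n) k) := by
      rw [hP]; exact Ideal.mem_span_singleton_self P
    exact RingHom.mem_ker.mp h
  have hPdeg : 0 < P.natDegree := by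
    rcases Nat.eq_zero_or_pos P.natDegree with h0 | h
    · exfalso
      have h1 : P = Polynomial.C (P.coeff 0) := Polynomial.eq_C_of_natDegree_eq_zero h0
      rw [h1, Polynomial.aeval_C] at hPmemker
      have h2 : P.coeff 0 = 0 := by
        have h3 : ((P.coeff 0 : initAlg w A) : MvPolynomial (Fin n) k) = 0 := hPmemker
        exact_mod_cast h3
      exact hPne0 (by rw [h1, h2, map_zero])
    · exact h
  have hkerdvd : ∀ t, t < m → P ∣ (⇑Polynomial.derivative)^[t] Θ := by
    intro t ht
    have hmem : (⇑Polynomial.derivative)^[t] Θ ∈ RingHom.ker (Polynomial.aeval (lform w g) :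
        Polynomial (initAlg w A) →ₐ[initAlg w A] MvPolynomial (Fin n) k) := by
      rw [RingHom.mem_ker, Polynomial.aeval_def, ← Polynomial.eval_map,
        ← Polynomial.iterate_derivative_map, hmapΘ, ← (C1 t (le_of_lt ht)).2.2]
      exact eval_pLform_eq_zero hg (C1 t (le_of_lt ht)).1
        (lt_of_le_of_ne (wdeg_eval_le _) fun hc => hm_not t ht hc.symm)
    rw [hP] at hmem
    exact Ideal.mem_span_singleton.mp hmem
  have hdvdmain : ∀ j t, t + j ≤ m → P ^ j ∣ (⇑Polynomial.derivative)^[t] Θ := by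
    intro j
    induction j with
    | zero => intro t _; rw [pow_zero]; exact one_dvd _
    | succ j ih =>
      intro t ht
      have h1 : P ∣ (⇑Polynomial.derivative)^[t] Θ := hkerdvd t (by omega)
      have h2 : P ^ j ∣ Polynomial.derivative ((⇑Polynomial.derivative)^[t] Θ) := by
        have h2' := ih (t + 1) (by omega)
        rwa [Function.iterate_succ_apply' (⇑Polynomial.derivative) t Θ] at h2'
      exact dvd_pow_succ_of_dvd_derivative hPprime hPdeg j _ h1 h2
  have hPm_dvd : P ^ m ∣ Θ := by
    have h := hdvdmain m 0 (by omega)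
    simpa using h
  obtain ⟨Q, hQ⟩ := hPm_dvd
  have hΛfact : pLform w g Φ =
      Pm ^ m * Q.map (algebraMap (initAlg w A) (MvPolynomial (Fin n) k)) := by
    rw [← hmapΘ, hQ, Polynomial.map_mul, Polynomial.map_pow]
  have hΛne : pLform w g Φ ≠ 0 := pLform_ne_zero hΦ
  have hQmne : Q.map (algebraMap (initAlg w A) (MvPolynomial (Fin n) k)) ≠ 0 := by
    intro h; rw [h, mul_zero] at hΛfact; exact hΛne hΛfact
  obtain ⟨p0, hp0⟩ := WithBot.ne_bot_iff_exists.mp (wdegG_ne_bot (w := w) hg hPmne)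
  have hpow : ∀ s : ℕ, wdegG w g (Pm ^ (s + 1)) = (((s + 1) • p0 : Γ) : WithBot Γ) := by
    intro s
    induction s with
    | zero => rw [pow_one, one_nsmul, ← hp0]
    | succ s ih =>
      rw [pow_succ, wdegG_mul hg (pow_ne_zero _ hPmne) hPmne, ih, ← hp0, ← WithBot.coe_add,
        WithBot.coe_eq_coe, succ_nsmul _ (s + 1), succ_nsmul _ s]
  obtain ⟨q0, hq0⟩ := WithBot.ne_bot_iff_exists.mp (wdegG_ne_bot (w := w) hg hQmne)
  have hq0nonneg : (0 : Γ) ≤ q0 := by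
    obtain ⟨i, hi⟩ := Polynomial.support_nonempty.mpr hQmne
    have hcne : (Q.map (algebraMap (initAlg w A) (MvPolynomial (Fin n) k))).coeff i ≠ 0 :=
      Polynomial.mem_support_iff.mp hi
    have hmemI : (Q.map (algebraMap (initAlg w A) (MvPolynomial (Fin n) k))).coeff i ∈
        initAlg w A := by
      rw [Polynomial.coeff_map]
      exact (Q.coeff i).2
    have h1 : ((0 : Γ) : WithBot Γ) ≤
        wdeg w ((Q.map (algebraMap (initAlg w A) (MvPolynomial (Fin n) k))).coeff i * g ^ i) := by
      rw [wdeg_mul, wdeg_pow hdg]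
      calc ((0 : Γ) : WithBot Γ) = ((0 : Γ) : WithBot Γ) + ((0 : Γ) : WithBot Γ) := by
            rw [← WithBot.coe_add, add_zero]
      _ ≤ _ := add_le_add (wdeg_nonneg_initAlg hw hmemI hcne)
            (WithBot.coe_le_coe.mpr (nsmul_nonneg hdg0 i))
    have h2 := h1.trans (wdeg_coeff_le _ i)
    rw [← hq0] at h2
    exact_mod_cast h2
  have hγ0eq : γ0 = m • p0 + q0 := by
    have h1 : wdegG w g (pLform w g Φ) = ((γ0 : Γ) : WithBot Γ) := by
      rw [wdegG_pLform hg hΦ, ← hγ0]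
    obtain ⟨s, hs⟩ := Nat.exists_eq_succ_of_ne_zero hmpos.ne'
    rw [hΛfact, wdegG_mul hg (pow_ne_zero _ hPmne) hQmne, hs, Nat.succ_eq_add_one, hpow s,
      ← hq0, ← WithBot.coe_add] at h1
    have h2 := (WithBot.coe_eq_coe.mp h1).symm
    rw [hs, Nat.succ_eq_add_one]
    exact h2
  -- final computation
  rw [hM, ← hW, ← hp0, ← WithBot.coe_add, ← WithBot.coe_add, wb_nsmul_coe]
  apply le_trans _ hfinal0
  rw [WithBot.coe_le_coe]
  have hx : (-dω - dg : Γ) = -(dω + dg) := by abel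
  have hexp : γ0 - m • dg + m • (Wγ - dω) =
      m • (p0 + (Wγ + (-dω - dg))) + q0 := by
    rw [hγ0eq, hx, smul_add, smul_add, smul_sub, smul_neg, smul_add]
    abel
  rw [hexp]
  exact le_add_of_nonneg_right hq0nonneg
end

section
/- Let f and g be w-homogeneous polynomials in k[x] with deg_w f > 0 and deg_w g > 0, for some w ∈ Γ^n. If f and g are algebraically dependent over k, then there exist coprime natural numbers l and m and a scalar α ∈ k such that g^l = α·f^m. -/
open MvPolynomial Polynomial

set_option synthInstance.maxHeartbeats 1000000
set_option maxHeartbeats 1000000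

variable {k : Type*} [Field k] [CharZero k] {n : ℕ}
variable {Γ : Type*} [AddCommGroup Γ] [LinearOrder Γ] [IsOrderedAddMonoid Γ]

section Aux

variable {k : Type*} [Field k] [CharZero k] {n : ℕ}
variable {Γ : Type*} [AddCommGroup Γ] [LinearOrder Γ] [IsOrderedAddMonoid Γ]

/-- The weight of an exponent vector. -/
private def Wt (w : Fin n → Γ) (d : Fin n →₀ ℕ) : Γ := ∑ i, d i • w i

private lemma Wt_add (w : Fin n → Γ) (d e : Fin n →₀ ℕ) :
    Wt w (d + e) = Wt w d + Wt w e := by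
  simp [Wt, add_nsmul, Finset.sum_add_distrib]

private lemma Wt_zero (w : Fin n → Γ) : Wt w (0 : Fin n →₀ ℕ) = 0 := by simp [Wt]

private lemma wt_support_mul {w : Fin n → Γ} {f g : MvPolynomial (Fin n) k} {a b : Γ}
    (hf : ∀ d ∈ f.support, Wt w d = a) (hg : ∀ d ∈ g.support, Wt w d = b) :
    ∀ d ∈ (f * g).support, Wt w d = a + b := by
  classical
  intro d hd
  have hmem := MvPolynomial.support_mul f g hd
  rcases Finset.mem_add.mp hmem with ⟨x, hx, y, hy, rfl⟩
  rw [Wt_add, hf x hx, hg y hy]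

private lemma wt_support_pow {w : Fin n → Γ} {f : MvPolynomial (Fin n) k} {a : Γ}
    (hf : ∀ d ∈ f.support, Wt w d = a) (i : ℕ) :
    ∀ d ∈ (f ^ i).support, Wt w d = i • a := by
  induction i with
  | zero =>
    intro d hd
    rw [pow_zero] at hd
    have hd0 : d = 0 := by
      by_contra hne
      have := MvPolynomial.mem_support_iff.mp hd
      rw [MvPolynomial.coeff_one] at this
      simp [Ne.symm hne] at this
    rw [hd0, Wt_zero, zero_nsmul]
  | succ i ih =>
    intro d hd
    rw [pow_succ] at hd
    have h2 := wt_support_mul ih hf d hd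
    rw [succ_nsmul]
    exact h2

private lemma wt_support_term {w : Fin n → Γ} {f g : MvPolynomial (Fin n) k} {a b : Γ}
    (hf : ∀ d ∈ f.support, Wt w d = a) (hg : ∀ d ∈ g.support, Wt w d = b)
    (c : k) (i j : ℕ) :
    ∀ d ∈ (MvPolynomial.C c * f ^ i * g ^ j).support, Wt w d = i • a + j • b := by
  have h1 : ∀ d ∈ (MvPolynomial.C c : MvPolynomial (Fin n) k).support, Wt w d = 0 := by
    intro d hd
    have hd0 : d = 0 := by
      by_contra hne
      have := MvPolynomial.mem_support_iff.mp hd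
      rw [MvPolynomial.coeff_C] at this
      simp [Ne.symm hne] at this
    rw [hd0, Wt_zero]
  have h2 := wt_support_mul h1 (wt_support_pow hf i)
  have h3 := wt_support_mul h2 (wt_support_pow hg j)
  intro d hd
  have := h3 d hd
  rwa [zero_add] at this

private lemma class_sum_eq_zero {w : Fin n → Γ} {f g : MvPolynomial (Fin n) k} {a b γ : Γ}
    (ha : ∀ d ∈ f.support, Wt w d = a) (hb : ∀ d ∈ g.support, Wt w d = b)
    (S : Finset (Fin 2 →₀ ℕ)) (c : (Fin 2 →₀ ℕ) → k)
    (hrel : ∑ e ∈ S, MvPolynomial.C (c e) * f ^ e 0 * g ^ e 1 = 0)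
    (p : (Fin 2 →₀ ℕ) → Prop) [DecidablePred p]
    (hp : ∀ e, p e ↔ e 0 • a + e 1 • b = γ) :
    ∑ e ∈ S.filter p, MvPolynomial.C (c e) * f ^ e 0 * g ^ e 1 = 0 := by
  classical
  apply MvPolynomial.ext
  intro d
  rw [MvPolynomial.coeff_sum, MvPolynomial.coeff_zero]
  by_cases hd : Wt w d = γ
  · rw [Finset.sum_filter_of_ne, ← MvPolynomial.coeff_sum, hrel, MvPolynomial.coeff_zero]
    intro e heS hne
    have hwd := wt_support_term ha hb (c e) (e 0) (e 1) d
      (MvPolynomial.mem_support_iff.mpr hne)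
    rw [hp]
    rw [← hwd]
    exact hd
  · apply Finset.sum_eq_zero
    intro e he
    rw [Finset.mem_filter] at he
    by_contra hne
    have hwd := wt_support_term ha hb (c e) (e 0) (e 1) d
      (MvPolynomial.mem_support_iff.mpr hne)
    exact hd (hwd.trans ((hp e).mp he.2))

end Aux

/-- If `f` and `g` are `w`-homogeneous with `deg_w f > 0`, `deg_w g > 0`, and `f, g` are
algebraically dependent over `k`, then there are coprime natural numbers `l, m` and
`α ∈ k` with `g^l = α f^m`. -/


theorem stmt9 (w : Fin n → Γ) (f g : MvPolynomial (Fin n) k)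
    (hf : IsWHom w f) (hg : IsWHom w g)
    (hdf : ((0 : Γ) : WithBot Γ) < wdeg w f) (hdg : ((0 : Γ) : WithBot Γ) < wdeg w g)
    (hdep : ¬ AlgebraicIndependent k ![f, g]) :
    ∃ l m : ℕ, 0 < l ∧ 0 < m ∧ Nat.Coprime l m ∧
      ∃ α : k, g ^ l = MvPolynomial.C α * f ^ m := by
  classical
  obtain ⟨a, ha⟩ := hf
  obtain ⟨b, hb⟩ := hg
  have ha' : ∀ d ∈ f.support, Wt w d = a := ha
  have hb' : ∀ d ∈ g.support, Wt w d = b := hb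
  have hf0 : f ≠ 0 := by
    rintro rfl
    simp only [wdeg, MvPolynomial.support_zero, Finset.sup_empty] at hdf
    exact absurd hdf not_lt_bot
  have hg0 : g ≠ 0 := by
    rintro rfl
    simp only [wdeg, MvPolynomial.support_zero, Finset.sup_empty] at hdg
    exact absurd hdg not_lt_bot
  have hfne : f.support.Nonempty := MvPolynomial.support_nonempty.mpr hf0
  have hgne : g.support.Nonempty := MvPolynomial.support_nonempty.mpr hg0
  have hwf : wdeg w f = (a : WithBot Γ) := by
    unfold wdeg
    rw [Finset.sup_congr rfl (fun d hd => by rw [ha d hd] : ∀ d ∈ f.support,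
      ((∑ i, d i • w i : Γ) : WithBot Γ) = (a : WithBot Γ)), Finset.sup_const hfne]
  have hwg : wdeg w g = (b : WithBot Γ) := by
    unfold wdeg
    rw [Finset.sup_congr rfl (fun d hd => by rw [hb d hd] : ∀ d ∈ g.support,
      ((∑ i, d i • w i : Γ) : WithBot Γ) = (b : WithBot Γ)), Finset.sup_const hgne]
  have hapos : (0 : Γ) < a := by rw [hwf] at hdf; exact_mod_cast hdf
  have hbpos : (0 : Γ) < b := by rw [hwg] at hdg; exact_mod_cast hdg
  have hcancelG : ∀ (r : ℕ) (x y : Γ), 0 < r → r • x = r • y → x = y := by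
    intro r x y hr hxy
    rcases lt_trichotomy x y with hlt | he | hlt
    · exact absurd hxy (ne_of_lt (nsmul_lt_nsmul_right hr.ne' hlt))
    · exact he
    · exact absurd hxy.symm (ne_of_lt (nsmul_lt_nsmul_right hr.ne' hlt))
  have hcancelN : ∀ (r r' : ℕ) (x : Γ), 0 < x → r • x = r' • x → r = r' := by
    intro r r' x hx hxy
    rcases lt_trichotomy r r' with hlt | he | hlt
    · exact absurd hxy (ne_of_lt (nsmul_lt_nsmul_left hx hlt))
    · exact he
    · exact absurd hxy.symm (ne_of_lt (nsmul_lt_nsmul_left hx hlt))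
  rw [algebraicIndependent_iff] at hdep
  push_neg at hdep
  obtain ⟨P, hPz, hP0⟩ := hdep
  set T : (Fin 2 →₀ ℕ) → MvPolynomial (Fin n) k :=
    fun e => MvPolynomial.C (P.coeff e) * f ^ e 0 * g ^ e 1 with hT
  have hrel : ∑ e ∈ P.support, T e = 0 := by
    calc ∑ e ∈ P.support, T e
        = MvPolynomial.aeval ![f, g] P := by
          conv_rhs => rw [MvPolynomial.as_sum P]
          rw [map_sum]
          refine Finset.sum_congr rfl fun e he => ?_
          rw [MvPolynomial.aeval_monomial, Finsupp.prod_pow, Fin.prod_univ_two]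
          simp only [hT, MvPolynomial.algebraMap_eq, Matrix.cons_val_zero, Matrix.cons_val_one,
            Matrix.head_cons, mul_assoc]
      _ = 0 := hPz
  obtain ⟨estar, hestar⟩ := MvPolynomial.support_nonempty.mpr hP0
  set γ : Γ := estar 0 • a + estar 1 • b with hγ
  set C' : Finset (Fin 2 →₀ ℕ) := P.support.filter (fun e => e 0 • a + e 1 • b = γ) with hC'
  have hclass : ∑ e ∈ C', T e = 0 :=
    class_sum_eq_zero ha' hb' P.support (fun e => P.coeff e) hrel _ (fun _ => Iff.rfl)
  have hC'sub : C' ⊆ P.support := Finset.filter_subset _ _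
  have hmemw : ∀ e ∈ C', e 0 • a + e 1 • b = γ := fun e he => (Finset.mem_filter.mp he).2
  have hTne : ∀ e ∈ P.support, T e ≠ 0 := by
    intro e he
    have hce : P.coeff e ≠ 0 := MvPolynomial.mem_support_iff.mp he
    exact mul_ne_zero (mul_ne_zero (fun hcc => hce (by
      simpa using congrArg (MvPolynomial.coeff 0) hcc)) (pow_ne_zero _ hf0)) (pow_ne_zero _ hg0)
  have hinj : ∀ e ∈ C', ∀ e' ∈ C', e 0 = e' 0 → e = e' := by
    intro e he e' he' h0
    have hw := (hmemw e he).trans (hmemw e' he').symm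
    rw [h0] at hw
    have h1 : e 1 • b = e' 1 • b := add_left_cancel hw
    have h1' : e 1 = e' 1 := hcancelN _ _ b hbpos h1
    ext i
    fin_cases i
    · exact h0
    · exact h1'
  have hC'ne : C'.Nonempty := ⟨estar, Finset.mem_filter.mpr ⟨hestar, rfl⟩⟩
  obtain ⟨emin, heminC, hemin'⟩ := C'.exists_min_image (fun e => e 0) hC'ne
  obtain ⟨emax, hemaxC, hemax'⟩ := C'.exists_max_image (fun e => e 0) hC'ne
  have hemin : ∀ e ∈ C', emin 0 ≤ e 0 := fun e he => hemin' e he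
  have hemax : ∀ e ∈ C', e 0 ≤ emax 0 := fun e he => hemax' e he
  have hii : emin 0 < emax 0 := by
    rcases lt_or_eq_of_le (hemin emax hemaxC) with hlt | heq
    · exact hlt
    · exfalso
      have hsingle : C' = {emin} := by
        apply Finset.eq_singleton_iff_unique_mem.mpr
        refine ⟨heminC, fun e he => hinj e he emin heminC ?_⟩
        have h1 : emin 0 ≤ e 0 := hemin e he
        have h2 : e 0 ≤ emax 0 := hemax e he
        omega
      rw [hsingle, Finset.sum_singleton] at hclass
      exact hTne emin (hC'sub heminC) hclass
  have hstep : ∀ e ∈ C', ∀ e' ∈ C', e 0 ≤ e' 0 →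
      e' 1 ≤ e 1 ∧ (e' 0 - e 0) • a = (e 1 - e' 1) • b := by
    intro e he e' he' h01
    have hw : e 0 • a + e 1 • b = e' 0 • a + e' 1 • b :=
      (hmemw e he).trans (hmemw e' he').symm
    have h2 : e 1 • b = (e' 0 - e 0) • a + e' 1 • b := by
      have hsplit : e' 0 • a = e 0 • a + (e' 0 - e 0) • a := by
        rw [← add_nsmul]
        congr 1
        omega
      rw [hsplit, add_assoc] at hw
      exact add_left_cancel hw
    have h3 : e' 1 ≤ e 1 := by
      by_contra hcon
      push_neg at hcon
      have hlt : e 1 • b < e' 1 • b := nsmul_lt_nsmul_left hbpos hcon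
      have hge : e' 1 • b ≤ e 1 • b := by
        rw [h2]
        exact le_add_of_nonneg_left (nsmul_nonneg hapos.le _)
      exact absurd hlt (not_lt.mpr hge)
    refine ⟨h3, ?_⟩
    have h4 : e 1 • b = (e 1 - e' 1) • b + e' 1 • b := by
      rw [← add_nsmul]
      congr 1
      omega
    rw [h4] at h2
    exact (add_right_cancel h2).symm
  obtain ⟨hj, hpq⟩ := hstep emin heminC emax hemaxC (le_of_lt hii)
  set p : ℕ := emax 0 - emin 0 with hpdef
  set q : ℕ := emin 1 - emax 1 with hqdef
  have hp0 : 0 < p := by omega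
  have hq0 : 0 < q := by
    rcases Nat.eq_zero_or_pos q with h0 | h0
    · exfalso
      rw [h0, zero_nsmul] at hpq
      exact absurd hpq (ne_of_gt (nsmul_pos hapos hp0.ne'))
    · exact h0
  set d0 : ℕ := Nat.gcd p q with hd0def
  set l : ℕ := p / d0 with hldef
  set m : ℕ := q / d0 with hmdef
  have hd0 : 0 < d0 := Nat.gcd_pos_of_pos_left _ hp0
  have hl0 : 0 < l := Nat.div_pos (Nat.le_of_dvd hp0 (Nat.gcd_dvd_left p q)) hd0
  have hm0 : 0 < m := Nat.div_pos (Nat.le_of_dvd hq0 (Nat.gcd_dvd_right p q)) hd0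
  have hlm : Nat.Coprime l m := Nat.coprime_div_gcd_div_gcd hd0
  have hpl : p = d0 * l := (Nat.mul_div_cancel' (Nat.gcd_dvd_left p q)).symm
  have hqm : q = d0 * m := (Nat.mul_div_cancel' (Nat.gcd_dvd_right p q)).symm
  have hlamb : l • a = m • b := by
    apply hcancelG d0 _ _ hd0
    rw [← mul_nsmul', ← mul_nsmul', ← hpl, ← hqm]
    exact hpq
  have hdecomp : ∀ e ∈ C', ∃ t : ℕ, e 0 = emin 0 + t * l ∧ e 1 + t * m = emin 1 := by
    intro e he
    have h0 : emin 0 ≤ e 0 := hemin e he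
    obtain ⟨h1, h2⟩ := hstep emin heminC e he h0
    set pe : ℕ := e 0 - emin 0 with hpe
    set qe : ℕ := emin 1 - e 1 with hqe
    have hmul : pe * m = l * qe := by
      apply hcancelN _ _ b hbpos
      calc (pe * m) • b = pe • (m • b) := mul_nsmul' b pe m
        _ = pe • (l • a) := by rw [hlamb]
        _ = (pe * l) • a := (mul_nsmul' a pe l).symm
        _ = (l * pe) • a := by rw [mul_comm]
        _ = l • (pe • a) := mul_nsmul' a l pe
        _ = l • (qe • b) := by rw [h2]
        _ = (l * qe) • b := (mul_nsmul' b l qe).symm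
    have hdvd : l ∣ pe := hlm.dvd_of_dvd_mul_right ⟨qe, hmul⟩
    obtain ⟨t, ht⟩ := hdvd
    have ht' : pe = t * l := by rw [ht, mul_comm]
    have hqet : qe = t * m := by
      have hq1 : l * (t * m) = l * qe := by
        rw [← hmul, ht]
        ring
      have hq2 := Nat.eq_of_mul_eq_mul_left hl0 hq1
      omega
    refine ⟨t, by omega, by omega⟩
  set tt : (Fin 2 →₀ ℕ) → ℕ := fun e => (e 0 - emin 0) / l with htt
  have htt01 : ∀ e ∈ C', e 0 = emin 0 + tt e * l ∧ e 1 + tt e * m = emin 1 := by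
    intro e he
    obtain ⟨t, h1, h2⟩ := hdecomp e he
    have hte : tt e = t := by
      rw [htt]
      simp only [h1]
      rw [Nat.add_sub_cancel_left, Nat.mul_div_cancel _ hl0]
    rw [hte]
    exact ⟨h1, h2⟩
  have htt0 : ∀ e ∈ C', e 0 = emin 0 + tt e * l := fun e he => (htt01 e he).1
  have htt1 : ∀ e ∈ C', e 1 + tt e * m = emin 1 := fun e he => (htt01 e he).2
  set N : ℕ := tt emax with hNdef
  have hNt : ∀ e ∈ C', tt e ≤ N := by
    intro e he
    have h1 := htt0 e he
    have h2 := htt0 emax hemaxC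
    rw [← hNdef] at h2
    have h3 : e 0 ≤ emax 0 := hemax e he
    rw [h1, h2] at h3
    have h4 : tt e * l ≤ N * l := by omega
    exact Nat.le_of_mul_le_mul_right h4 hl0
  have hNpos : 0 < N := by
    have h2 := htt0 emax hemaxC
    rw [← hNdef] at h2
    rcases Nat.eq_zero_or_pos N with h0 | h0
    · rw [h0, zero_mul] at h2
      omega
    · exact h0
  have httmin : tt emin = 0 := by
    rw [htt]
    simp
  have hfact : ∀ e ∈ C', T e = f ^ emin 0 * g ^ emax 1 *
      (MvPolynomial.C (P.coeff e) * (f ^ l) ^ tt e * (g ^ m) ^ (N - tt e)) := by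
    intro e he
    have e0eq : e 0 = emin 0 + tt e * l := htt0 e he
    have e1eq : e 1 = emax 1 + (N - tt e) * m := by
      have h1 := htt1 e he
      have h2 := htt1 emax hemaxC
      rw [← hNdef] at h2
      have h3 : tt e ≤ N := hNt e he
      have h5 : tt e * m ≤ N * m := Nat.mul_le_mul_right m h3
      have h4 : (N - tt e) * m = N * m - tt e * m := Nat.sub_mul N (tt e) m
      set A : ℕ := tt e * m
      set B : ℕ := N * m
      set D : ℕ := (N - tt e) * m
      omega
    rw [hT]
    simp only []
    rw [e0eq, e1eq]
    ring
  have hsum2 : f ^ emin 0 * g ^ emax 1 *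
      (∑ e ∈ C', MvPolynomial.C (P.coeff e) * (f ^ l) ^ tt e * (g ^ m) ^ (N - tt e)) = 0 := by
    rw [Finset.mul_sum]
    calc ∑ e ∈ C', f ^ emin 0 * g ^ emax 1 *
          (MvPolynomial.C (P.coeff e) * (f ^ l) ^ tt e * (g ^ m) ^ (N - tt e))
        = ∑ e ∈ C', T e := Finset.sum_congr rfl fun e he => (hfact e he).symm
      _ = 0 := hclass
  have hsum3 : ∑ e ∈ C', MvPolynomial.C (P.coeff e) * (f ^ l) ^ tt e * (g ^ m) ^ (N - tt e)
      = 0 := by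
    rcases mul_eq_zero.mp hsum2 with h0 | h0
    · exact absurd h0 (mul_ne_zero (pow_ne_zero _ hf0) (pow_ne_zero _ hg0))
    · exact h0
  set K := FractionRing (MvPolynomial (Fin n) k) with hK
  set φ : MvPolynomial (Fin n) k →+* K := algebraMap _ _ with hφ
  have hφinj : Function.Injective φ := IsFractionRing.injective _ _
  have hu0 : φ (f ^ l) ≠ 0 := (map_ne_zero_iff φ hφinj).mpr (pow_ne_zero _ hf0)
  set h : K := φ (g ^ m) / φ (f ^ l) with hh
  have halg : ∀ c : k, (algebraMap k K) c = φ (MvPolynomial.C c) := by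
    intro c
    rw [hφ, IsScalarTower.algebraMap_apply k (MvPolynomial (Fin n) k) K,
      MvPolynomial.algebraMap_eq]
  have hterm : ∀ e ∈ C', φ (f ^ l) ^ N * (algebraMap k K (P.coeff e) * h ^ (N - tt e))
      = φ (MvPolynomial.C (P.coeff e) * (f ^ l) ^ tt e * (g ^ m) ^ (N - tt e)) := by
    intro e he
    have htn : tt e + (N - tt e) = N := by
      have := hNt e he
      omega
    rw [map_mul, map_mul, map_pow, map_pow, halg, hh, div_pow, ← htn, pow_add]
    have hne' : φ (f ^ l) ^ (N - tt e) ≠ 0 := pow_ne_zero _ hu0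
    have hfK : φ f ≠ 0 := (map_ne_zero_iff φ hφinj).mpr hf0
    have hgK : φ g ≠ 0 := (map_ne_zero_iff φ hφinj).mpr hg0
    have key := mul_inv_cancel₀ hne'
    rw [div_eq_mul_inv]
    simp only [Nat.add_sub_cancel_left, map_pow] at key ⊢
    linear_combination (φ (MvPolynomial.C (P.coeff e)) * (φ f ^ l) ^ tt e * (φ g ^ m) ^ (N - tt e)) * key
  have hQ0 : ∑ e ∈ C', algebraMap k K (P.coeff e) * h ^ (N - tt e) = 0 := by
    have hmulsum : φ (f ^ l) ^ N *
        (∑ e ∈ C', algebraMap k K (P.coeff e) * h ^ (N - tt e)) = 0 := by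
      rw [Finset.mul_sum]
      rw [Finset.sum_congr rfl hterm, ← map_sum φ _ C', hsum3, map_zero]
    rcases mul_eq_zero.mp hmulsum with h0 | h0
    · exact absurd h0 (pow_ne_zero _ hu0)
    · exact h0
  set Q : Polynomial k := ∑ e ∈ C', Polynomial.C (P.coeff e) * Polynomial.X ^ (N - tt e)
    with hQdef
  have haevalQ : Polynomial.aeval h Q = 0 := by
    rw [hQdef, map_sum, ← hQ0]
    refine Finset.sum_congr rfl fun e he => ?_
    rw [map_mul, Polynomial.aeval_C, map_pow, Polynomial.aeval_X]
  have hQne : Q ≠ 0 := by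
    have hcoeff : Q.coeff N = P.coeff emin := by
      rw [hQdef, Polynomial.finset_sum_coeff]
      rw [Finset.sum_eq_single emin]
      · rw [httmin, Nat.sub_zero, Polynomial.coeff_C_mul, Polynomial.coeff_X_pow,
          if_pos rfl, mul_one]
      · intro e he hne
        rw [Polynomial.coeff_C_mul, Polynomial.coeff_X_pow, if_neg, mul_zero]
        intro hEq
        have h3 : tt e ≤ N := hNt e he
        have h4 : tt e = 0 := by omega
        have h5 : e 0 = emin 0 := by
          have h6 := htt0 e he
          rw [h4] at h6
          omega
        exact hne (hinj e he emin heminC h5)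
      · intro habs
        exact absurd heminC habs
    intro hQz
    rw [hQz, Polynomial.coeff_zero] at hcoeff
    exact MvPolynomial.mem_support_iff.mp (hC'sub heminC) hcoeff.symm
  have hhalg : IsAlgebraic k h := ⟨Q, hQne, haevalQ⟩
  have hhint : IsIntegral k h := hhalg.isIntegral
  have hhint2 : IsIntegral (MvPolynomial (Fin n) k) h := hhint.tower_top
  obtain ⟨H, hH⟩ := IsIntegrallyClosed.isIntegral_iff.mp hhint2
  have hHint : IsIntegral k H := (isIntegral_algebraMap_iff hφinj).mp (by rw [hH]; exact hhint)
  set ψ : MvPolynomial (Fin n) k →ₐ[k] k := MvPolynomial.aeval (fun _ => (0 : k)) with hψ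
  set α : k := ψ H with hα
  have hroot : Polynomial.aeval α (minpoly k H) = 0 := by
    rw [hα, Polynomial.aeval_algHom_apply, minpoly.aeval, map_zero]
  have hdvd2 : minpoly k α ∣ minpoly k H := minpoly.dvd k α hroot
  have hXsub : minpoly k α = Polynomial.X - Polynomial.C α := minpoly.eq_X_sub_C' α
  rw [hXsub] at hdvd2
  obtain ⟨cc, hcc⟩ := hdvd2
  have hccu : IsUnit cc := by
    rcases (minpoly.irreducible hHint).isUnit_or_isUnit hcc with h1 | h1
    · exact absurd h1 (Polynomial.not_isUnit_X_sub_C α)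
    · exact h1
  have hassoc : Associated (Polynomial.X - Polynomial.C α) (minpoly k H) :=
    ⟨hccu.unit, by rw [IsUnit.unit_spec]; exact hcc.symm⟩
  have hmu : minpoly k H = Polynomial.X - Polynomial.C α :=
    Polynomial.eq_of_monic_of_associated (minpoly.monic hHint)
      (Polynomial.monic_X_sub_C α) hassoc.symm
  have hHC : H = MvPolynomial.C α := by
    have h1 := minpoly.aeval k H
    rw [hmu, map_sub, Polynomial.aeval_X, Polynomial.aeval_C, sub_eq_zero] at h1
    rw [h1, MvPolynomial.algebraMap_eq]
  have hfin : g ^ m = MvPolynomial.C α * f ^ l := by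
    apply hφinj
    rw [map_mul, ← hHC, hH, hh, div_mul_cancel₀ _ hu0]
  exact ⟨m, l, hm0, hl0, hlm.symm, α, hfin⟩
end
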